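/- arXiv:1211.2676 — 4 statements merged into one kernel-verified Lean document; each statement's English description precedes it below -/
import Mathlib

section
/- Let H = ∫ h̃ dx be a local functional with smooth density h̃ = h̃(u, u_x, …, u^{(m)}), and let M = ∫ m dx be a local functional whose smooth density m = m(x, t, u, u_x, …, u^{(n)}) may depend explicitly on x and t; write m̃ = δM/δu = E(m). Let u(x,t) be a solution of the Hamiltonian PDE u_t = (d/dx)(δH/δu), and assume all the partial derivatives appearing below exist and are continuous. Then the function 𝓜(x,t) := m̃(x, t, u(x,t), ∂_x u(x,t), …) satisfies the linear equation ∂𝓜/∂t = Σ_{i≥0} 𝓐_i(x,t) · ∂^{i+1}𝓜/∂x^{i+1} + 𝓡(x,t) (a finite sum), where 𝓐_i(x,t) = (∂(δH/δu)/∂u^{(i)})|_{u=u(x,t)} and 𝓡(x,t) = (∂_t(δM/δu) + E((δM/δu)·(d/dx)(δH/δu)))|_{u=u(x,t)}. -/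
open Set

noncomputable section

/-- Partial derivative of a jet density with respect to the k-th jet variable `u^(k)`. -/
def pderivJet (P : (ℕ → ℝ) → ℝ) (k : ℕ) (v : ℕ → ℝ) : ℝ :=
  deriv (fun y => P (Function.update v k y)) (v k)

/-- Total x-derivative of a jet density (no explicit x,t dependence). -/
def totalDer (P : (ℕ → ℝ) → ℝ) : (ℕ → ℝ) → ℝ :=
  fun v => ∑' k : ℕ, v (k + 1) * pderivJet P k v

/-- Euler-Lagrange operator `E(P) = Σ (-1)^k (d/dx)^k ∂P/∂u^(k)`. -/
def EulerOp (P : (ℕ → ℝ) → ℝ) : (ℕ → ℝ) → ℝ :=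
  fun v => ∑' k : ℕ, (-1 : ℝ) ^ k * (totalDer^[k] (pderivJet P k)) v

/-- Total x-derivative for densities with explicit x,t dependence. -/
def totalDerXT (P : ℝ → ℝ → (ℕ → ℝ) → ℝ) : ℝ → ℝ → (ℕ → ℝ) → ℝ :=
  fun x t v => deriv (fun y => P y t v) x + ∑' k : ℕ, v (k + 1) * pderivJet (P x t) k v

/-- Euler-Lagrange operator for densities with explicit x,t dependence. -/
def EulerOpXT (P : ℝ → ℝ → (ℕ → ℝ) → ℝ) : ℝ → ℝ → (ℕ → ℝ) → ℝ :=
  fun x t v => ∑' k : ℕ, (-1 : ℝ) ^ k *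
    (totalDerXT^[k] (fun x' t' w => pderivJet (P x' t') k w)) x t v

/-- The jet of a function of one variable at a point. -/
def jetsAt (w : ℝ → ℝ) (x : ℝ) : ℕ → ℝ := fun k => iteratedDeriv k w x

def cCoef (c h : ℝ → ℝ) (u : ℝ) : ℝ := c u * iteratedDeriv 3 h u

def pCoef (c p h : ℝ → ℝ) (u : ℝ) : ℝ :=
  p u * iteratedDeriv 3 h u + (3/10) * (c u)^2 * iteratedDeriv 4 h u

def sCoef (c p s h : ℝ → ℝ) (u : ℝ) : ℝ :=
  s u * iteratedDeriv 3 h u - (1/8) * c u * iteratedDeriv 2 c u * iteratedDeriv 4 h u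
    - (1/8) * c u * deriv c u * iteratedDeriv 5 h u - (1/24) * (c u)^2 * iteratedDeriv 6 h u
    - (1/6) * deriv p u * iteratedDeriv 4 h u - (1/6) * p u * iteratedDeriv 5 h u

/-- Dubrovin's D-operator. -/
def Dop (c p s h : ℝ → ℝ) (ε : ℝ) (v : ℕ → ℝ) : ℝ :=
  h (v 0) - ε^2/2 * cCoef c h (v 0) * (v 1)^2
    + ε^4 * (pCoef c p h (v 0) * (v 2)^2 + sCoef c p s h (v 0) * (v 1)^4)

/-- Conservation defect of a t-dependent family of densities along (eveq). -/
def consDefect (c p s h : ℝ → ℝ) (S : ℝ → ℝ → ℝ → (ℕ → ℝ) → ℝ) (ε x t : ℝ) (v : ℕ → ℝ) : ℝ :=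
  deriv (fun τ => EulerOpXT (S ε) x τ v) t
    + EulerOpXT (fun x' t' w => EulerOpXT (S ε) x' t' w * totalDer (EulerOp (Dop c p s h ε)) w) x t v

/-- Conservation up to order `O(ε^K)` along (eveq). -/
def ConservedUpTo (c p s h : ℝ → ℝ) (S : ℝ → ℝ → ℝ → (ℕ → ℝ) → ℝ) (K : ℕ) : Prop :=
  ∀ x t : ℝ, ∀ v : ℕ → ℝ, ∀ j < K, iteratedDeriv j (fun ε => consDefect c p s h S ε x t v) 0 = 0

namespace Aux

abbrev Dens := ℝ → ℝ → (ℕ → ℝ) → ℝ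

def PD (k : ℕ) (D : Dens) : Dens := fun x t v => pderivJet (D x t) k v

abbrev E (ℓ : ℕ) := ℝ × ℝ × (Fin ℓ → ℝ)

def eX (ℓ : ℕ) : E ℓ := (1, 0, 0)
def eT (ℓ : ℕ) : E ℓ := (0, 1, 0)
def eV {ℓ : ℕ} (i : Fin ℓ) : E ℓ := (0, 0, Pi.single i 1)

def restr (ℓ : ℕ) (v : ℕ → ℝ) : Fin ℓ → ℝ := fun i => v i

def Rep (ℓ : ℕ) (D : Dens) (g : E ℓ → ℝ) : Prop :=
  ContDiff ℝ (⊤ : ℕ∞) g ∧ ∀ x t v, D x t v = g (x, t, restr ℓ v)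

def Good (ℓ : ℕ) (D : Dens) : Prop := ∃ g : E ℓ → ℝ, Rep ℓ D g

-- curve lemmas
lemma hasDerivAt_updateCurve {ℓ : ℕ} (x t : ℝ) (w : Fin ℓ → ℝ) (i : Fin ℓ) (y₀ : ℝ) :
    HasDerivAt (fun y => ((x, t, Function.update w i y) : E ℓ)) (eV i) y₀ := by
  refine (hasDerivAt_const _ _).prodMk ((hasDerivAt_const _ _).prodMk ?_)
  rw [hasDerivAt_pi]
  intro j
  by_cases h : j = i
  · subst h; simp; exact hasDerivAt_id' y₀
  · have h0 : (Pi.single i 1 : Fin ℓ → ℝ) j = 0 := by rw [Pi.single_eq_of_ne h]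
    simp only [Function.update_apply, if_neg h, h0]
    exact hasDerivAt_const _ _

lemma hasDerivAt_lineX {ℓ : ℕ} (t : ℝ) (w : Fin ℓ → ℝ) (x : ℝ) :
    HasDerivAt (fun y => ((y, t, w) : E ℓ)) (eX ℓ) x :=
  (hasDerivAt_id x).prodMk ((hasDerivAt_const _ _).prodMk (hasDerivAt_const _ _))

lemma hasDerivAt_lineT {ℓ : ℕ} (x : ℝ) (w : Fin ℓ → ℝ) (t : ℝ) :
    HasDerivAt (fun τ => ((x, τ, w) : E ℓ)) (eT ℓ) t :=
  (hasDerivAt_const _ _).prodMk ((hasDerivAt_id t).prodMk (hasDerivAt_const _ _))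

lemma Rep.hasFDerivAt {ℓ : ℕ} {g : E ℓ → ℝ} (hg : ContDiff ℝ (⊤ : ℕ∞) g) (z : E ℓ) :
    HasFDerivAt g (fderiv ℝ g z) z :=
  (hg.differentiable (by simp) z).hasFDerivAt

lemma restr_update_lt {ℓ : ℕ} (v : ℕ → ℝ) (k : ℕ) (hk : k < ℓ) (y : ℝ) :
    restr ℓ (Function.update v k y) = Function.update (restr ℓ v) ⟨k, hk⟩ y := by
  funext i
  simp only [restr, Function.update_apply]
  by_cases h : (i : ℕ) = k
  · rw [if_pos h, if_pos (Fin.ext h)]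
  · rw [if_neg h, if_neg (fun hh => h (by rw [hh]))]

lemma restr_update_ge {ℓ : ℕ} (v : ℕ → ℝ) (k : ℕ) (hk : ℓ ≤ k) (y : ℝ) :
    restr ℓ (Function.update v k y) = restr ℓ v := by
  funext i
  simp only [restr, Function.update_apply]
  rw [if_neg (by omega : ¬(i : ℕ) = k)]

lemma pderivJet_rep {ℓ : ℕ} {D : Dens} {g : E ℓ → ℝ} (h : Rep ℓ D g) (k : ℕ) (hk : k < ℓ)
    (x t : ℝ) (v : ℕ → ℝ) :
    pderivJet (D x t) k v = fderiv ℝ g (x, t, restr ℓ v) (eV ⟨k, hk⟩) := by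
  obtain ⟨hg, hrep⟩ := h
  have hcurve : HasDerivAt (fun y => ((x, t, Function.update (restr ℓ v) ⟨k, hk⟩ y) : E ℓ))
      (eV ⟨k, hk⟩) (v k) := hasDerivAt_updateCurve x t (restr ℓ v) ⟨k, hk⟩ (v k)
  have hval : ((x, t, Function.update (restr ℓ v) ⟨k, hk⟩ (v k)) : E ℓ) = (x, t, restr ℓ v) := by
    have : Function.update (restr ℓ v) ⟨k, hk⟩ (v k) = restr ℓ v := Function.update_eq_self _ _
    rw [this]
  have hF := Rep.hasFDerivAt hg (x, t, restr ℓ v)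
  rw [← hval] at hF
  have hc := HasFDerivAt.comp_hasDerivAt (v k) hF hcurve
  have hfun : (g ∘ fun y => ((x, t, Function.update (restr ℓ v) ⟨k, hk⟩ y) : E ℓ))
      = fun y => D x t (Function.update v k y) := by
    funext y
    simp only [Function.comp]
    rw [hrep, restr_update_lt v k hk]
  rw [hfun, hval] at hc
  unfold pderivJet
  exact hc.deriv

lemma pderivJet_rep_zero {ℓ : ℕ} {D : Dens} {g : E ℓ → ℝ} (h : Rep ℓ D g) (k : ℕ) (hk : ℓ ≤ k)
    (x t : ℝ) (v : ℕ → ℝ) :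
    pderivJet (D x t) k v = 0 := by
  obtain ⟨hg, hrep⟩ := h
  have : (fun y => D x t (Function.update v k y)) = fun _ => g (x, t, restr ℓ v) := by
    funext y; rw [hrep, restr_update_ge v k hk]
  unfold pderivJet
  rw [this, deriv_const]

end Aux

namespace Aux

lemma smooth_fderiv_apply {ℓ : ℕ} {g : E ℓ → ℝ} (hg : ContDiff ℝ (⊤ : ℕ∞) g) (d : E ℓ) :
    ContDiff ℝ (⊤ : ℕ∞) (fun z => fderiv ℝ g z d) :=
  (hg.fderiv_right (by exact_mod_cast le_top)).clm_apply contDiff_const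

def projE (ℓ : ℕ) : E (ℓ + 1) → E ℓ := fun z => (z.1, z.2.1, fun i => z.2.2 i.castSucc)

lemma contDiff_coord {ℓ : ℕ} (j : Fin ℓ) : ContDiff ℝ (⊤ : ℕ∞) (fun z : E ℓ => z.2.2 j) :=
  ((ContinuousLinearMap.proj (R := ℝ) (φ := fun _ : Fin ℓ => ℝ) j).contDiff).comp
    (contDiff_snd.snd)

lemma contDiff_projE (ℓ : ℕ) : ContDiff ℝ (⊤ : ℕ∞) (projE ℓ) :=
  contDiff_fst.prodMk ((contDiff_snd.fst).prodMk (contDiff_pi.mpr fun i => contDiff_coord i.castSucc))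

lemma projE_restr (ℓ : ℕ) (x t : ℝ) (v : ℕ → ℝ) :
    projE ℓ (x, t, restr (ℓ + 1) v) = (x, t, restr ℓ v) := rfl

/-- explicit x derivative of a density -/
def PDX (D : Dens) : Dens := fun x t v => deriv (fun y => D y t v) x
/-- explicit t derivative of a density -/
def PDT (D : Dens) : Dens := fun x t v => deriv (fun τ => D x τ v) t

lemma Rep.hasDerivAt_X {ℓ : ℕ} {D : Dens} {g : E ℓ → ℝ} (h : Rep ℓ D g) (x t : ℝ) (v : ℕ → ℝ) :
    HasDerivAt (fun y => D y t v) (fderiv ℝ g (x, t, restr ℓ v) (eX ℓ)) x := by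
  have hc := HasFDerivAt.comp_hasDerivAt x (Rep.hasFDerivAt h.1 (x, t, restr ℓ v))
    (hasDerivAt_lineX t (restr ℓ v) x)
  have hfun : (g ∘ fun y => ((y, t, restr ℓ v) : E ℓ)) = fun y => D y t v := by
    funext y; simp only [Function.comp]; rw [h.2]
  rwa [hfun] at hc

lemma Rep.hasDerivAt_T {ℓ : ℕ} {D : Dens} {g : E ℓ → ℝ} (h : Rep ℓ D g) (x t : ℝ) (v : ℕ → ℝ) :
    HasDerivAt (fun τ => D x τ v) (fderiv ℝ g (x, t, restr ℓ v) (eT ℓ)) t := by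
  have hc := HasFDerivAt.comp_hasDerivAt t (Rep.hasFDerivAt h.1 (x, t, restr ℓ v))
    (hasDerivAt_lineT x (restr ℓ v) t)
  have hfun : (g ∘ fun τ => ((x, τ, restr ℓ v) : E ℓ)) = fun τ => D x τ v := by
    funext τ; simp only [Function.comp]; rw [h.2]
  rwa [hfun] at hc

lemma PDX_rep {ℓ : ℕ} {D : Dens} {g : E ℓ → ℝ} (h : Rep ℓ D g) (x t : ℝ) (v : ℕ → ℝ) :
    PDX D x t v = fderiv ℝ g (x, t, restr ℓ v) (eX ℓ) := (h.hasDerivAt_X x t v).deriv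

lemma PDT_rep {ℓ : ℕ} {D : Dens} {g : E ℓ → ℝ} (h : Rep ℓ D g) (x t : ℝ) (v : ℕ → ℝ) :
    PDT D x t v = fderiv ℝ g (x, t, restr ℓ v) (eT ℓ) := (h.hasDerivAt_T x t v).deriv

lemma Rep.hasDerivAt_update {ℓ : ℕ} {D : Dens} {g : E ℓ → ℝ} (h : Rep ℓ D g) (k : ℕ)
    (x t : ℝ) (v : ℕ → ℝ) :
    HasDerivAt (fun y => D x t (Function.update v k y)) (pderivJet (D x t) k v) (v k) := by
  rcases lt_or_ge k ℓ with hk | hk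
  · have hcurve : HasDerivAt (fun y => ((x, t, Function.update (restr ℓ v) ⟨k, hk⟩ y) : E ℓ))
        (eV ⟨k, hk⟩) (v k) := hasDerivAt_updateCurve x t (restr ℓ v) ⟨k, hk⟩ (v k)
    have hval : ((x, t, Function.update (restr ℓ v) ⟨k, hk⟩ (v k)) : E ℓ) = (x, t, restr ℓ v) := by
      have : Function.update (restr ℓ v) ⟨k, hk⟩ (v k) = restr ℓ v := Function.update_eq_self _ _
      rw [this]
    have hF := Rep.hasFDerivAt h.1 (x, t, restr ℓ v)
    rw [← hval] at hF
    have hc := HasFDerivAt.comp_hasDerivAt (v k) hF hcurve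
    have hfun : (g ∘ fun y => ((x, t, Function.update (restr ℓ v) ⟨k, hk⟩ y) : E ℓ))
        = fun y => D x t (Function.update v k y) := by
      funext y; simp only [Function.comp]; rw [h.2, restr_update_lt v k hk]
    rw [hfun, hval] at hc
    rw [pderivJet_rep h k hk]
    exact hc
  · have hconst : (fun y => D x t (Function.update v k y)) = fun _ => g (x, t, restr ℓ v) := by
      funext y; rw [h.2, restr_update_ge v k hk]
    rw [pderivJet_rep_zero h k hk]
    rw [hconst]
    exact hasDerivAt_const _ _

lemma Good.pd {ℓ : ℕ} {D : Dens} (h : Good ℓ D) (k : ℕ) : Good ℓ (PD k D) := by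
  obtain ⟨g, hg⟩ := h
  rcases lt_or_ge k ℓ with hk | hk
  · exact ⟨fun z => fderiv ℝ g z (eV ⟨k, hk⟩), smooth_fderiv_apply hg.1 _,
      fun x t v => pderivJet_rep hg k hk x t v⟩
  · exact ⟨fun _ => 0, contDiff_const, fun x t v => pderivJet_rep_zero hg k hk x t v⟩

lemma Good.pd_zero {ℓ : ℕ} {D : Dens} (h : Good ℓ D) {k : ℕ} (hk : ℓ ≤ k) :
    PD k D = fun _ _ _ => 0 := by
  obtain ⟨g, hg⟩ := h
  funext x t v
  exact pderivJet_rep_zero hg k hk x t v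

lemma Good.mono {ℓ ℓ' : ℕ} {D : Dens} (h : Good ℓ D) (hle : ℓ ≤ ℓ') : Good ℓ' D := by
  obtain ⟨g, hg, hr⟩ := h
  refine ⟨fun z => g (z.1, z.2.1, fun i => z.2.2 (Fin.castLE hle i)), ?_, ?_⟩
  · exact hg.comp (contDiff_fst.prodMk ((contDiff_snd.fst).prodMk
      (contDiff_pi.mpr fun i => contDiff_coord (Fin.castLE hle i))))
  · intro x t v; rw [hr]; rfl

/-- The total derivative of a Good density, as a finite sum. -/
lemma totalDerXT_good {ℓ : ℕ} {D : Dens} (h : Good ℓ D) (x t : ℝ) (v : ℕ → ℝ) :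
    totalDerXT D x t v = PDX D x t v + ∑ i : Fin ℓ, v (i + 1) * PD i D x t v := by
  obtain ⟨g, hg⟩ := h
  unfold totalDerXT
  congr 1
  rw [tsum_eq_sum (s := Finset.range ℓ)
    (fun k hk => by rw [pderivJet_rep_zero hg k (by simpa using hk), mul_zero])]
  rw [← Fin.sum_univ_eq_sum_range (fun k => v (k + 1) * pderivJet (D x t) k v)]
  rfl

lemma Good.td {ℓ : ℕ} {D : Dens} (h : Good ℓ D) : Good (ℓ + 1) (totalDerXT D) := by
  obtain ⟨g, hg⟩ := h
  refine ⟨fun z => fderiv ℝ g (projE ℓ z) (eX ℓ)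
      + ∑ i : Fin ℓ, z.2.2 i.succ * fderiv ℝ g (projE ℓ z) (eV i), ?_, ?_⟩
  · refine ContDiff.add ?_ (ContDiff.sum fun i _ => ContDiff.mul (contDiff_coord i.succ) ?_)
    · exact (smooth_fderiv_apply hg.1 (eX ℓ)).comp (contDiff_projE ℓ)
    · exact (smooth_fderiv_apply hg.1 (eV i)).comp (contDiff_projE ℓ)
  · intro x t v
    rw [totalDerXT_good ⟨g, hg⟩ x t v, PDX_rep hg]
    simp only [projE_restr]
    congr 1
    refine Finset.sum_congr rfl fun i _ => ?_
    simp only [PD]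
    rw [pderivJet_rep hg i i.isLt]
    rfl

lemma Good.td_iter {ℓ : ℕ} {D : Dens} (h : Good ℓ D) (j : ℕ) :
    Good (ℓ + j) (totalDerXT^[j] D) := by
  induction j with
  | zero => simpa using h
  | succ n ih => rw [Function.iterate_succ_apply']; exact ih.td.mono (by omega)

end Aux

namespace Aux

lemma fderiv_swap {ℓ : ℕ} {g : E ℓ → ℝ} (hg : ContDiff ℝ (⊤ : ℕ∞) g) (z a b : E ℓ) :
    fderiv ℝ (fun w => fderiv ℝ g w a) z b = fderiv ℝ (fun w => fderiv ℝ g w b) z a := by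
  have hd : ∀ y, HasFDerivAt g (fderiv ℝ g y) y := fun y => Rep.hasFDerivAt hg y
  have h2' : ContDiff ℝ (⊤ : ℕ∞) (fderiv ℝ g) := hg.fderiv_right (by exact_mod_cast le_top)
  have h2 : HasFDerivAt (fderiv ℝ g) (fderiv ℝ (fderiv ℝ g) z) z :=
    (h2'.differentiable (by simp) z).hasFDerivAt
  have hsymm := second_derivative_symmetric hd h2
  have key : ∀ d e : E ℓ, fderiv ℝ (fun w => fderiv ℝ g w d) z e
      = fderiv ℝ (fderiv ℝ g) z e d := by
    intro d e
    have hcomp : HasFDerivAt (fun w => fderiv ℝ g w d)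
        ((ContinuousLinearMap.apply ℝ ℝ d).comp (fderiv ℝ (fderiv ℝ g) z)) z :=
      (ContinuousLinearMap.apply ℝ ℝ d).hasFDerivAt.comp z h2
    rw [hcomp.fderiv]
    rfl
  rw [key a b, key b a]
  exact hsymm b a

lemma Rep.pd {ℓ : ℕ} {D : Dens} {g : E ℓ → ℝ} (h : Rep ℓ D g) {k : ℕ} (hk : k < ℓ) :
    Rep ℓ (PD k D) (fun z => fderiv ℝ g z (eV ⟨k, hk⟩)) :=
  ⟨smooth_fderiv_apply h.1 _, fun x t v => pderivJet_rep h k hk x t v⟩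

lemma Rep.pdx {ℓ : ℕ} {D : Dens} {g : E ℓ → ℝ} (h : Rep ℓ D g) :
    Rep ℓ (PDX D) (fun z => fderiv ℝ g z (eX ℓ)) :=
  ⟨smooth_fderiv_apply h.1 _, fun x t v => PDX_rep h x t v⟩

lemma Rep.pdt {ℓ : ℕ} {D : Dens} {g : E ℓ → ℝ} (h : Rep ℓ D g) :
    Rep ℓ (PDT D) (fun z => fderiv ℝ g z (eT ℓ)) :=
  ⟨smooth_fderiv_apply h.1 _, fun x t v => PDT_rep h x t v⟩

lemma Good.pdx {ℓ : ℕ} {D : Dens} (h : Good ℓ D) : Good ℓ (PDX D) := by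
  obtain ⟨g, hg⟩ := h; exact ⟨_, hg.pdx⟩

lemma Good.pdt {ℓ : ℕ} {D : Dens} (h : Good ℓ D) : Good ℓ (PDT D) := by
  obtain ⟨g, hg⟩ := h; exact ⟨_, hg.pdt⟩

lemma PD_comm {ℓ : ℕ} {D : Dens} (h : Good ℓ D) (i j : ℕ) :
    PD i (PD j D) = PD j (PD i D) := by
  obtain ⟨g, hg⟩ := h
  rcases lt_or_ge i ℓ with hi | hi
  · rcases lt_or_ge j ℓ with hj | hj
    · funext x t v
      show pderivJet ((PD j D) x t) i v = pderivJet ((PD i D) x t) j v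
      rw [pderivJet_rep (hg.pd hj) i hi, pderivJet_rep (hg.pd hi) j hj]
      exact fderiv_swap hg.1 _ _ _
    · rw [Good.pd_zero ⟨g, hg⟩ hj]
      have : PD j (PD i D) = fun _ _ _ => 0 := Good.pd_zero (Good.pd ⟨g, hg⟩ i) hj
      rw [this]
      funext x t v
      show pderivJet (fun _ => (0:ℝ)) i v = 0
      simp [pderivJet]
  · have h1 : PD i (PD j D) = fun _ _ _ => 0 := Good.pd_zero (Good.pd ⟨g, hg⟩ j) hi
    have h2 : PD i D = fun _ _ _ => 0 := Good.pd_zero ⟨g, hg⟩ hi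
    rw [h1, h2]
    funext x t v
    show (0:ℝ) = pderivJet (fun _ => (0:ℝ)) j v
    simp [pderivJet]

lemma PD_PDX_comm {ℓ : ℕ} {D : Dens} (h : Good ℓ D) (k : ℕ) :
    PD k (PDX D) = PDX (PD k D) := by
  obtain ⟨g, hg⟩ := h
  rcases lt_or_ge k ℓ with hk | hk
  · funext x t v
    show pderivJet ((PDX D) x t) k v = PDX (PD k D) x t v
    rw [pderivJet_rep hg.pdx k hk, PDX_rep (hg.pd hk)]
    exact fderiv_swap hg.1 _ _ _
  · rw [Good.pd_zero (Good.pdx ⟨g, hg⟩) hk, Good.pd_zero ⟨g, hg⟩ hk]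
    funext x t v
    show (0:ℝ) = deriv (fun _ => (0:ℝ)) x
    simp

lemma hasDerivAt_update_coord (v : ℕ → ℝ) (k m : ℕ) (y₀ : ℝ) :
    HasDerivAt (fun y => Function.update v k y m) (if m = k then 1 else 0) y₀ := by
  by_cases h : m = k
  · subst h
    simp only [Function.update_self, if_pos rfl]
    exact hasDerivAt_id y₀
  · simp only [Function.update_apply, if_neg h]
    exact hasDerivAt_const _ _

lemma fin_sum_delta (ℓ : ℕ) (j : ℕ) (c : ℕ → ℝ) :
    (∑ i : Fin ℓ, if (i : ℕ) = j then c (i : ℕ) else 0) = if j < ℓ then c j else 0 := by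
  rcases lt_or_ge j ℓ with hj | hj
  · rw [if_pos hj]
    rw [Finset.sum_eq_single (⟨j, hj⟩ : Fin ℓ)]
    · simp
    · intro b _ hb
      rw [if_neg (fun hh => hb (Fin.ext hh))]
    · intro hmem; exact absurd (Finset.mem_univ _) hmem
  · rw [if_neg (not_lt.mpr hj)]
    refine Finset.sum_eq_zero fun i _ => ?_
    rw [if_neg (by omega)]

/-- The density-level sum formula, for all w (needed under deriv). -/
lemma totalDerXT_fun {ℓ : ℕ} {D : Dens} (h : Good ℓ D) (x t : ℝ) :
    (fun w => totalDerXT D x t w)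
      = fun w => PDX D x t w + ∑ i : Fin ℓ, w ((i : ℕ) + 1) * PD (i : ℕ) D x t w := by
  funext w; exact totalDerXT_good h x t w

/-- Key commutation: `∂ₖ ∘ 𝔇 = 𝔇 ∘ ∂ₖ + ∂_{k-1}`. -/
lemma PD_totalDerXT {ℓ : ℕ} {D : Dens} (h : Good ℓ D) (k : ℕ) (x t : ℝ) (v : ℕ → ℝ) :
    PD k (totalDerXT D) x t v
      = totalDerXT (PD k D) x t v + (if k = 0 then 0 else PD (k - 1) D x t v) := by
  obtain ⟨g, hg⟩ := h
  have hD : Good ℓ D := ⟨g, hg⟩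
  -- derivative of each summand along the update curve
  have hmain : HasDerivAt (fun y => totalDerXT D x t (Function.update v k y))
      (PD k (PDX D) x t v
        + ∑ i : Fin ℓ, ((if (i : ℕ) + 1 = k then 1 else 0) * PD (i : ℕ) D x t v
            + v ((i : ℕ) + 1) * PD k (PD (i : ℕ) D) x t v)) (v k) := by
    have hfun : (fun y => totalDerXT D x t (Function.update v k y))
        = fun y => PDX D x t (Function.update v k y)
          + ∑ i : Fin ℓ, Function.update v k y ((i : ℕ) + 1)
              * PD (i : ℕ) D x t (Function.update v k y) := by
      funext y; rw [totalDerXT_good hD]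
    rw [hfun]
    refine HasDerivAt.add ?_ (HasDerivAt.fun_sum fun i _ => ?_)
    · exact Rep.hasDerivAt_update hg.pdx k x t v
    · have h1 : HasDerivAt (fun y => Function.update v k y ((i : ℕ) + 1))
          (if (i : ℕ) + 1 = k then 1 else 0) (v k) := hasDerivAt_update_coord v k _ _
      have h2 : HasDerivAt (fun y => PD (i : ℕ) D x t (Function.update v k y))
          (PD k (PD (i : ℕ) D) x t v) (v k) := by
        rcases lt_or_ge (i : ℕ) ℓ with hi | hi
        · exact Rep.hasDerivAt_update (hg.pd hi) k x t v
        · exact absurd hi (not_le.mpr i.isLt)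
      have := h1.fun_mul h2
      have hupd : Function.update v k (v k) = v := Function.update_eq_self _ _
      rw [hupd] at this
      exact this
  have hval := hmain.deriv
  show pderivJet ((totalDerXT D) x t) k v = _
  unfold pderivJet
  rw [hval]
  -- now rearrange
  rw [Finset.sum_add_distrib]
  have hdelta : (∑ i : Fin ℓ, (if (i : ℕ) + 1 = k then 1 else 0) * PD (i : ℕ) D x t v)
      = (if k = 0 then 0 else PD (k - 1) D x t v) := by
    rcases Nat.eq_zero_or_pos k with hk0 | hkpos
    · subst hk0
      rw [if_pos rfl]
      refine Finset.sum_eq_zero fun i _ => ?_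
      rw [if_neg (by omega), zero_mul]
    · obtain ⟨j, rfl⟩ : ∃ j, k = j + 1 := ⟨k - 1, by omega⟩
      rw [if_neg (Nat.succ_ne_zero j)]
      have hterm : ∀ i : Fin ℓ, ((if (i : ℕ) + 1 = j + 1 then (1:ℝ) else 0) * PD (i : ℕ) D x t v)
          = (if (i : ℕ) = j then PD (i : ℕ) D x t v else 0) := by
        intro i
        by_cases hij : (i : ℕ) = j
        · rw [if_pos (by omega), if_pos hij, one_mul]
        · rw [if_neg (by omega), if_neg hij, zero_mul]
      rw [Finset.sum_congr rfl (fun i _ => hterm i),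
        fin_sum_delta ℓ j (fun m => PD m D x t v)]
      simp only [Nat.add_sub_cancel]
      rcases lt_or_ge j ℓ with hj | hj
      · rw [if_pos hj]
      · rw [if_neg (not_lt.mpr hj)]
        have hz := Good.pd_zero hD hj
        rw [show PD j D x t v = 0 from by rw [hz]]
  rw [hdelta, totalDerXT_good (Good.pd hD k) x t v]
  have hc1 : PD k (PDX D) x t v = PDX (PD k D) x t v := by rw [PD_PDX_comm hD k]
  have hc2 : (∑ i : Fin ℓ, v ((i : ℕ) + 1) * PD k (PD (i : ℕ) D) x t v)
      = ∑ i : Fin ℓ, v ((i : ℕ) + 1) * PD (i : ℕ) (PD k D) x t v :=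
    Finset.sum_congr rfl fun i _ => by rw [PD_comm hD k (i : ℕ)]
  rw [hc1, hc2]
  ring

end Aux

namespace Aux

lemma Good.hasDerivAt_update {ℓ : ℕ} {D : Dens} (h : Good ℓ D) (k : ℕ) (x t : ℝ) (v : ℕ → ℝ) :
    HasDerivAt (fun y => D x t (Function.update v k y)) (PD k D x t v) (v k) := by
  obtain ⟨g, hg⟩ := h; exact Rep.hasDerivAt_update hg k x t v

lemma Good.hasDerivAt_X {ℓ : ℕ} {D : Dens} (h : Good ℓ D) (x t : ℝ) (v : ℕ → ℝ) :
    HasDerivAt (fun y => D y t v) (PDX D x t v) x := by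
  obtain ⟨g, hg⟩ := h
  have := Rep.hasDerivAt_X hg x t v
  rwa [← PDX_rep hg x t v] at this

lemma Good.hasDerivAt_T {ℓ : ℕ} {D : Dens} (h : Good ℓ D) (x t : ℝ) (v : ℕ → ℝ) :
    HasDerivAt (fun τ => D x τ v) (PDT D x t v) t := by
  obtain ⟨g, hg⟩ := h
  have := Rep.hasDerivAt_T hg x t v
  rwa [← PDT_rep hg x t v] at this

lemma Good.add {ℓ : ℕ} {A B : Dens} (hA : Good ℓ A) (hB : Good ℓ B) :
    Good ℓ (fun x t v => A x t v + B x t v) := by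
  obtain ⟨g, hg, hrg⟩ := hA
  obtain ⟨f, hf, hrf⟩ := hB
  exact ⟨fun z => g z + f z, hg.add hf, fun x t v => by simp only [hrg, hrf]⟩

lemma Good.mul {ℓ : ℕ} {A B : Dens} (hA : Good ℓ A) (hB : Good ℓ B) :
    Good ℓ (fun x t v => A x t v * B x t v) := by
  obtain ⟨g, hg, hrg⟩ := hA
  obtain ⟨f, hf, hrf⟩ := hB
  exact ⟨fun z => g z * f z, hg.mul hf, fun x t v => by simp only [hrg, hrf]⟩

lemma Good.const_mul {ℓ : ℕ} {A : Dens} (hA : Good ℓ A) (c : ℝ) :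
    Good ℓ (fun x t v => c * A x t v) := by
  obtain ⟨g, hg, hrg⟩ := hA
  exact ⟨fun z => c * g z, contDiff_const.mul hg, fun x t v => by simp only [hrg]⟩

lemma Good.zero (ℓ : ℕ) : Good ℓ (fun _ _ _ => (0 : ℝ)) :=
  ⟨fun _ => 0, contDiff_const, fun _ _ _ => rfl⟩

lemma Good.sum {ι : Type*} {ℓ : ℕ} {s : Finset ι} {F : ι → Dens}
    (h : ∀ i ∈ s, Good ℓ (F i)) : Good ℓ (fun x t v => ∑ i ∈ s, F i x t v) := by
  classical
  induction s using Finset.cons_induction with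
  | empty => simpa using Good.zero ℓ
  | cons a s ha ih =>
    have : (fun x t v => ∑ i ∈ Finset.cons a s ha, F i x t v)
        = fun x t v => F a x t v + ∑ i ∈ s, F i x t v := by
      funext x t v; rw [Finset.sum_cons]
    rw [this]
    exact (h a (Finset.mem_cons_self a _)).add
      (ih fun i hi => h i (Finset.mem_cons_of_mem hi))

-- zero density lemmas
lemma PD_zero_dens (k : ℕ) : PD k (fun _ _ _ => (0:ℝ)) = fun _ _ _ => 0 := by
  funext x t v
  show deriv (fun _ => (0:ℝ)) (v k) = 0
  simp

lemma TD_zero_dens : totalDerXT (fun _ _ _ => (0:ℝ)) = fun _ _ _ => 0 := by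
  funext x t v
  show deriv (fun _ => (0:ℝ)) x + ∑' k : ℕ, v (k+1) * pderivJet (fun _ => (0:ℝ)) k v = 0
  have : ∀ k : ℕ, v (k+1) * pderivJet (fun _ => (0:ℝ)) k v = 0 := by
    intro k
    have : pderivJet (fun _ => (0:ℝ)) k v = 0 := by
      show deriv (fun _ => (0:ℝ)) (v k) = 0
      simp
    rw [this, mul_zero]
  rw [tsum_eq_sum (s := ∅) (fun b _ => this b)]
  simp

lemma TD_iter_zero_dens (j : ℕ) : totalDerXT^[j] (fun _ _ _ => (0:ℝ)) = fun _ _ _ => 0 := by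
  induction j with
  | zero => rfl
  | succ n ih => rw [Function.iterate_succ_apply, TD_zero_dens, ih]

-- linearity of PD
lemma PD_add {ℓ : ℕ} {A B : Dens} (hA : Good ℓ A) (hB : Good ℓ B) (k : ℕ)
    (x t : ℝ) (v : ℕ → ℝ) :
    PD k (fun x t w => A x t w + B x t w) x t v = PD k A x t v + PD k B x t v := by
  have := (hA.hasDerivAt_update k x t v).add (hB.hasDerivAt_update k x t v)
  exact this.deriv

lemma PD_const_mul {ℓ : ℕ} {A : Dens} (hA : Good ℓ A) (c : ℝ) (k : ℕ) (x t : ℝ) (v : ℕ → ℝ) :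
    PD k (fun x t w => c * A x t w) x t v = c * PD k A x t v := by
  have := (hA.hasDerivAt_update k x t v).const_mul c
  exact this.deriv

lemma PD_mul {ℓ : ℕ} {A B : Dens} (hA : Good ℓ A) (hB : Good ℓ B) (k : ℕ)
    (x t : ℝ) (v : ℕ → ℝ) :
    PD k (fun x t w => A x t w * B x t w) x t v
      = PD k A x t v * B x t v + A x t v * PD k B x t v := by
  have := (hA.hasDerivAt_update k x t v).mul (hB.hasDerivAt_update k x t v)
  have h2 := this.deriv
  rwa [Function.update_eq_self] at h2

lemma PD_sum {ι : Type*} {ℓ : ℕ} {s : Finset ι} {F : ι → Dens}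
    (h : ∀ i ∈ s, Good ℓ (F i)) (k : ℕ) (x t : ℝ) (v : ℕ → ℝ) :
    PD k (fun x t w => ∑ i ∈ s, F i x t w) x t v = ∑ i ∈ s, PD k (F i) x t v := by
  have := HasDerivAt.fun_sum (fun i hi => (h i hi).hasDerivAt_update k x t v)
  exact this.deriv

-- linearity of PDX
lemma PDX_add {ℓ : ℕ} {A B : Dens} (hA : Good ℓ A) (hB : Good ℓ B) (x t : ℝ) (v : ℕ → ℝ) :
    PDX (fun x t w => A x t w + B x t w) x t v = PDX A x t v + PDX B x t v :=
  ((hA.hasDerivAt_X x t v).add (hB.hasDerivAt_X x t v)).deriv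

lemma PDX_const_mul {ℓ : ℕ} {A : Dens} (hA : Good ℓ A) (c : ℝ) (x t : ℝ) (v : ℕ → ℝ) :
    PDX (fun x t w => c * A x t w) x t v = c * PDX A x t v :=
  ((hA.hasDerivAt_X x t v).const_mul c).deriv

lemma PDX_mul {ℓ : ℕ} {A B : Dens} (hA : Good ℓ A) (hB : Good ℓ B) (x t : ℝ) (v : ℕ → ℝ) :
    PDX (fun x t w => A x t w * B x t w) x t v
      = PDX A x t v * B x t v + A x t v * PDX B x t v :=
  ((hA.hasDerivAt_X x t v).mul (hB.hasDerivAt_X x t v)).deriv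

lemma PDX_sum {ι : Type*} {ℓ : ℕ} {s : Finset ι} {F : ι → Dens}
    (h : ∀ i ∈ s, Good ℓ (F i)) (x t : ℝ) (v : ℕ → ℝ) :
    PDX (fun x t w => ∑ i ∈ s, F i x t w) x t v = ∑ i ∈ s, PDX (F i) x t v :=
  (HasDerivAt.fun_sum (fun i hi => (h i hi).hasDerivAt_X x t v)).deriv

-- linearity of totalDerXT
lemma TD_add {ℓ : ℕ} {A B : Dens} (hA : Good ℓ A) (hB : Good ℓ B) (x t : ℝ) (v : ℕ → ℝ) :
    totalDerXT (fun x t w => A x t w + B x t w) x t v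
      = totalDerXT A x t v + totalDerXT B x t v := by
  rw [totalDerXT_good (hA.add hB) x t v, totalDerXT_good hA x t v, totalDerXT_good hB x t v,
    PDX_add hA hB]
  have : ∀ i : Fin ℓ, v ((i:ℕ)+1) * PD (i:ℕ) (fun x t w => A x t w + B x t w) x t v
      = v ((i:ℕ)+1) * PD (i:ℕ) A x t v + v ((i:ℕ)+1) * PD (i:ℕ) B x t v := by
    intro i; rw [PD_add hA hB, mul_add]
  rw [Finset.sum_congr rfl fun i _ => this i, Finset.sum_add_distrib]
  ring

lemma TD_const_mul {ℓ : ℕ} {A : Dens} (hA : Good ℓ A) (c : ℝ) (x t : ℝ) (v : ℕ → ℝ) :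
    totalDerXT (fun x t w => c * A x t w) x t v = c * totalDerXT A x t v := by
  rw [totalDerXT_good (hA.const_mul c) x t v, totalDerXT_good hA x t v, PDX_const_mul hA]
  have : ∀ i : Fin ℓ, v ((i:ℕ)+1) * PD (i:ℕ) (fun x t w => c * A x t w) x t v
      = c * (v ((i:ℕ)+1) * PD (i:ℕ) A x t v) := by
    intro i; rw [PD_const_mul hA]; ring
  rw [Finset.sum_congr rfl fun i _ => this i, ← Finset.mul_sum]
  ring

lemma TD_mul {ℓ : ℕ} {A B : Dens} (hA : Good ℓ A) (hB : Good ℓ B) (x t : ℝ) (v : ℕ → ℝ) :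
    totalDerXT (fun x t w => A x t w * B x t w) x t v
      = totalDerXT A x t v * B x t v + A x t v * totalDerXT B x t v := by
  rw [totalDerXT_good (hA.mul hB) x t v, totalDerXT_good hA x t v, totalDerXT_good hB x t v,
    PDX_mul hA hB]
  have : ∀ i : Fin ℓ, v ((i:ℕ)+1) * PD (i:ℕ) (fun x t w => A x t w * B x t w) x t v
      = v ((i:ℕ)+1) * PD (i:ℕ) A x t v * B x t v
        + A x t v * (v ((i:ℕ)+1) * PD (i:ℕ) B x t v) := by
    intro i; rw [PD_mul hA hB]; ring
  rw [Finset.sum_congr rfl fun i _ => this i, Finset.sum_add_distrib, ← Finset.mul_sum,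
    ← Finset.sum_mul]
  ring

lemma TD_sum {ι : Type*} {ℓ : ℕ} {s : Finset ι} {F : ι → Dens}
    (h : ∀ i ∈ s, Good ℓ (F i)) (x t : ℝ) (v : ℕ → ℝ) :
    totalDerXT (fun x t w => ∑ i ∈ s, F i x t w) x t v
      = ∑ i ∈ s, totalDerXT (F i) x t v := by
  rw [totalDerXT_good (Good.sum h) x t v, PDX_sum h]
  have : ∀ j : Fin ℓ, v ((j:ℕ)+1) * PD (j:ℕ) (fun x t w => ∑ i ∈ s, F i x t w) x t v
      = ∑ i ∈ s, v ((j:ℕ)+1) * PD (j:ℕ) (F i) x t v := by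
    intro j; rw [PD_sum h, Finset.mul_sum]
  rw [Finset.sum_congr rfl fun j _ => this j, Finset.sum_comm]
  rw [← Finset.sum_add_distrib]
  exact Finset.sum_congr rfl fun i hi => (totalDerXT_good (h i hi) x t v).symm

-- iterates
lemma TD_iter_sum {ι : Type*} {ℓ : ℕ} {s : Finset ι} {F : ι → Dens}
    (h : ∀ i ∈ s, Good ℓ (F i)) (j : ℕ) (x t : ℝ) (v : ℕ → ℝ) :
    totalDerXT^[j] (fun x t w => ∑ i ∈ s, F i x t w) x t v
      = ∑ i ∈ s, totalDerXT^[j] (F i) x t v := by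
  induction j generalizing x t v with
  | zero => simp
  | succ n ih =>
    rw [Function.iterate_succ_apply']
    have hfun : (fun x t w => totalDerXT^[n] (fun x t w => ∑ i ∈ s, F i x t w) x t w)
        = fun x t w => ∑ i ∈ s, totalDerXT^[n] (F i) x t w := by
      funext x t w; exact ih x t w
    calc totalDerXT (totalDerXT^[n] fun x t w => ∑ i ∈ s, F i x t w) x t v
        = totalDerXT (fun x t w => ∑ i ∈ s, totalDerXT^[n] (F i) x t w) x t v := by
          rw [← hfun]
      _ = ∑ i ∈ s, totalDerXT (totalDerXT^[n] (F i)) x t v :=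
          TD_sum (ℓ := ℓ + n) (fun i hi => (h i hi).td_iter n) x t v
      _ = _ := by
        refine Finset.sum_congr rfl fun i hi => ?_
        rw [Function.iterate_succ_apply' totalDerXT n (F i)]

lemma TD_iter_const_mul {ℓ : ℕ} {A : Dens} (hA : Good ℓ A) (c : ℝ) (j : ℕ)
    (x t : ℝ) (v : ℕ → ℝ) :
    totalDerXT^[j] (fun x t w => c * A x t w) x t v = c * totalDerXT^[j] A x t v := by
  induction j generalizing x t v with
  | zero => simp
  | succ n ih =>
    rw [Function.iterate_succ_apply']
    have hfun : (fun x t w => totalDerXT^[n] (fun x t w => c * A x t w) x t w)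
        = fun x t w => c * totalDerXT^[n] A x t w := by
      funext x t w; exact ih x t w
    calc totalDerXT (totalDerXT^[n] fun x t w => c * A x t w) x t v
        = totalDerXT (fun x t w => c * totalDerXT^[n] A x t w) x t v := by rw [← hfun]
      _ = c * totalDerXT (totalDerXT^[n] A) x t v :=
          TD_const_mul (hA.td_iter n) c x t v
      _ = _ := by rw [Function.iterate_succ_apply' totalDerXT n A]

-- Euler operator as finite sum
lemma EulerOpXT_eq_sum {ℓ : ℕ} {D : Dens} (h : Good ℓ D) {L : ℕ} (hL : ℓ ≤ L)
    (x t : ℝ) (v : ℕ → ℝ) :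
    EulerOpXT D x t v
      = ∑ k ∈ Finset.range L, (-1:ℝ)^k * totalDerXT^[k] (PD k D) x t v := by
  have hPD : ∀ k : ℕ, (fun x' t' w => pderivJet (D x' t') k w) = PD k D := fun k => rfl
  unfold EulerOpXT
  simp only [hPD]
  refine tsum_eq_sum fun k hk => ?_
  have hk' : ℓ ≤ k := le_trans hL (by simpa using hk)
  rw [Good.pd_zero h hk', TD_iter_zero_dens k]
  simp

lemma Good.euler {ℓ : ℕ} {D : Dens} (h : Good ℓ D) : Good (2 * ℓ) (EulerOpXT D) := by
  have hfun : EulerOpXT D = fun x t v =>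
      ∑ k ∈ Finset.range ℓ, (-1:ℝ)^k * totalDerXT^[k] (PD k D) x t v := by
    funext x t v; exact EulerOpXT_eq_sum h le_rfl x t v
  rw [hfun]
  refine Good.sum fun k hk => ?_
  have hk' : k < ℓ := by simpa using hk
  exact (((h.pd k).td_iter k).mono (by omega)).const_mul _

end Aux

namespace Aux

/-- coefficient `[i ≤ k] * C(j,i)` -/
def cf (j k i : ℕ) : ℝ := if i ≤ k then ((j.choose i : ℕ) : ℝ) else 0

lemma TD_iter_add {ℓ : ℕ} {A B : Dens} (hA : Good ℓ A) (hB : Good ℓ B) (j : ℕ)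
    (x t : ℝ) (v : ℕ → ℝ) :
    totalDerXT^[j] (fun x t w => A x t w + B x t w) x t v
      = totalDerXT^[j] A x t v + totalDerXT^[j] B x t v := by
  induction j generalizing x t v with
  | zero => simp
  | succ n ih =>
    rw [Function.iterate_succ_apply']
    have hfun : (fun x t w => totalDerXT^[n] (fun x t w => A x t w + B x t w) x t w)
        = fun x t w => totalDerXT^[n] A x t w + totalDerXT^[n] B x t w := by
      funext x t w; exact ih x t w
    calc totalDerXT (totalDerXT^[n] fun x t w => A x t w + B x t w) x t v
        = totalDerXT (fun x t w => totalDerXT^[n] A x t w + totalDerXT^[n] B x t w) x t v := by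
          rw [← hfun]
      _ = totalDerXT (totalDerXT^[n] A) x t v + totalDerXT (totalDerXT^[n] B) x t v :=
          TD_add (hA.td_iter n) (hB.td_iter n) x t v
      _ = _ := by rw [Function.iterate_succ_apply' totalDerXT n A,
            Function.iterate_succ_apply' totalDerXT n B]

/-- the scalar Pascal identity used in the induction. -/
lemma pascal_step (n k : ℕ) (a : ℕ → ℝ) :
    ∑ i ∈ Finset.range (n+2), cf (n+1) k i * a i
      = ∑ i ∈ Finset.range (n+1), cf n k i * a i
        + (if k = 0 then 0 else ∑ i ∈ Finset.range (n+1), cf n (k-1) i * a (i+1)) := by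
  rcases Nat.eq_zero_or_pos k with rfl | hk
  · rw [if_pos rfl, add_zero]
    have h1 : ∀ i, cf (n+1) 0 i * a i = if i = 0 then a 0 else 0 := by
      intro i
      rcases Nat.eq_zero_or_pos i with rfl | hi
      · simp [cf]
      · rw [if_neg (by omega)]
        unfold cf
        rw [if_neg (by omega), zero_mul]
    have h2 : ∀ i, cf n 0 i * a i = if i = 0 then a 0 else 0 := by
      intro i
      rcases Nat.eq_zero_or_pos i with rfl | hi
      · simp [cf]
      · rw [if_neg (by omega)]
        unfold cf
        rw [if_neg (by omega), zero_mul]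
    rw [Finset.sum_congr rfl fun i _ => h1 i, Finset.sum_congr rfl fun i _ => h2 i]
    rw [Finset.sum_ite_eq' (Finset.range (n+2)) 0 (fun _ => a 0),
      Finset.sum_ite_eq' (Finset.range (n+1)) 0 (fun _ => a 0)]
    simp
  · obtain ⟨m, rfl⟩ : ∃ m, k = m + 1 := ⟨k - 1, by omega⟩
    rw [if_neg (Nat.succ_ne_zero m)]
    rw [Finset.sum_range_succ' (fun i => cf (n+1) (m+1) i * a i) (n+1)]
    rw [Finset.sum_range_succ' (fun i => cf n (m+1) i * a i) n]
    have hh0 : cf (n+1) (m+1) 0 * a 0 = cf n (m+1) 0 * a 0 := by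
      unfold cf; simp
    rw [hh0]
    have hstep : ∀ i, cf (n+1) (m+1) (i+1) * a (i+1)
        = cf n (m+1) (i+1) * a (i+1) + cf n m i * a (i+1) := by
      intro i
      unfold cf
      by_cases hi : i ≤ m
      · rw [if_pos (by omega), if_pos (by omega), if_pos hi]
        rw [Nat.choose_succ_succ n i]
        push_cast
        ring
      · rw [if_neg (by omega), if_neg (by omega), if_neg hi]
        ring
    rw [Finset.sum_congr rfl fun i _ => hstep i, Finset.sum_add_distrib]
    -- now: Σ_{range (n+1)} cf n (m+1) (i+1) a(i+1) + Σ_{range(n+1)} cf n m i a(i+1) + cf00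
    --  =  (Σ_{range n} cf n (m+1) (i+1) a(i+1) + cf00) + Σ_{range (n+1)} cf n m i a(i+1)
    rw [Finset.sum_range_succ (fun i => cf n (m+1) (i+1) * a (i+1)) n]
    have htop : cf n (m+1) (n+1) * a (n+1) = 0 := by
      unfold cf
      by_cases h : n + 1 ≤ m + 1
      · rw [if_pos h, Nat.choose_succ_self n]; simp
      · rw [if_neg h, zero_mul]
    rw [htop]
    simp only [Nat.add_sub_cancel]
    ring

/-- expansion of `∂ₖ ∘ 𝔇^j`. -/
lemma PD_TD_iter {ℓ : ℕ} {D : Dens} (h : Good ℓ D) (j k : ℕ) (x t : ℝ) (v : ℕ → ℝ) :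
    PD k (totalDerXT^[j] D) x t v
      = ∑ i ∈ Finset.range (j+1), cf j k i * totalDerXT^[j-i] (PD (k-i) D) x t v := by
  induction j generalizing k x t v with
  | zero => simp [cf]
  | succ n ih =>
    rw [Function.iterate_succ_apply']
    rw [PD_totalDerXT (h.td_iter n) k x t v]
    have hfun : PD k (totalDerXT^[n] D)
        = fun x t v => ∑ i ∈ Finset.range (n+1),
            cf n k i * totalDerXT^[n-i] (PD (k-i) D) x t v := by
      funext x' t' v'; exact ih k x' t' v'
    rw [hfun]
    have hgood : ∀ i ∈ Finset.range (n+1), Good (ℓ + n)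
        (fun x t w => cf n k i * totalDerXT^[n-i] (PD (k-i) D) x t w) := by
      intro i hi
      refine Good.const_mul ?_ _
      exact ((h.pd (k-i)).td_iter (n-i)).mono (by omega)
    rw [TD_sum hgood x t v]
    have hterm : ∀ i ∈ Finset.range (n+1),
        totalDerXT (fun x t w => cf n k i * totalDerXT^[n-i] (PD (k-i) D) x t w) x t v
          = cf n k i * totalDerXT^[(n+1)-i] (PD (k-i) D) x t v := by
      intro i hi
      rw [TD_const_mul (((h.pd (k-i)).td_iter (n-i)).mono (le_refl _)) _ x t v]
      congr 2
      have : (n+1) - i = (n-i) + 1 := by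
        simp only [Finset.mem_range] at hi; omega
      rw [this, Function.iterate_succ_apply' totalDerXT (n-i) (PD (k-i) D)]
    rw [Finset.sum_congr rfl hterm]
    -- Now use pascal_step with a i := T^{(n+1)-i}(PD (k-i) D) x t v
    have hps := pascal_step n k (fun i => totalDerXT^[(n+1)-i] (PD (k-i) D) x t v)
    rw [hps]
    congr 1
    rcases Nat.eq_zero_or_pos k with rfl | hk
    · rw [if_pos rfl, if_pos rfl]
    · rw [if_neg (by omega), if_neg (by omega)]
      rw [ih (k-1) x t v]
      refine Finset.sum_congr rfl fun i _ => ?_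
      have e2 : (n+1) - (i+1) = n - i := by omega
      have e1 : k - (i+1) = k - 1 - i := by omega
      rw [e2, e1]

end Aux

namespace Aux

/-- higher Euler operators (with explicit summation bound L). -/
def HE (r L : ℕ) (D : Dens) : Dens :=
  fun x t v => ∑ j ∈ Finset.range L,
    (if r ≤ j then ((-1:ℝ))^(j-r) * ((j.choose r : ℕ) : ℝ)
        * totalDerXT^[j-r] (PD j D) x t v else 0)

lemma TD_iter_PD_vanish {ℓ : ℕ} {D : Dens} (h : Good ℓ D) {j : ℕ} (hj : ℓ ≤ j) (m : ℕ)
    (x t : ℝ) (v : ℕ → ℝ) : totalDerXT^[m] (PD j D) x t v = 0 := by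
  rw [show PD j D = (fun _ _ _ => (0:ℝ)) from Good.pd_zero h hj, TD_iter_zero_dens]

lemma HE_mono_L {ℓ : ℕ} {D : Dens} (h : Good ℓ D) {r L L' : ℕ} (hL : ℓ ≤ L) (hLL : L ≤ L')
    (x t : ℝ) (v : ℕ → ℝ) : HE r L' D x t v = HE r L D x t v := by
  unfold HE
  rw [← Finset.sum_subset (Finset.range_subset_range.mpr hLL)]
  intro j hj hj2
  have hjℓ : ℓ ≤ j := le_trans hL (by simpa using hj2)
  rw [TD_iter_PD_vanish h hjℓ _ x t v]
  simp

lemma EulerOpXT_eq_HE0 {ℓ : ℕ} {D : Dens} (h : Good ℓ D) {L : ℕ} (hL : ℓ ≤ L)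
    (x t : ℝ) (v : ℕ → ℝ) : EulerOpXT D x t v = HE 0 L D x t v := by
  rw [EulerOpXT_eq_sum h hL x t v]
  unfold HE
  refine Finset.sum_congr rfl fun j _ => ?_
  rw [if_pos (Nat.zero_le j), Nat.sub_zero, Nat.choose_zero_right]
  norm_num

lemma Good.he {ℓ : ℕ} {D : Dens} (h : Good ℓ D) (r L : ℕ) : Good (ℓ + L) (HE r L D) := by
  unfold HE
  refine Good.sum fun j hj => ?_
  by_cases hrj : r ≤ j
  · have : (fun x t v => if r ≤ j then ((-1:ℝ))^(j-r) * ((j.choose r : ℕ) : ℝ)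
        * totalDerXT^[j-r] (PD j D) x t v else 0)
        = fun x t v => (((-1:ℝ))^(j-r) * ((j.choose r : ℕ) : ℝ))
            * totalDerXT^[j-r] (PD j D) x t v := by
      funext x t v; rw [if_pos hrj]
    rw [this]
    refine Good.const_mul ?_ _
    refine ((h.pd j).td_iter (j-r)).mono ?_
    have : j < L := by simpa using hj
    omega
  · have : (fun x t v => if r ≤ j then ((-1:ℝ))^(j-r) * ((j.choose r : ℕ) : ℝ)
        * totalDerXT^[j-r] (PD j D) x t v else 0) = fun _ _ _ => (0:ℝ) := by
      funext x t v; rw [if_neg hrj]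
    rw [this]
    exact Good.zero _

/-- recursion `E_r ∘ 𝔇 = E_{r-1}` (and `E_0 ∘ 𝔇 = 0`). -/
lemma HE_TD {ℓ : ℕ} {D : Dens} (h : Good ℓ D) {r L : ℕ} (hL : ℓ + 1 ≤ L)
    (x t : ℝ) (v : ℕ → ℝ) :
    HE r L (totalDerXT D) x t v = if r = 0 then 0 else HE (r-1) L D x t v := by
  obtain ⟨L', rfl⟩ : ∃ L', L = L' + 1 := ⟨L - 1, by omega⟩
  have hℓL : ℓ ≤ L' := by omega
  have hsplit : ∀ j, r ≤ j → totalDerXT^[j-r] (PD j (totalDerXT D)) x t v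
      = totalDerXT^[(j-r)+1] (PD j D) x t v
        + (if j = 0 then 0 else totalDerXT^[j-r] (PD (j-1) D) x t v) := by
    intro j hrj
    rcases Nat.eq_zero_or_pos j with rfl | hj
    · have hPDfun : PD 0 (totalDerXT D) = totalDerXT (PD 0 D) := by
        funext x' t' v'
        rw [PD_totalDerXT h 0 x' t' v', if_pos rfl, add_zero]
      have h0 : (0:ℕ) - r = 0 := by omega
      rw [hPDfun, h0, if_pos rfl, add_zero]
      rfl
    · have hPDfun : PD j (totalDerXT D)
          = fun x' t' v' => totalDerXT (PD j D) x' t' v' + PD (j-1) D x' t' v' := by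
        funext x' t' v'
        rw [PD_totalDerXT h j x' t' v', if_neg (by omega)]
      rw [hPDfun, if_neg (by omega)]
      rw [TD_iter_add (ℓ := ℓ + 1) ((h.pd j).td) ((h.pd (j-1)).mono (by omega)) (j-r) x t v]
      rw [← Function.iterate_succ_apply totalDerXT (j-r) (PD j D)]
  -- split the sum into the two parts
  have hterm : ∀ j, (if r ≤ j then ((-1:ℝ))^(j-r) * ((j.choose r : ℕ) : ℝ)
      * totalDerXT^[j-r] (PD j (totalDerXT D)) x t v else 0)
      = (if r ≤ j then ((-1:ℝ))^(j-r) * ((j.choose r : ℕ) : ℝ)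
          * totalDerXT^[(j-r)+1] (PD j D) x t v else 0)
        + (if r ≤ j then ((-1:ℝ))^(j-r) * ((j.choose r : ℕ) : ℝ)
            * (if j = 0 then 0 else totalDerXT^[j-r] (PD (j-1) D) x t v) else 0) := by
    intro j
    by_cases hrj : r ≤ j
    · rw [if_pos hrj, if_pos hrj, if_pos hrj, hsplit j hrj]; ring
    · rw [if_neg hrj, if_neg hrj, if_neg hrj]; ring
  unfold HE
  rw [Finset.sum_congr rfl fun j _ => hterm j, Finset.sum_add_distrib]
  -- part 2: peel off the j = 0 term and shift
  rw [Finset.sum_range_succ' (fun j => (if r ≤ j then ((-1:ℝ))^(j-r) * ((j.choose r : ℕ) : ℝ)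
      * (if j = 0 then 0 else totalDerXT^[j-r] (PD (j-1) D) x t v) else 0)) L']
  have h00 : (if r ≤ 0 then ((-1:ℝ))^(0-r) * (((0:ℕ).choose r : ℕ) : ℝ)
      * (if (0:ℕ) = 0 then 0 else totalDerXT^[0-r] (PD (0-1) D) x t v) else 0) = 0 := by
    by_cases hr : r ≤ 0
    · rw [if_pos hr, if_pos rfl]; ring
    · rw [if_neg hr]
  rw [h00, add_zero]
  rcases Nat.eq_zero_or_pos r with rfl | hr
  · rw [if_pos rfl]
    -- S1 + S2 = 0
    rw [Finset.sum_range_succ (fun j => (if 0 ≤ j then ((-1:ℝ))^(j-0) * ((j.choose 0 : ℕ) : ℝ)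
        * totalDerXT^[(j-0)+1] (PD j D) x t v else 0)) L']
    have htop : (if 0 ≤ L' then ((-1:ℝ))^(L'-0) * ((L'.choose 0 : ℕ) : ℝ)
        * totalDerXT^[(L'-0)+1] (PD L' D) x t v else 0) = 0 := by
      rw [if_pos (Nat.zero_le _), TD_iter_PD_vanish h hℓL _ x t v]
      ring
    rw [htop, add_zero, ← Finset.sum_add_distrib]
    refine Finset.sum_eq_zero fun i _ => ?_
    rw [if_pos (Nat.zero_le _), if_pos (Nat.zero_le _), if_neg (Nat.succ_ne_zero i)]
    simp only [Nat.sub_zero, Nat.choose_zero_right, Nat.succ_sub_one]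
    push_cast
    rw [pow_succ]
    ring
  · obtain ⟨r', rfl⟩ : ∃ r', r = r' + 1 := ⟨r - 1, by omega⟩
    rw [if_neg (Nat.succ_ne_zero r'), Nat.add_sub_cancel]
    -- S2 with Pascal
    have hS2 : ∀ i, (if r' + 1 ≤ i + 1 then ((-1:ℝ))^((i+1)-(r'+1)) * (((i+1).choose (r'+1) : ℕ) : ℝ)
        * (if i + 1 = 0 then 0 else totalDerXT^[(i+1)-(r'+1)] (PD ((i+1)-1) D) x t v) else 0)
        = (if r' ≤ i then ((-1:ℝ))^(i-r') * ((i.choose r' : ℕ) : ℝ)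
            * totalDerXT^[i-r'] (PD i D) x t v else 0)
          + (if r' + 1 ≤ i then ((-1:ℝ))^(i-r') * ((i.choose (r'+1) : ℕ) : ℝ)
              * totalDerXT^[i-r'] (PD i D) x t v else 0) := by
      intro i
      by_cases hri : r' ≤ i
      · rw [if_pos (by omega), if_pos hri, if_neg (Nat.succ_ne_zero i)]
        have e1 : (i+1) - (r'+1) = i - r' := by omega
        have e2 : (i+1) - 1 = i := by omega
        rw [e1, e2, Nat.choose_succ_succ i r']
        by_cases hri2 : r' + 1 ≤ i
        · rw [if_pos hri2]
          push_cast
          ring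
        · rw [if_neg hri2]
          have : i = r' := by omega
          subst this
          rw [Nat.choose_succ_self i]
          push_cast
          ring
      · rw [if_neg (by omega), if_neg hri, if_neg (by omega)]
        ring
    rw [Finset.sum_congr rfl fun i _ => hS2 i, Finset.sum_add_distrib]
    -- S2a extends to range (L'+1) :  = HE r' (L'+1)
    have hS2a : (∑ i ∈ Finset.range L', (if r' ≤ i then ((-1:ℝ))^(i-r') * ((i.choose r' : ℕ) : ℝ)
        * totalDerXT^[i-r'] (PD i D) x t v else 0))
        = ∑ j ∈ Finset.range (L'+1), (if r' ≤ j then ((-1:ℝ))^(j-r') * ((j.choose r' : ℕ) : ℝ)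
            * totalDerXT^[j-r'] (PD j D) x t v else 0) := by
      rw [Finset.sum_range_succ]
      have : (if r' ≤ L' then ((-1:ℝ))^(L'-r') * ((L'.choose r' : ℕ) : ℝ)
          * totalDerXT^[L'-r'] (PD L' D) x t v else 0) = 0 := by
        by_cases hrl : r' ≤ L'
        · rw [if_pos hrl, TD_iter_PD_vanish h hℓL _ x t v]; ring
        · rw [if_neg hrl]
      rw [this, add_zero]
    -- S1 = - S2b
    have hS1 : ∀ j, (if r' + 1 ≤ j then ((-1:ℝ))^(j-(r'+1)) * ((j.choose (r'+1) : ℕ) : ℝ)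
        * totalDerXT^[(j-(r'+1))+1] (PD j D) x t v else 0)
        = - (if r' + 1 ≤ j then ((-1:ℝ))^(j-r') * ((j.choose (r'+1) : ℕ) : ℝ)
            * totalDerXT^[j-r'] (PD j D) x t v else 0) := by
      intro j
      by_cases hrj : r' + 1 ≤ j
      · rw [if_pos hrj, if_pos hrj]
        have e1 : (j - (r'+1)) + 1 = j - r' := by omega
        have e2 : j - r' = (j - (r'+1)) + 1 := by omega
        rw [e1, e2, pow_succ]
        ring
      · rw [if_neg hrj, if_neg hrj]; ring
    rw [Finset.sum_congr rfl fun j _ => hS1 j]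
    -- S2b: adjust guard and extend range
    have hS2b : (∑ i ∈ Finset.range L', (if r' + 1 ≤ i then ((-1:ℝ))^(i-r')
        * ((i.choose (r'+1) : ℕ) : ℝ) * totalDerXT^[i-r'] (PD i D) x t v else 0))
        = ∑ j ∈ Finset.range (L'+1), (if r' + 1 ≤ j then ((-1:ℝ))^(j-r')
            * ((j.choose (r'+1) : ℕ) : ℝ) * totalDerXT^[j-r'] (PD j D) x t v else 0) := by
      rw [Finset.sum_range_succ]
      have : (if r' + 1 ≤ L' then ((-1:ℝ))^(L'-r') * ((L'.choose (r'+1) : ℕ) : ℝ)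
          * totalDerXT^[L'-r'] (PD L' D) x t v else 0) = 0 := by
        by_cases hrl : r' + 1 ≤ L'
        · rw [if_pos hrl, TD_iter_PD_vanish h hℓL _ x t v]; ring
        · rw [if_neg hrl]
      rw [this, add_zero]
    rw [hS2a, hS2b]
    rw [Finset.sum_neg_distrib]
    ring

end Aux

namespace Aux

lemma HE_TD_iter (s : ℕ) : ∀ {ℓ : ℕ} {D : Dens}, Good ℓ D → ∀ {r L : ℕ}, ℓ + s ≤ L →
    ∀ (x t : ℝ) (v : ℕ → ℝ),
    HE r L (totalDerXT^[s] D) x t v = if s ≤ r then HE (r-s) L D x t v else 0 := by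
  induction s with
  | zero =>
    intro ℓ D h r L hL x t v
    rw [if_pos (Nat.zero_le r), Nat.sub_zero]
    rfl
  | succ n ih =>
    intro ℓ D h r L hL x t v
    rw [Function.iterate_succ_apply totalDerXT n D]
    rw [ih h.td (by omega) x t v]
    by_cases hnr : n ≤ r
    · rw [if_pos hnr]
      rw [HE_TD h (by omega) x t v]
      rcases Nat.lt_or_ge r (n+1) with hr | hr
      · have : r - n = 0 := by omega
        rw [this, if_pos rfl, if_neg (by omega)]
      · rw [if_neg (by omega), if_pos (by omega)]
        have : r - n - 1 = r - (n + 1) := by omega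
        rw [this]
    · rw [if_neg hnr, if_neg (by omega)]

lemma HE_sum {ι : Type*} {ℓ : ℕ} {s : Finset ι} {F : ι → Dens}
    (h : ∀ i ∈ s, Good ℓ (F i)) (r L : ℕ) (x t : ℝ) (v : ℕ → ℝ) :
    HE r L (fun x t w => ∑ i ∈ s, F i x t w) x t v = ∑ i ∈ s, HE r L (F i) x t v := by
  unfold HE
  have hterm : ∀ j, (if r ≤ j then ((-1:ℝ))^(j-r) * ((j.choose r : ℕ) : ℝ)
      * totalDerXT^[j-r] (PD j (fun x t w => ∑ i ∈ s, F i x t w)) x t v else 0)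
      = ∑ i ∈ s, (if r ≤ j then ((-1:ℝ))^(j-r) * ((j.choose r : ℕ) : ℝ)
          * totalDerXT^[j-r] (PD j (F i)) x t v else 0) := by
    intro j
    by_cases hrj : r ≤ j
    · rw [if_pos hrj]
      have hPD : PD j (fun x t w => ∑ i ∈ s, F i x t w)
          = fun x t w => ∑ i ∈ s, PD j (F i) x t w := by
        funext x' t' w'; exact PD_sum h j x' t' w'
      rw [hPD, TD_iter_sum (fun i hi => (h i hi).pd j) (j-r) x t v, Finset.mul_sum]
      exact Finset.sum_congr rfl fun i _ => by rw [if_pos hrj]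
    · rw [if_neg hrj, eq_comm]
      exact Finset.sum_eq_zero fun i _ => if_neg hrj
  rw [Finset.sum_congr rfl fun j _ => hterm j, Finset.sum_comm]

lemma HE_const_mul {ℓ : ℕ} {A : Dens} (hA : Good ℓ A) (c : ℝ) (r L : ℕ)
    (x t : ℝ) (v : ℕ → ℝ) :
    HE r L (fun x t w => c * A x t w) x t v = c * HE r L A x t v := by
  unfold HE
  rw [Finset.mul_sum]
  refine Finset.sum_congr rfl fun j _ => ?_
  by_cases hrj : r ≤ j
  · rw [if_pos hrj, if_pos hrj]
    have hPD : PD j (fun x t w => c * A x t w) = fun x t w => c * PD j A x t w := by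
      funext x' t' w'; exact PD_const_mul hA c j x' t' w'
    rw [hPD, TD_iter_const_mul (hA.pd j) c (j-r) x t v]
    ring
  · rw [if_neg hrj, if_neg hrj]; ring

lemma sum_guard_ext (A B : ℕ) (f : ℕ → ℝ) :
    (∑ i ∈ Finset.range (A+1), if i ≤ B then f i else 0)
      = ∑ i ∈ Finset.range (A+B+1), (if i ≤ B ∧ i ≤ A then f i else 0) := by
  rw [← Finset.sum_subset (Finset.range_subset_range.mpr (by omega : A+1 ≤ A+B+1))]
  · refine Finset.sum_congr rfl fun i hi => ?_
    have hiA : i ≤ A := by simpa [Nat.lt_succ_iff] using hi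
    by_cases hiB : i ≤ B
    · rw [if_pos hiB, if_pos ⟨hiB, hiA⟩]
    · rw [if_neg hiB, if_neg (by tauto)]
  · intro i _ hi2
    have : ¬ i ≤ A := by simp only [Finset.mem_range, Nat.lt_succ_iff] at hi2; omega
    rw [if_neg (by tauto)]

lemma sum_reflect {k L : ℕ} (hkL : k < L) (J : ℕ) (f : ℕ → ℝ) :
    (∑ i ∈ Finset.range (J+1), if i ≤ k then f i else 0)
      = ∑ q ∈ Finset.range L, (if q ≤ k ∧ k - q ≤ J then f (k-q) else 0) := by
  -- restrict RHS to range (k+1)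
  have h1 : (∑ q ∈ Finset.range L, (if q ≤ k ∧ k - q ≤ J then f (k-q) else 0))
      = ∑ q ∈ Finset.range (k+1), (if k - q ≤ J then f (k-q) else 0) := by
    rw [← Finset.sum_subset (Finset.range_subset_range.mpr (by omega : k+1 ≤ L))]
    · refine Finset.sum_congr rfl fun q hq => ?_
      have hqk : q ≤ k := by simpa [Nat.lt_succ_iff] using hq
      by_cases hJ : k - q ≤ J
      · rw [if_pos ⟨hqk, hJ⟩, if_pos hJ]
      · rw [if_neg (by tauto), if_neg hJ]
    · intro q _ hq2
      have : ¬ q ≤ k := by simp only [Finset.mem_range, Nat.lt_succ_iff] at hq2; omega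
      rw [if_neg (by tauto)]
  rw [h1]
  -- reflect
  have h2 := Finset.sum_range_reflect (fun q => if k - q ≤ J then f (k-q) else 0) (k+1)
  simp only [Nat.add_sub_cancel] at h2
  rw [← h2]
  -- now both sums over range (k+1)
  have h3 : ∀ i ∈ Finset.range (k+1), (if k - (k - i) ≤ J then f (k - (k - i)) else 0)
      = (if i ≤ J then f i else 0) := by
    intro i hi
    have hik : i ≤ k := by simpa [Nat.lt_succ_iff] using hi
    have : k - (k - i) = i := by omega
    rw [this]
  rw [Finset.sum_congr rfl h3]
  rw [sum_guard_ext J k f, sum_guard_ext k J f]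
  have : J + k + 1 = k + J + 1 := by omega
  rw [this]
  refine Finset.sum_congr rfl fun i _ => ?_
  by_cases h : i ≤ k ∧ i ≤ J
  · rw [if_pos ⟨h.1, h.2⟩, if_pos ⟨h.2, h.1⟩]
  · rw [if_neg (by tauto), if_neg (by tauto)]

end Aux

namespace Aux

lemma HE_zero_dens (r L : ℕ) (x t : ℝ) (v : ℕ → ℝ) :
    HE r L (fun _ _ _ => (0:ℝ)) x t v = 0 := by
  unfold HE
  refine Finset.sum_eq_zero fun j _ => ?_
  by_cases hrj : r ≤ j
  · rw [if_pos hrj, PD_zero_dens, TD_iter_zero_dens]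
    ring
  · rw [if_neg hrj]

/-- Helmholtz condition: `∂ₖ E(M) = (-1)^k E_k(E(M))`. -/
lemma helmholtz {ℓ : ℕ} {M : Dens} (hM : Good ℓ M) (k : ℕ) {L : ℕ}
    (hL : 2 * ℓ + k + 1 ≤ L) (x t : ℝ) (v : ℕ → ℝ) :
    PD k (EulerOpXT M) x t v = ((-1:ℝ))^k * HE k L (EulerOpXT M) x t v := by
  have hkL : k < L := by omega
  have hℓL : ℓ ≤ L := by omega
  have hEULfun : EulerOpXT M = fun x t w =>
      ∑ j ∈ Finset.range ℓ, (-1:ℝ)^j * totalDerXT^[j] (PD j M) x t w := by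
    funext x' t' w'; exact EulerOpXT_eq_sum hM le_rfl x' t' w'
  have hGoodF : ∀ j ∈ Finset.range ℓ, Good (2*ℓ)
      (fun x t w => (-1:ℝ)^j * totalDerXT^[j] (PD j M) x t w) := by
    intro j hj
    have hj' : j < ℓ := by simpa using hj
    exact (((hM.pd j).td_iter j).mono (by omega)).const_mul _
  set Φ : ℕ → ℕ → ℝ := fun a b =>
    if b ≤ k ∧ k - b ≤ a then
      (-1:ℝ)^a * ((a.choose (k-b) : ℕ) : ℝ) * totalDerXT^[a + b - k] (PD a (PD b M)) x t v
    else 0 with hΦ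
  have hΦb : ∀ a b : ℕ, ℓ ≤ b → Φ a b = 0 := by
    intro a b hb
    rw [hΦ]
    by_cases hg : b ≤ k ∧ k - b ≤ a
    · simp only [if_pos hg]
      rw [show PD b M = fun _ _ _ => (0:ℝ) from Good.pd_zero hM hb, PD_zero_dens,
        TD_iter_zero_dens]
      ring
    · simp only [if_neg hg]
  have hΦa : ∀ a b : ℕ, ℓ ≤ a → Φ a b = 0 := by
    intro a b ha
    rw [hΦ]
    by_cases hg : b ≤ k ∧ k - b ≤ a
    · simp only [if_pos hg]
      rw [show PD a (PD b M) = fun _ _ _ => (0:ℝ) from Good.pd_zero (hM.pd b) ha,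
        TD_iter_zero_dens]
      ring
    · simp only [if_neg hg]
  -- Step A: the right-hand side
  have hA : ((-1:ℝ))^k * HE k L (EulerOpXT M) x t v
      = ∑ b ∈ Finset.range L, ∑ a ∈ Finset.range L, Φ a b := by
    rw [hEULfun, HE_sum hGoodF k L x t v]
    have hstep1 : ∀ j ∈ Finset.range ℓ,
        HE k L (fun x t w => (-1:ℝ)^j * totalDerXT^[j] (PD j M) x t w) x t v
          = (-1:ℝ)^j * (if j ≤ k then HE (k-j) L (PD j M) x t v else 0) := by
      intro j hj
      have hj' : j < ℓ := by simpa using hj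
      rw [HE_const_mul ((hM.pd j).td_iter j) _ k L x t v,
        HE_TD_iter j (hM.pd j) (by omega) x t v]
    rw [Finset.sum_congr rfl hstep1, Finset.mul_sum]
    rw [Finset.sum_subset (Finset.range_subset_range.mpr hℓL) (fun j _ hj2 => ?_)]
    swap
    · have hjℓ : ℓ ≤ j := by simp only [Finset.mem_range, not_lt] at hj2; omega
      rw [show PD j M = fun _ _ _ => (0:ℝ) from Good.pd_zero hM hjℓ]
      by_cases hjk : j ≤ k
      · rw [if_pos hjk, HE_zero_dens]
        ring
      · rw [if_neg hjk]
        ring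
    refine Finset.sum_congr rfl fun j _ => ?_
    by_cases hjk : j ≤ k
    · rw [if_pos hjk]
      unfold HE
      rw [Finset.mul_sum, Finset.mul_sum]
      refine Finset.sum_congr rfl fun a _ => ?_
      by_cases hga : k - j ≤ a
      · rw [if_pos hga, hΦ]
        simp only [if_pos (And.intro hjk hga)]
        have he : a - (k-j) = a + j - k := by omega
        have hsgn : (-1:ℝ)^k * (-1:ℝ)^j * (-1:ℝ)^(a+j-k) = (-1:ℝ)^a := by
          rw [← pow_add, ← pow_add, show k + j + (a + j - k) = a + 2 * j from by omega,
            pow_add, pow_mul]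
          norm_num
        rw [he]
        calc (-1:ℝ)^k * ((-1:ℝ)^j * ((-1:ℝ)^(a+j-k) * (((a.choose (k-j) : ℕ)):ℝ)
              * totalDerXT^[a+j-k] (PD a (PD j M)) x t v))
            = ((-1:ℝ)^k * (-1:ℝ)^j * (-1:ℝ)^(a+j-k)) * ((((a.choose (k-j) : ℕ)):ℝ)
              * totalDerXT^[a+j-k] (PD a (PD j M)) x t v) := by ring
          _ = (-1:ℝ)^a * ((((a.choose (k-j) : ℕ)):ℝ)
              * totalDerXT^[a+j-k] (PD a (PD j M)) x t v) := by rw [hsgn]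
          _ = _ := by ring
      · rw [if_neg hga, hΦ]
        simp only [if_neg (fun hg : j ≤ k ∧ k - j ≤ a => hga hg.2)]
        ring
    · rw [if_neg hjk, mul_zero, mul_zero, eq_comm]
      refine Finset.sum_eq_zero fun a _ => ?_
      rw [hΦ]
      simp only [if_neg (fun hg : j ≤ k ∧ k - j ≤ a => hjk hg.1)]
  -- Step B: the left-hand side
  have hB : PD k (EulerOpXT M) x t v
      = ∑ j ∈ Finset.range L, ∑ q ∈ Finset.range L, Φ j q := by
    rw [hEULfun, PD_sum hGoodF k x t v]
    have hstep1 : ∀ j ∈ Finset.range ℓ,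
        PD k (fun x t w => (-1:ℝ)^j * totalDerXT^[j] (PD j M) x t w) x t v
          = ∑ q ∈ Finset.range L, Φ j q := by
      intro j hj
      rw [PD_const_mul ((hM.pd j).td_iter j) _ k x t v,
        PD_TD_iter (hM.pd j) j k x t v]
      have hcl : ∀ i, cf j k i * totalDerXT^[j-i] (PD (k-i) (PD j M)) x t v
          = if i ≤ k then ((j.choose i : ℕ) : ℝ)
              * totalDerXT^[j-i] (PD j (PD (k-i) M)) x t v else 0 := by
        intro i
        rw [PD_comm hM (k-i) j]
        unfold cf
        by_cases hik : i ≤ k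
        · rw [if_pos hik, if_pos hik]
        · rw [if_neg hik, if_neg hik, zero_mul]
      rw [Finset.sum_congr rfl fun i _ => hcl i]
      rw [sum_reflect hkL j (fun i => ((j.choose i : ℕ) : ℝ)
          * totalDerXT^[j-i] (PD j (PD (k-i) M)) x t v)]
      rw [Finset.mul_sum]
      refine Finset.sum_congr rfl fun q _ => ?_
      by_cases hg : q ≤ k ∧ k - q ≤ j
      · rw [if_pos hg, hΦ]
        simp only [if_pos hg]
        have e1 : k - (k - q) = q := by omega
        have e2 : j - (k - q) = j + q - k := by omega
        rw [e1, e2]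
        ring
      · rw [if_neg hg, hΦ]
        simp only [if_neg hg]
        ring
    rw [Finset.sum_congr rfl hstep1]
    rw [Finset.sum_subset (Finset.range_subset_range.mpr hℓL) (fun j _ hj2 => ?_)]
    have hjℓ : ℓ ≤ j := by simp only [Finset.mem_range, not_lt] at hj2; omega
    exact Finset.sum_eq_zero fun q _ => hΦa j q hjℓ
  rw [hA, hB]
  exact Finset.sum_comm

end Aux

namespace Aux

lemma TD_iter_sub {ℓ : ℕ} {A B : Dens} (hA : Good ℓ A) (hB : Good ℓ B) (j : ℕ)
    (x t : ℝ) (v : ℕ → ℝ) :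
    totalDerXT^[j] (fun x t w => A x t w - B x t w) x t v
      = totalDerXT^[j] A x t v - totalDerXT^[j] B x t v := by
  have h1 : (fun x t w => A x t w - B x t w)
      = fun x t w => A x t w + (-1) * B x t w := by
    funext x t w; ring
  rw [h1, TD_iter_add hA (hB.const_mul (-1)) j x t v, TD_iter_const_mul hB (-1) j x t v]
  ring

lemma binom_step (n : ℕ) (F : ℕ → ℕ → ℝ) :
    ∑ r ∈ Finset.range (n+2), (((n+1).choose r : ℕ) : ℝ) * F ((n+1)-r) r
      = ∑ r ∈ Finset.range (n+1), ((n.choose r : ℕ) : ℝ) * F ((n+1)-r) r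
        + ∑ r ∈ Finset.range (n+1), ((n.choose r : ℕ) : ℝ) * F (n-r) (r+1) := by
  rw [Finset.sum_range_succ' (fun r => (((n+1).choose r : ℕ) : ℝ) * F ((n+1)-r) r) (n+1)]
  rw [Finset.sum_range_succ' (fun r => ((n.choose r : ℕ) : ℝ) * F ((n+1)-r) r) n]
  have hsplit : ∀ r, (((n+1).choose (r+1) : ℕ) : ℝ) * F ((n+1)-(r+1)) (r+1)
      = ((n.choose r : ℕ) : ℝ) * F (n-r) (r+1)
        + ((n.choose (r+1) : ℕ) : ℝ) * F (n-r) (r+1) := by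
    intro r
    rw [Nat.choose_succ_succ n r, show (n+1)-(r+1) = n - r from by omega]
    push_cast
    ring
  rw [Finset.sum_congr rfl fun r _ => hsplit r, Finset.sum_add_distrib]
  rw [Finset.sum_range_succ (fun r => ((n.choose (r+1) : ℕ) : ℝ) * F (n-r) (r+1)) n]
  rw [Nat.choose_succ_self n]
  have h1 : ∀ r, ((n.choose (r+1) : ℕ) : ℝ) * F (n-r) (r+1)
      = ((n.choose (r+1) : ℕ) : ℝ) * F ((n+1)-(r+1)) (r+1) := by
    intro r; rw [show (n+1)-(r+1) = n - r from by omega]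
  rw [Finset.sum_congr rfl fun r _ => h1 r]
  simp only [Nat.choose_zero_right, Nat.cast_zero, Nat.cast_one]
  ring

/-- iterated Leibniz rule. -/
lemma TD_iter_mul {ℓ : ℕ} {A B : Dens} (hA : Good ℓ A) (hB : Good ℓ B) (j : ℕ)
    (x t : ℝ) (v : ℕ → ℝ) :
    totalDerXT^[j] (fun x t w => A x t w * B x t w) x t v
      = ∑ r ∈ Finset.range (j+1), ((j.choose r : ℕ) : ℝ)
          * (totalDerXT^[j-r] A x t v * totalDerXT^[r] B x t v) := by
  induction j generalizing x t v with
  | zero => simp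
  | succ n ih =>
    rw [Function.iterate_succ_apply']
    have hfun : (fun x t w => totalDerXT^[n] (fun x t w => A x t w * B x t w) x t w)
        = fun x t w => ∑ r ∈ Finset.range (n+1), ((n.choose r : ℕ) : ℝ)
            * (totalDerXT^[n-r] A x t w * totalDerXT^[r] B x t w) := by
      funext x' t' w'; exact ih x' t' w'
    have hGoodTerm : ∀ r ∈ Finset.range (n+1), Good (ℓ + n)
        (fun x t w => ((n.choose r : ℕ) : ℝ)
          * (totalDerXT^[n-r] A x t w * totalDerXT^[r] B x t w)) := by
      intro r hr
      have hr' : r < n + 1 := by simpa using hr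
      exact (((hA.td_iter (n-r)).mono (by omega)).mul
        ((hB.td_iter r).mono (by omega))).const_mul _
    calc totalDerXT (totalDerXT^[n] fun x t w => A x t w * B x t w) x t v
        = totalDerXT (fun x t w => ∑ r ∈ Finset.range (n+1), ((n.choose r : ℕ) : ℝ)
            * (totalDerXT^[n-r] A x t w * totalDerXT^[r] B x t w)) x t v := by rw [← hfun]
      _ = ∑ r ∈ Finset.range (n+1), totalDerXT (fun x t w => ((n.choose r : ℕ) : ℝ)
            * (totalDerXT^[n-r] A x t w * totalDerXT^[r] B x t w)) x t v :=
          TD_sum hGoodTerm x t v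
      _ = ∑ r ∈ Finset.range (n+1), ((n.choose r : ℕ) : ℝ)
            * (totalDerXT^[(n+1)-r] A x t v * totalDerXT^[r] B x t v)
          + ∑ r ∈ Finset.range (n+1), ((n.choose r : ℕ) : ℝ)
            * (totalDerXT^[n-r] A x t v * totalDerXT^[r+1] B x t v) := by
          rw [← Finset.sum_add_distrib]
          refine Finset.sum_congr rfl fun r hr => ?_
          have hr' : r < n + 1 := by simpa using hr
          rw [TD_const_mul (ℓ := ℓ + n) (Good.mul
            ((hA.td_iter (n-r)).mono (by omega : ℓ + (n-r) ≤ ℓ + n))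
            ((hB.td_iter r).mono (by omega : ℓ + r ≤ ℓ + n))) _ x t v]
          rw [TD_mul ((hA.td_iter (n-r)).mono (by omega : ℓ + (n-r) ≤ ℓ + n))
            ((hB.td_iter r).mono (by omega : ℓ + r ≤ ℓ + n)) x t v]
          rw [show (n+1) - r = (n-r) + 1 from by omega,
            Function.iterate_succ_apply' totalDerXT (n-r) A,
            Function.iterate_succ_apply' totalDerXT r B]
          ring
      _ = _ := (binom_step n (fun p q => totalDerXT^[p] A x t v * totalDerXT^[q] B x t v)).symm

/-- Euler operator of a product, split by Leibniz. -/
lemma euler_mul {ℓ : ℕ} {A B : Dens} (hA : Good ℓ A) (hB : Good ℓ B) {K : ℕ} (hK : ℓ ≤ K)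
    (x t : ℝ) (v : ℕ → ℝ) :
    EulerOpXT (fun x t w => A x t w * B x t w) x t v
      = (∑ k ∈ Finset.range K, (-1:ℝ)^k
          * totalDerXT^[k] (fun x t w => PD k A x t w * B x t w) x t v)
        + ∑ k ∈ Finset.range K, (-1:ℝ)^k
          * totalDerXT^[k] (fun x t w => PD k B x t w * A x t w) x t v := by
  rw [EulerOpXT_eq_sum (hA.mul hB) hK x t v, ← Finset.sum_add_distrib]
  refine Finset.sum_congr rfl fun k _ => ?_
  have hPD : PD k (fun x t w => A x t w * B x t w)
      = fun x t w => PD k A x t w * B x t w + PD k B x t w * A x t w := by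
    funext x' t' w'
    rw [PD_mul hA hB k x' t' w']
    ring
  rw [hPD, TD_iter_add ((hA.pd k).mul hB) ((hB.pd k).mul hA) k x t v]
  ring

lemma HE_vanish_high {ℓ : ℕ} {A : Dens} (hA : Good ℓ A) {r : ℕ} (hr : ℓ ≤ r) (L : ℕ)
    (x t : ℝ) (v : ℕ → ℝ) : HE r L A x t v = 0 := by
  unfold HE
  refine Finset.sum_eq_zero fun j _ => ?_
  by_cases hrj : r ≤ j
  · rw [if_pos hrj, TD_iter_PD_vanish hA (by omega) _ x t v]
    ring
  · rw [if_neg hrj]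

/-- the adjoint operator expansion. -/
lemma ldag_eq {ℓ : ℕ} {a φ : Dens} (ha : Good ℓ a) (hφ : Good ℓ φ) (K : ℕ)
    (x t : ℝ) (v : ℕ → ℝ) :
    (∑ k ∈ Finset.range K, (-1:ℝ)^k
        * totalDerXT^[k] (fun x t w => PD k a x t w * φ x t w) x t v)
      = ∑ r ∈ Finset.range K, ((-1:ℝ)^r * HE r K a x t v) * totalDerXT^[r] φ x t v := by
  have hstep : ∀ k ∈ Finset.range K, (-1:ℝ)^k
      * totalDerXT^[k] (fun x t w => PD k a x t w * φ x t w) x t v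
      = ∑ r ∈ Finset.range K, (if r ≤ k then ((-1:ℝ)^k * ((k.choose r : ℕ) : ℝ)
          * totalDerXT^[k-r] (PD k a) x t v) * totalDerXT^[r] φ x t v else 0) := by
    intro k hk
    have hkK : k < K := by simpa using hk
    rw [TD_iter_mul (ha.pd k) hφ k x t v, Finset.mul_sum]
    rw [← Finset.sum_subset (Finset.range_subset_range.mpr (by omega : k + 1 ≤ K))]
    · refine Finset.sum_congr rfl fun r hr => ?_
      have hr' : r ≤ k := by simp only [Finset.mem_range, Nat.lt_succ_iff] at hr; omega
      rw [if_pos hr']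
      ring
    · intro r _ hr2
      have : ¬ r ≤ k := by simp only [Finset.mem_range, Nat.lt_succ_iff] at hr2; omega
      rw [if_neg this]
  rw [Finset.sum_congr rfl hstep, Finset.sum_comm]
  refine Finset.sum_congr rfl fun r _ => ?_
  unfold HE
  rw [show ((-1:ℝ)^r * ∑ j ∈ Finset.range K, (if r ≤ j then ((-1:ℝ))^(j-r)
      * ((j.choose r : ℕ) : ℝ) * totalDerXT^[j-r] (PD j a) x t v else 0))
      * totalDerXT^[r] φ x t v
      = ∑ j ∈ Finset.range K, ((-1:ℝ)^r * (if r ≤ j then ((-1:ℝ))^(j-r)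
          * ((j.choose r : ℕ) : ℝ) * totalDerXT^[j-r] (PD j a) x t v else 0))
          * totalDerXT^[r] φ x t v from by rw [Finset.mul_sum, Finset.sum_mul]]
  refine Finset.sum_congr rfl fun k _ => ?_
  by_cases hrk : r ≤ k
  · rw [if_pos hrk, if_pos hrk]
    have : (-1:ℝ)^k = (-1:ℝ)^r * (-1:ℝ)^(k-r) := by
      rw [← pow_add, show r + (k - r) = k from by omega]
    rw [this]
    ring
  · rw [if_neg hrk, if_neg hrk]
    ring

/-- corollary of Helmholtz: `(-1)^r E_r(E(M)) = ∂_r E(M)` for all r. -/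
lemma helmholtz_PD {ℓ : ℕ} {M : Dens} (hM : Good ℓ M) (r : ℕ) {K : ℕ} (hK : 4*ℓ + 1 ≤ K)
    (x t : ℝ) (v : ℕ → ℝ) :
    ((-1:ℝ))^r * HE r K (EulerOpXT M) x t v = PD r (EulerOpXT M) x t v := by
  rcases lt_or_ge r (2*ℓ) with hr | hr
  · rw [helmholtz hM r (L := K) (by omega) x t v]
  · rw [HE_vanish_high hM.euler hr K x t v,
      show PD r (EulerOpXT M) = fun _ _ _ => (0:ℝ) from Good.pd_zero hM.euler hr]
    ring

/-- the shift identity: `L†_{𝔇h}(m) = -L†_h(𝔇m)`. -/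
lemma ldag_shift {ℓ : ℕ} {h' m : Dens} (hh : Good ℓ h') (hm : Good ℓ m) {K : ℕ}
    (hK : ℓ + 1 ≤ K) (x t : ℝ) (v : ℕ → ℝ) :
    (∑ k ∈ Finset.range K, (-1:ℝ)^k
        * totalDerXT^[k] (fun x t w => PD k (totalDerXT h') x t w * m x t w) x t v)
      = - ∑ k ∈ Finset.range K, (-1:ℝ)^k
          * totalDerXT^[k] (fun x t w => PD k h' x t w * totalDerXT m x t w) x t v := by
  have hstep : ∀ k, (-1:ℝ)^k
      * totalDerXT^[k] (fun x t w => PD k (totalDerXT h') x t w * m x t w) x t v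
      = ((-1:ℝ)^k * totalDerXT^[k+1] (fun x t w => PD k h' x t w * m x t w) x t v
          + (if k = 0 then 0 else (-1:ℝ)^k
              * totalDerXT^[k] (fun x t w => PD (k-1) h' x t w * m x t w) x t v))
        - (-1:ℝ)^k * totalDerXT^[k] (fun x t w => PD k h' x t w * totalDerXT m x t w) x t v := by
    intro k
    by_cases hk0 : k = 0
    · subst hk0
      rw [if_pos rfl]
      have hPDfun : PD 0 (totalDerXT h') = totalDerXT (PD 0 h') := by
        funext x' t' w'; rw [PD_totalDerXT hh 0 x' t' w', if_pos rfl, add_zero]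
      have hprod : (fun x t w => PD 0 (totalDerXT h') x t w * m x t w)
          = fun x t w => totalDerXT (fun x t w => PD 0 h' x t w * m x t w) x t w
              - PD 0 h' x t w * totalDerXT m x t w := by
        funext x' t' w'
        rw [hPDfun, TD_mul (hh.pd 0) hm x' t' w']
        ring
      rw [hprod]
      simp only [pow_zero, one_mul, Function.iterate_zero_apply, zero_add,
        Function.iterate_one, add_zero]
    · rw [if_neg hk0]
      have hPDfun : PD k (totalDerXT h')
          = fun x' t' w' => totalDerXT (PD k h') x' t' w' + PD (k-1) h' x' t' w' := by
        funext x' t' w'; rw [PD_totalDerXT hh k x' t' w', if_neg hk0]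
      have hprod : (fun x t w => PD k (totalDerXT h') x t w * m x t w)
          = fun x t w => (totalDerXT (fun x t w => PD k h' x t w * m x t w) x t w
              - PD k h' x t w * totalDerXT m x t w) + PD (k-1) h' x t w * m x t w := by
        funext x' t' w'
        simp only [hPDfun]
        rw [TD_mul (hh.pd k) hm x' t' w']
        ring
      rw [hprod]
      have hG3 : Good (ℓ + 1) (totalDerXT (fun x t w => PD k h' x t w * m x t w)) :=
        ((hh.pd k).mul hm).td
      have hG4 : Good (ℓ + 1) (fun x t w => PD k h' x t w * totalDerXT m x t w) :=
        ((hh.pd k).mono (by omega)).mul hm.td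
      have hGsub : Good (ℓ + 1) (fun x t w =>
          totalDerXT (fun x t w => PD k h' x t w * m x t w) x t w
            - PD k h' x t w * totalDerXT m x t w) := by
        have := hG3.add (hG4.const_mul (-1))
        convert this using 1
        funext x' t' w'
        ring
      have hGC : Good (ℓ + 1) (fun x t w => PD (k-1) h' x t w * m x t w) :=
        ((hh.pd (k-1)).mul hm).mono (by omega)
      rw [TD_iter_add hGsub hGC k x t v, TD_iter_sub hG3 hG4 k x t v]
      rw [← Function.iterate_succ_apply totalDerXT k (fun x t w => PD k h' x t w * m x t w)]
      ring
  rw [Finset.sum_congr rfl fun k _ => hstep k, Finset.sum_sub_distrib, Finset.sum_add_distrib]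
  -- telescoping of the first two sums
  obtain ⟨K', rfl⟩ : ∃ K', K = K' + 1 := ⟨K - 1, by omega⟩
  rw [Finset.sum_range_succ' (fun k => (if k = 0 then 0 else (-1:ℝ)^k
      * totalDerXT^[k] (fun x t w => PD (k-1) h' x t w * m x t w) x t v)) K']
  rw [if_pos rfl, add_zero]
  rw [Finset.sum_range_succ (fun k => (-1:ℝ)^k
      * totalDerXT^[k+1] (fun x t w => PD k h' x t w * m x t w) x t v) K']
  have hvan : (-1:ℝ)^K' * totalDerXT^[K'+1]
      (fun x t w => PD K' h' x t w * m x t w) x t v = 0 := by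
    rw [show (fun x t w => PD K' h' x t w * m x t w) = fun _ _ _ => (0:ℝ) from ?_]
    · rw [TD_iter_zero_dens]; ring
    · funext x' t' w'
      rw [show PD K' h' = fun _ _ _ => (0:ℝ) from Good.pd_zero hh (by omega)]
      ring
  rw [hvan, add_zero]
  have hcancel : ∀ i, (if i + 1 = 0 then (0:ℝ) else (-1:ℝ)^(i+1)
      * totalDerXT^[i+1] (fun x t w => PD (i+1-1) h' x t w * m x t w) x t v)
      = - ((-1:ℝ)^i * totalDerXT^[i+1] (fun x t w => PD i h' x t w * m x t w) x t v) := by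
    intro i
    rw [if_neg (Nat.succ_ne_zero i), Nat.add_sub_cancel, pow_succ]
    ring
  rw [Finset.sum_congr rfl fun i _ => hcancel i]
  rw [Finset.sum_neg_distrib]
  ring

end Aux

namespace Aux

lemma key_identity {ℓ : ℕ} {M H' : Dens} (hM : Good ℓ M) (hH : Good ℓ H') {K : ℕ}
    (hK : 4*ℓ + 1 ≤ K) (x t : ℝ) (v : ℕ → ℝ) :
    (∑ k ∈ Finset.range K, PD k (EulerOpXT M) x t v
        * totalDerXT^[k] (totalDerXT (EulerOpXT H')) x t v)
      = EulerOpXT (fun x t w => EulerOpXT M x t w * totalDerXT (EulerOpXT H') x t w) x t v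
        + ∑ i ∈ Finset.range K, PD i (EulerOpXT H') x t v
            * totalDerXT^[i+1] (EulerOpXT M) x t v := by
  have hm2 : Good (2*ℓ) (EulerOpXT M) := hM.euler
  have hh2 : Good (2*ℓ) (EulerOpXT H') := hH.euler
  have hmc : Good (2*ℓ+1) (EulerOpXT M) := hm2.mono (by omega)
  have hhc : Good (2*ℓ+1) (EulerOpXT H') := hh2.mono (by omega)
  have hgc : Good (2*ℓ+1) (totalDerXT (EulerOpXT H')) := hh2.td
  have htm : Good (2*ℓ+1) (totalDerXT (EulerOpXT M)) := hm2.td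
  have h1 : (∑ k ∈ Finset.range K, (-1:ℝ)^k * totalDerXT^[k]
      (fun x t w => PD k (EulerOpXT M) x t w
        * totalDerXT (EulerOpXT H') x t w) x t v)
      = ∑ k ∈ Finset.range K, PD k (EulerOpXT M) x t v
          * totalDerXT^[k] (totalDerXT (EulerOpXT H')) x t v := by
    rw [ldag_eq hmc hgc K x t v]
    exact Finset.sum_congr rfl fun r _ => by rw [helmholtz_PD hM r (by omega) x t v]
  have h2 := euler_mul hmc hgc (K := K) (by omega) x t v
  have h3 := ldag_shift hh2 hm2 (K := K) (by omega) x t v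
  have h4 : (∑ k ∈ Finset.range K, (-1:ℝ)^k * totalDerXT^[k]
      (fun x t w => PD k (EulerOpXT H') x t w
        * totalDerXT (EulerOpXT M) x t w) x t v)
      = ∑ i ∈ Finset.range K, PD i (EulerOpXT H') x t v
          * totalDerXT^[i+1] (EulerOpXT M) x t v := by
    rw [ldag_eq hhc htm K x t v]
    refine Finset.sum_congr rfl fun r _ => ?_
    rw [helmholtz_PD hH r (by omega) x t v,
      Function.iterate_succ_apply totalDerXT r (EulerOpXT M)]
  linarith [h1, h2, h3, h4]

/-- lifting a pure jet density to an x,t-density -/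
def lift (P : (ℕ → ℝ) → ℝ) : Dens := fun _ _ v => P v

lemma PD_lift (P : (ℕ → ℝ) → ℝ) (k : ℕ) : PD k (lift P) = lift (pderivJet P k) := rfl

lemma TD_lift (P : (ℕ → ℝ) → ℝ) : totalDerXT (lift P) = lift (totalDer P) := by
  funext x t v
  show deriv (fun _ => P v) x + _ = totalDer P v
  rw [deriv_const]
  unfold totalDer
  rw [zero_add]
  rfl

lemma TD_iter_lift (P : (ℕ → ℝ) → ℝ) (j : ℕ) :
    totalDerXT^[j] (lift P) = lift (totalDer^[j] P) := by
  induction j generalizing P with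
  | zero => rfl
  | succ n ih => rw [Function.iterate_succ_apply, Function.iterate_succ_apply, TD_lift, ih]

lemma EUL_lift (P : (ℕ → ℝ) → ℝ) : EulerOpXT (lift P) = lift (EulerOp P) := by
  funext x t v
  unfold EulerOpXT EulerOp lift
  refine tsum_congr fun k => ?_
  congr 1
  have : (fun x' t' w => pderivJet ((fun (_ : ℝ) (_ : ℝ) => P) x' t') k w)
      = lift (pderivJet P k) := rfl
  rw [this, TD_iter_lift]
  rfl

end Aux

namespace Aux

section generic
variable {V : Type*} [NormedAddCommGroup V] [NormedSpace ℝ V]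

lemma hasFDerivAt_smooth {g : V → ℝ} (hg : ContDiff ℝ (⊤ : ℕ∞) g) (z : V) :
    HasFDerivAt g (fderiv ℝ g z) z :=
  (hg.differentiable (by simp) z).hasFDerivAt

lemma smooth_fd {g : V → ℝ} (hg : ContDiff ℝ (⊤ : ℕ∞) g) (d : V) :
    ContDiff ℝ (⊤ : ℕ∞) (fun z => fderiv ℝ g z d) :=
  (hg.fderiv_right (by exact_mod_cast le_top)).clm_apply contDiff_const

lemma fd_swap {g : V → ℝ} (hg : ContDiff ℝ (⊤ : ℕ∞) g) (z a b : V) :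
    fderiv ℝ (fun w => fderiv ℝ g w a) z b = fderiv ℝ (fun w => fderiv ℝ g w b) z a := by
  have hd : ∀ y, HasFDerivAt g (fderiv ℝ g y) y := fun y => hasFDerivAt_smooth hg y
  have h2' : ContDiff ℝ (⊤ : ℕ∞) (fderiv ℝ g) := hg.fderiv_right (by exact_mod_cast le_top)
  have h2 : HasFDerivAt (fderiv ℝ g) (fderiv ℝ (fderiv ℝ g) z) z :=
    (h2'.differentiable (by simp) z).hasFDerivAt
  have hsymm := second_derivative_symmetric hd h2
  have key : ∀ d e : V, fderiv ℝ (fun w => fderiv ℝ g w d) z e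
      = fderiv ℝ (fderiv ℝ g) z e d := by
    intro d e
    have hcomp : HasFDerivAt (fun w => fderiv ℝ g w d)
        ((ContinuousLinearMap.apply ℝ ℝ d).comp (fderiv ℝ (fderiv ℝ g) z)) z :=
      (ContinuousLinearMap.apply ℝ ℝ d).hasFDerivAt.comp z h2
    rw [hcomp.fderiv]
    rfl
  rw [key a b, key b a]
  exact hsymm b a

end generic

section analytic

/-- partial derivatives on ℝ² -/
def DXF (G : ℝ × ℝ → ℝ) : ℝ × ℝ → ℝ := fun z => fderiv ℝ G z (1, 0)
def DTF (G : ℝ × ℝ → ℝ) : ℝ × ℝ → ℝ := fun z => fderiv ℝ G z (0, 1)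

lemma smooth_DXF {G : ℝ × ℝ → ℝ} (hG : ContDiff ℝ (⊤ : ℕ∞) G) :
    ContDiff ℝ (⊤ : ℕ∞) (DXF G) := smooth_fd hG _

lemma smooth_DTF {G : ℝ × ℝ → ℝ} (hG : ContDiff ℝ (⊤ : ℕ∞) G) :
    ContDiff ℝ (⊤ : ℕ∞) (DTF G) := smooth_fd hG _

lemma smooth_DXF_iter {G : ℝ × ℝ → ℝ} (hG : ContDiff ℝ (⊤ : ℕ∞) G) (k : ℕ) :
    ContDiff ℝ (⊤ : ℕ∞) (DXF^[k] G) := by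
  induction k generalizing G with
  | zero => exact hG
  | succ n ih => rw [Function.iterate_succ_apply]; exact ih (smooth_DXF hG)

lemma hasDerivAt_slice_x {G : ℝ × ℝ → ℝ} (hG : ContDiff ℝ (⊤ : ℕ∞) G) (x t : ℝ) :
    HasDerivAt (fun y => G (y, t)) (DXF G (x, t)) x := by
  have hc : HasDerivAt (fun y => ((y, t) : ℝ × ℝ)) ((1, 0) : ℝ × ℝ) x :=
    (hasDerivAt_id x).prodMk (hasDerivAt_const _ _)
  exact (hasFDerivAt_smooth hG (x, t)).comp_hasDerivAt x hc

lemma hasDerivAt_slice_t {G : ℝ × ℝ → ℝ} (hG : ContDiff ℝ (⊤ : ℕ∞) G) (x t : ℝ) :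
    HasDerivAt (fun τ => G (x, τ)) (DTF G (x, t)) t := by
  have hc : HasDerivAt (fun τ => ((x, τ) : ℝ × ℝ)) ((0, 1) : ℝ × ℝ) t :=
    (hasDerivAt_const _ _).prodMk (hasDerivAt_id t)
  exact (hasFDerivAt_smooth hG (x, t)).comp_hasDerivAt t hc

lemma iteratedDeriv_slice {G : ℝ × ℝ → ℝ} (hG : ContDiff ℝ (⊤ : ℕ∞) G) (k : ℕ)
    (x t : ℝ) : iteratedDeriv k (fun y => G (y, t)) x = DXF^[k] G (x, t) := by
  induction k generalizing x with
  | zero => simp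
  | succ n ih =>
    rw [iteratedDeriv_succ]
    have hfun : iteratedDeriv n (fun y => G (y, t)) = fun y => DXF^[n] G (y, t) := by
      funext y; exact ih y
    rw [hfun, Function.iterate_succ_apply']
    exact (hasDerivAt_slice_x (smooth_DXF_iter hG n) x t).deriv

lemma DTF_DXF_comm {G : ℝ × ℝ → ℝ} (hG : ContDiff ℝ (⊤ : ℕ∞) G) :
    DTF (DXF G) = DXF (DTF G) := by
  funext z
  exact fd_swap hG z (1, 0) (0, 1)

lemma DTF_DXF_iter {G : ℝ × ℝ → ℝ} (hG : ContDiff ℝ (⊤ : ℕ∞) G) (k : ℕ) :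
    DTF (DXF^[k] G) = DXF^[k] (DTF G) := by
  induction k generalizing G with
  | zero => rfl
  | succ n ih =>
    rw [Function.iterate_succ_apply, Function.iterate_succ_apply, ih (smooth_DXF hG),
      DTF_DXF_comm hG]

/-- decomposition of a tangent direction in `E ℓ`. -/
lemma dir_decomp {ℓ : ℕ} (a b : ℝ) (w : Fin ℓ → ℝ) :
    ((a, b, w) : E ℓ) = a • eX ℓ + b • eT ℓ + ∑ i : Fin ℓ, w i • eV i := by
  have h3 : (∑ i : Fin ℓ, w i • eV i) = (((0 : ℝ), (0 : ℝ), w) : E ℓ) := by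
    have hterm : ∀ i : Fin ℓ, w i • (eV i : E ℓ)
        = (((0:ℝ), (0:ℝ), Pi.single i (w i)) : E ℓ) := by
      intro i
      unfold eV
      refine Prod.ext (by simp) (Prod.ext (by simp) ?_)
      show w i • (Pi.single i 1 : Fin ℓ → ℝ) = (Pi.single i (w i) : Fin ℓ → ℝ)
      funext j
      by_cases h : j = i
      · subst h; simp
      · simp [Pi.single_eq_of_ne h]
    rw [Finset.sum_congr rfl fun i _ => hterm i]
    refine Prod.ext ?_ (Prod.ext ?_ ?_)
    · rw [Prod.fst_sum]; simp
    · rw [Prod.snd_sum, Prod.fst_sum]; simp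
    · rw [Prod.snd_sum, Prod.snd_sum]
      exact Finset.univ_sum_single w
  rw [h3]
  unfold eX eT
  refine Prod.ext (by simp) (Prod.ext (by simp) ?_)
  show w = a • (0:Fin ℓ → ℝ) + b • (0:Fin ℓ → ℝ) + w
  simp

variable {u : ℝ → ℝ → ℝ} (hu : ContDiff ℝ (⊤ : ℕ∞) fun z : ℝ × ℝ => u z.1 z.2)
include hu

lemma restr_jets (ℓ : ℕ) (x t : ℝ) :
    restr ℓ (jetsAt (fun z => u z t) x)
      = fun i : Fin ℓ => DXF^[(i:ℕ)] (fun z : ℝ × ℝ => u z.1 z.2) (x, t) := by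
  funext i
  exact iteratedDeriv_slice hu (i:ℕ) x t

lemma jets_coord (k : ℕ) (x t : ℝ) :
    jetsAt (fun z => u z t) x k = DXF^[k] (fun z : ℝ × ℝ => u z.1 z.2) (x, t) :=
  iteratedDeriv_slice hu k x t

/-- x-derivative of a density along the jet of u. -/
lemma hasDerivAt_dens_x {ℓ : ℕ} {D : Dens} (hD : Good ℓ D) (x t : ℝ) :
    HasDerivAt (fun y => D y t (jetsAt (fun z => u z t) y))
      (totalDerXT D x t (jetsAt (fun z => u z t) x)) x := by
  obtain ⟨g, hg⟩ := hD
  have hc : HasDerivAt (fun y => ((y, t, restr ℓ (jetsAt (fun z => u z t) y)) : E ℓ))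
      ((1, 0, fun i : Fin ℓ => DXF^[(i:ℕ)+1] (fun z : ℝ × ℝ => u z.1 z.2) (x, t)) : E ℓ) x := by
    have hcurve_eq : (fun y => ((y, t,
        fun i : Fin ℓ => DXF^[(i:ℕ)] (fun z : ℝ × ℝ => u z.1 z.2) (y, t)) : E ℓ))
        = fun y => ((y, t, restr ℓ (jetsAt (fun z => u z t) y)) : E ℓ) := by
      funext y; rw [restr_jets hu ℓ y t]
    rw [← hcurve_eq]
    refine (hasDerivAt_id x).prodMk ((hasDerivAt_const _ _).prodMk (hasDerivAt_pi.mpr fun i => ?_))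
    have := hasDerivAt_slice_x (smooth_DXF_iter hu (i:ℕ)) x t
    rwa [show DXF (DXF^[(i:ℕ)] (fun z : ℝ × ℝ => u z.1 z.2))
        = DXF^[(i:ℕ)+1] (fun z : ℝ × ℝ => u z.1 z.2) from
      (Function.iterate_succ_apply' DXF (i:ℕ) _).symm] at this
  have hcomp := (hasFDerivAt_smooth hg.1
    (x, t, restr ℓ (jetsAt (fun z => u z t) x))).comp_hasDerivAt x hc
  have hfun : (g ∘ fun y => ((y, t, restr ℓ (jetsAt (fun z => u z t) y)) : E ℓ))
      = fun y => D y t (jetsAt (fun z => u z t) y) := by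
    funext y
    simp only [Function.comp]
    rw [hg.2]
  rw [hfun] at hcomp
  have hval : fderiv ℝ g (x, t, restr ℓ (jetsAt (fun z => u z t) x))
      ((1, 0, fun i : Fin ℓ => DXF^[(i:ℕ)+1] (fun z : ℝ × ℝ => u z.1 z.2) (x, t)) : E ℓ)
      = totalDerXT D x t (jetsAt (fun z => u z t) x) := by
    rw [dir_decomp 1 0 (fun i : Fin ℓ => DXF^[(i:ℕ)+1] (fun z : ℝ × ℝ => u z.1 z.2) (x, t))]
    rw [map_add, map_add, map_smul, map_smul, map_sum]
    rw [totalDerXT_good ⟨g, hg⟩ x t (jetsAt (fun z => u z t) x),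
      PDX_rep hg x t (jetsAt (fun z => u z t) x)]
    simp only [one_smul, zero_smul, add_zero]
    congr 1
    refine Finset.sum_congr rfl fun i _ => ?_
    have hPDi : PD (i:ℕ) D x t (jetsAt (fun z => u z t) x)
        = fderiv ℝ g (x, t, restr ℓ (jetsAt (fun z => u z t) x)) (eV i) :=
      pderivJet_rep hg (i:ℕ) i.isLt x t (jetsAt (fun z => u z t) x)
    rw [map_smul, hPDi, ← jets_coord hu ((i:ℕ)+1) x t, smul_eq_mul]
  rwa [hval] at hcomp

lemma iteratedDeriv_dens {ℓ : ℕ} {D : Dens} (hD : Good ℓ D) (j : ℕ) (t : ℝ) (x : ℝ) :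
    iteratedDeriv j (fun y => D y t (jetsAt (fun z => u z t) y)) x
      = totalDerXT^[j] D x t (jetsAt (fun z => u z t) x) := by
  induction j generalizing x with
  | zero => simp
  | succ n ih =>
    rw [iteratedDeriv_succ]
    have hfun : iteratedDeriv n (fun y => D y t (jetsAt (fun z => u z t) y))
        = fun y => totalDerXT^[n] D y t (jetsAt (fun z => u z t) y) := by
      funext y; exact ih y
    rw [hfun, Function.iterate_succ_apply']
    exact (hasDerivAt_dens_x hu (hD.td_iter n) x t).deriv

/-- t-derivative of a density along the jet of u. -/
lemma hasDerivAt_dens_t {ℓ : ℕ} {D : Dens} (hD : Good ℓ D) (x t : ℝ) :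
    HasDerivAt (fun τ => D x τ (jetsAt (fun z => u z τ) x))
      (PDT D x t (jetsAt (fun z => u z t) x)
        + ∑ i : Fin ℓ, PD (i:ℕ) D x t (jetsAt (fun z => u z t) x)
            * DTF (DXF^[(i:ℕ)] (fun z : ℝ × ℝ => u z.1 z.2)) (x, t)) t := by
  obtain ⟨g, hg⟩ := hD
  have hc : HasDerivAt (fun τ => ((x, τ, restr ℓ (jetsAt (fun z => u z τ) x)) : E ℓ))
      ((0, 1, fun i : Fin ℓ => DTF (DXF^[(i:ℕ)] (fun z : ℝ × ℝ => u z.1 z.2)) (x, t)) : E ℓ)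
      t := by
    have hcurve_eq : (fun τ => ((x, τ,
        fun i : Fin ℓ => DXF^[(i:ℕ)] (fun z : ℝ × ℝ => u z.1 z.2) (x, τ)) : E ℓ))
        = fun τ => ((x, τ, restr ℓ (jetsAt (fun z => u z τ) x)) : E ℓ) := by
      funext τ; rw [restr_jets hu ℓ x τ]
    rw [← hcurve_eq]
    refine (hasDerivAt_const _ _).prodMk ((hasDerivAt_id t).prodMk (hasDerivAt_pi.mpr fun i => ?_))
    exact hasDerivAt_slice_t (smooth_DXF_iter hu (i:ℕ)) x t
  have hcomp := (hasFDerivAt_smooth hg.1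
    (x, t, restr ℓ (jetsAt (fun z => u z t) x))).comp_hasDerivAt t hc
  have hfun : (g ∘ fun τ => ((x, τ, restr ℓ (jetsAt (fun z => u z τ) x)) : E ℓ))
      = fun τ => D x τ (jetsAt (fun z => u z τ) x) := by
    funext τ
    simp only [Function.comp]
    rw [hg.2]
  rw [hfun] at hcomp
  have hval : fderiv ℝ g (x, t, restr ℓ (jetsAt (fun z => u z t) x))
      ((0, 1, fun i : Fin ℓ => DTF (DXF^[(i:ℕ)] (fun z : ℝ × ℝ => u z.1 z.2)) (x, t)) : E ℓ)
      = PDT D x t (jetsAt (fun z => u z t) x)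
        + ∑ i : Fin ℓ, PD (i:ℕ) D x t (jetsAt (fun z => u z t) x)
            * DTF (DXF^[(i:ℕ)] (fun z : ℝ × ℝ => u z.1 z.2)) (x, t) := by
    rw [dir_decomp 0 1 (fun i : Fin ℓ => DTF (DXF^[(i:ℕ)] (fun z : ℝ × ℝ => u z.1 z.2)) (x, t))]
    rw [map_add, map_add, map_smul, map_smul, map_sum]
    rw [PDT_rep hg x t (jetsAt (fun z => u z t) x)]
    simp only [one_smul, zero_smul, zero_add]
    congr 1
    refine Finset.sum_congr rfl fun i _ => ?_
    have hPDi : PD (i:ℕ) D x t (jetsAt (fun z => u z t) x)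
        = fderiv ℝ g (x, t, restr ℓ (jetsAt (fun z => u z t) x)) (eV i) :=
      pderivJet_rep hg (i:ℕ) i.isLt x t (jetsAt (fun z => u z t) x)
    rw [map_smul, hPDi, smul_eq_mul, mul_comm]
  rwa [hval] at hcomp

end analytic

end Aux


open Aux

/-- Theorem 4.1, Gel'fand–Dikii/Lax type: the variational derivative of a
(possibly x,t-dependent) local functional, evaluated along a solution of a Hamiltonian
PDE, satisfies a linear PDE whose forcing term is the total time derivative of the
functional. -/
theorem variational_derivative_satisfies_linear_pde
    (n m : ℕ)
    (hden : (Fin n → ℝ) → ℝ)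
    (mden : ℝ → ℝ → (Fin m → ℝ) → ℝ)
    (hsmooth : ContDiff ℝ (⊤ : ℕ∞) hden)
    (msmooth : ContDiff ℝ (⊤ : ℕ∞) fun z : ℝ × ℝ × (Fin m → ℝ) => mden z.1 z.2.1 z.2.2)
    (H : (ℕ → ℝ) → ℝ) (Hdef : ∀ v, H v = hden fun i => v i)
    (M : ℝ → ℝ → (ℕ → ℝ) → ℝ) (Mdef : ∀ x t v, M x t v = mden x t fun i => v i)
    (u : ℝ → ℝ → ℝ)
    (hu : ContDiff ℝ (⊤ : ℕ∞) fun z : ℝ × ℝ => u z.1 z.2)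
    (hpde : ∀ x t, deriv (fun τ => u x τ) t
      = deriv (fun y => EulerOp H (jetsAt (fun z => u z t) y)) x)
    (Mfun : ℝ → ℝ → ℝ)
    (hMfun : ∀ x t, Mfun x t = EulerOpXT M x t (jetsAt (fun z => u z t) x))
    (Afun : ℕ → ℝ → ℝ → ℝ)
    (hAfun : ∀ i x t, Afun i x t = pderivJet (EulerOp H) i (jetsAt (fun z => u z t) x))
    (Rfun : ℝ → ℝ → ℝ)
    (hRfun : ∀ x t, Rfun x t
      = deriv (fun τ => EulerOpXT M x τ (jetsAt (fun z => u z t) x)) t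
        + EulerOpXT (fun x' t' w => EulerOpXT M x' t' w * totalDer (EulerOp H) w) x t
            (jetsAt (fun z => u z t) x)) :
    ∀ x t, deriv (fun τ => Mfun x τ) t
      = (∑' i : ℕ, Afun i x t * iteratedDeriv (i + 1) (fun y => Mfun y t) x) + Rfun x t := by
  intro x t
  have hMGood : Good m M :=
    ⟨fun z => mden z.1 z.2.1 z.2.2, msmooth, fun x t v => by rw [Mdef]; rfl⟩
  have hHGood : Good n (lift H) :=
    ⟨fun z => hden z.2.2, hsmooth.comp (contDiff_snd.snd), fun x t v => by
      show H v = _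
      rw [Hdef]
      rfl⟩
  set ℓ0 := max m n with hℓ0
  have hM0 : Good ℓ0 M := hMGood.mono (le_max_left _ _)
  have hH0 : Good ℓ0 (lift H) := hHGood.mono (le_max_right _ _)
  set K := 4 * ℓ0 + 1 with hKdef
  -- the coefficients of the t-derivative
  have hDTF : DTF (fun z : ℝ × ℝ => u z.1 z.2)
      = fun z : ℝ × ℝ => totalDerXT (EulerOpXT (lift H)) z.1 z.2
          (jetsAt (fun y => u y z.2) z.1) := by
    funext z
    have h1 : deriv (fun τ => u z.1 τ) z.2 = DTF (fun z : ℝ × ℝ => u z.1 z.2) z :=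
      (hasDerivAt_slice_t hu z.1 z.2).deriv
    rw [← h1, hpde z.1 z.2]
    have h2 : (fun y => EulerOp H (jetsAt (fun z' => u z' z.2) y))
        = fun y => EulerOpXT (lift H) y z.2 (jetsAt (fun z' => u z' z.2) y) := by
      funext y; rw [EUL_lift]; rfl
    rw [h2]
    exact (hasDerivAt_dens_x hu hH0.euler z.1 z.2).deriv
  have hVi : ∀ i : ℕ, DTF (DXF^[i] (fun z : ℝ × ℝ => u z.1 z.2)) (x, t)
      = totalDerXT^[i] (totalDerXT (EulerOpXT (lift H))) x t
          (jetsAt (fun z => u z t) x) := by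
    intro i
    rw [DTF_DXF_iter hu i, ← iteratedDeriv_slice (smooth_DTF hu) i x t]
    have h3 : (fun y => DTF (fun z : ℝ × ℝ => u z.1 z.2) (y, t))
        = fun y => totalDerXT (EulerOpXT (lift H)) y t (jetsAt (fun z => u z t) y) := by
      funext y; rw [hDTF]
    rw [h3]
    exact iteratedDeriv_dens hu (hH0.euler.td) i t x
  -- the time derivative of Mfun
  have hL : deriv (fun τ => Mfun x τ) t
      = PDT (EulerOpXT M) x t (jetsAt (fun z => u z t) x)
        + ∑ k ∈ Finset.range K, PD k (EulerOpXT M) x t (jetsAt (fun z => u z t) x)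
            * totalDerXT^[k] (totalDerXT (EulerOpXT (lift H))) x t
                (jetsAt (fun z => u z t) x) := by
    have h0 : (fun τ => Mfun x τ) = fun τ => EulerOpXT M x τ (jetsAt (fun z => u z τ) x) :=
      funext fun τ => hMfun x τ
    rw [h0, (hasDerivAt_dens_t hu (hM0.euler.mono (by omega : 2*ℓ0 ≤ K)) x t).deriv]
    congr 1
    rw [← Fin.sum_univ_eq_sum_range (fun k => PD k (EulerOpXT M) x t
      (jetsAt (fun z => u z t) x) * totalDerXT^[k] (totalDerXT (EulerOpXT (lift H))) x t
      (jetsAt (fun z => u z t) x)) K]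
    exact Finset.sum_congr rfl fun i _ => by rw [hVi (i:ℕ)]
  -- the tsum
  have hAsum : (∑' i : ℕ, Afun i x t * iteratedDeriv (i + 1) (fun y => Mfun y t) x)
      = ∑ i ∈ Finset.range K, PD i (EulerOpXT (lift H)) x t (jetsAt (fun z => u z t) x)
          * totalDerXT^[i+1] (EulerOpXT M) x t (jetsAt (fun z => u z t) x) := by
    have hterm : ∀ i : ℕ, Afun i x t * iteratedDeriv (i + 1) (fun y => Mfun y t) x
        = PD i (EulerOpXT (lift H)) x t (jetsAt (fun z => u z t) x)
            * totalDerXT^[i+1] (EulerOpXT M) x t (jetsAt (fun z => u z t) x) := by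
      intro i
      congr 1
      · rw [hAfun i x t, EUL_lift H]
        rfl
      · have hfun : (fun y => Mfun y t)
            = fun y => EulerOpXT M y t (jetsAt (fun z => u z t) y) :=
          funext fun y => hMfun y t
        rw [hfun]
        exact iteratedDeriv_dens hu hM0.euler (i+1) t x
    rw [tsum_congr hterm]
    refine tsum_eq_sum fun i hi => ?_
    have hiK : 2*ℓ0 ≤ i := by
      simp only [Finset.mem_range, not_lt] at hi
      omega
    rw [show PD i (EulerOpXT (lift H)) = fun _ _ _ => (0:ℝ) from
      Good.pd_zero hH0.euler hiK]
    ring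
  -- Rfun
  have hR : Rfun x t
      = PDT (EulerOpXT M) x t (jetsAt (fun z => u z t) x)
        + EulerOpXT (fun x' t' w => EulerOpXT M x' t' w
            * totalDerXT (EulerOpXT (lift H)) x' t' w) x t (jetsAt (fun z => u z t) x) := by
    rw [hRfun x t]
    congr 1
    have hd : (fun x' t' w => EulerOpXT M x' t' w * totalDer (EulerOp H) w)
        = fun x' t' w => EulerOpXT M x' t' w * totalDerXT (EulerOpXT (lift H)) x' t' w := by
      funext x' t' w
      rw [EUL_lift, TD_lift]
      rfl
    rw [hd]
  have hkey := key_identity hM0 hH0 (K := K) (by omega) x t (jetsAt (fun z => u z t) x)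
  rw [hL, hAsum, hR]
  linarith [hkey]
end
end

section
/- Let h be a smooth real function and let N ≥ 1, T > 0, δ > 0. Let u(x,t,ε), σ(x,t,ε), G(x,t,ε), R(x,t,ε) be continuous functions, with u and σ continuously differentiable in x and t, defined on a region of the (x,t)-plane for each ε² ≤ δ², and suppose σ satisfies ∂_tσ = h''(u)·∂_xσ + ε²·G + ε^{2N+2}·R there, with σ(x,0,ε) = 0. Let x₁(t;ε) < x₂(t;ε) solve dxᵢ/dt = −h''(u(xᵢ(t),t,ε)) with x₁(0) < x₂(0), and let Π be the set of (x,t,ε) with x ∈ [x₁(t,ε), x₂(t,ε)], t ∈ [0,T], ε² ≤ δ², assumed contained in the domain of the equation. Suppose A = sup_{(x,t,ε),(y,s,η) ∈ Π}|x−y|^{1/2}, B = sup_Π|G|, C = sup_Π|R|, and D = sup_Π|h'''(u)·u_x| are finite, with D > 0. Then for all t ∈ [0,T] and ε² ≤ δ²: (∫_{x₁(t;ε)}^{x₂(t;ε)} σ(x,t,ε)² dx)^{1/2} ≤ ε²·A·(B + ε^{2N}·C)·(e^{DT} − 1)/D. -/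
set_option maxHeartbeats 1000000

open Set

noncomputable section

open intervalIntegral MeasureTheory Asymptotics Filter



noncomputable section

lemma aux_hasDerivAt_snd {g : ℝ → ℝ → ℝ} (hg : ContDiff ℝ 1 fun p : ℝ × ℝ => g p.1 p.2)
    (x s : ℝ) :
    HasDerivAt (fun τ => g x τ) (fderiv ℝ (fun p : ℝ × ℝ => g p.1 p.2) (x, s) (0, 1)) s := by
  have h1 : HasFDerivAt (fun p : ℝ × ℝ => g p.1 p.2)
      (fderiv ℝ (fun p : ℝ × ℝ => g p.1 p.2) (x, s)) (x, s) :=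
    (hg.differentiable one_ne_zero (x, s)).hasFDerivAt
  have h2 : HasDerivAt (fun τ => ((x, τ) : ℝ × ℝ)) ((0 : ℝ), (1 : ℝ)) s :=
    (hasDerivAt_const s x).prodMk (hasDerivAt_id s)
  exact h1.comp_hasDerivAt s h2

lemma aux_deriv_snd_eq {g : ℝ → ℝ → ℝ} (hg : ContDiff ℝ 1 fun p : ℝ × ℝ => g p.1 p.2)
    (x s : ℝ) :
    deriv (fun τ => g x τ) s = fderiv ℝ (fun p : ℝ × ℝ => g p.1 p.2) (x, s) (0, 1) :=
  (aux_hasDerivAt_snd hg x s).deriv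

lemma aux_cont_deriv_snd {g : ℝ → ℝ → ℝ} (hg : ContDiff ℝ 1 fun p : ℝ × ℝ => g p.1 p.2) :
    Continuous fun p : ℝ × ℝ => deriv (fun τ => g p.1 τ) p.2 := by
  have : (fun p : ℝ × ℝ => deriv (fun τ => g p.1 τ) p.2)
      = fun p : ℝ × ℝ => fderiv ℝ (fun q : ℝ × ℝ => g q.1 q.2) p (0, 1) := by
    funext p; exact aux_deriv_snd_eq hg p.1 p.2
  rw [this]
  exact (hg.continuous_fderiv one_ne_zero).clm_apply continuous_const

/-- Differentiation under the integral sign, fixed endpoints, `g` jointly `C¹`. -/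
lemma aux_param_deriv {g : ℝ → ℝ → ℝ} (hg : ContDiff ℝ 1 fun p : ℝ × ℝ => g p.1 p.2)
    (c d s₀ : ℝ) :
    HasDerivAt (fun s => ∫ x in c..d, g x s)
      (∫ x in c..d, deriv (fun τ => g x τ) s₀) s₀ := by
  have hK : IsCompact ((uIcc c d) ×ˢ (Icc (s₀ - 1) (s₀ + 1))) :=
    isCompact_uIcc.prod isCompact_Icc
  obtain ⟨M, hM⟩ := hK.exists_bound_of_continuousOn (aux_cont_deriv_snd hg).continuousOn
  have hcg : Continuous fun p : ℝ × ℝ => g p.1 p.2 := hg.continuous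
  refine (intervalIntegral.hasDerivAt_integral_of_dominated_loc_of_deriv_le
    (F := fun s x => g x s) (F' := fun s x => deriv (fun τ => g x τ) s)
    (bound := fun _ => M) (s := Metric.ball s₀ 1) (Metric.ball_mem_nhds s₀ one_pos) ?_ ?_ ?_ ?_ ?_ ?_).2
  · filter_upwards with s
    exact (hcg.comp (continuous_id.prodMk continuous_const)).aestronglyMeasurable
  · exact ((hcg.comp (continuous_id.prodMk continuous_const)).intervalIntegrable c d)
  · exact ((aux_cont_deriv_snd hg).comp
      (continuous_id.prodMk continuous_const)).aestronglyMeasurable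
  · filter_upwards with x hx s hs
    have : (x, s) ∈ (uIcc c d) ×ˢ (Icc (s₀ - 1) (s₀ + 1)) := by
      constructor
      · exact uIoc_subset_uIcc hx
      · have := mem_ball_iff_norm.1 hs
        have : |s - s₀| < 1 := by simpa [Real.norm_eq_abs] using this
        constructor <;> [linarith [neg_le_of_abs_le this.le, abs_le.1 this.le |>.1];
          linarith [abs_le.1 this.le |>.2]]
    simpa [Real.norm_eq_abs] using hM (x, s) this
  · exact intervalIntegrable_const
  · filter_upwards with x hx s hs
    exact (aux_deriv_snd_eq hg x s) ▸ aux_hasDerivAt_snd hg x s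

end


noncomputable section

lemma aux_abs_sub_uIcc {a b x : ℝ} (hx : x ∈ uIcc a b) : |x - a| ≤ |b - a| := by
  rcases mem_uIcc.1 hx with ⟨h1, h2⟩ | ⟨h1, h2⟩ <;> rw [abs_sub_le_iff] <;>
    constructor <;>
    nlinarith [le_abs_self (b - a), neg_le_abs (b - a), abs_nonneg (b - a)]

/-- Moving upper endpoint, integrand also depending on the parameter. -/
lemma aux_moving_endpoint {g : ℝ → ℝ → ℝ} (hcg : Continuous fun p : ℝ × ℝ => g p.1 p.2)
    {b : ℝ → ℝ} {b' t₀ : ℝ} (hb : HasDerivAt b b' t₀) :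
    HasDerivAt (fun t => ∫ x in (b t₀)..(b t), g x t) (g (b t₀) t₀ * b') t₀ := by
  have hgx : ∀ t : ℝ, Continuous fun x => g x t := fun t =>
    hcg.comp (continuous_id.prodMk continuous_const)
  rw [hasDerivAt_iff_isLittleO]
  have key : ∀ t : ℝ,
      (∫ x in (b t₀)..(b t), g x t) - (∫ x in (b t₀)..(b t₀), g x t₀)
        - (t - t₀) • (g (b t₀) t₀ * b')
      = (∫ x in (b t₀)..(b t), (g x t - g (b t₀) t₀))
        + (g (b t₀) t₀ * (b t - b t₀) - (t - t₀) * (g (b t₀) t₀ * b')) := by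
    intro t
    rw [intervalIntegral.integral_same,
      intervalIntegral.integral_sub ((hgx t).intervalIntegrable _ _)
        (intervalIntegrable_const), intervalIntegral.integral_const]
    simp [smul_eq_mul]
    ring
  have e2 : (fun t => g (b t₀) t₀ * (b t - b t₀) - (t - t₀) * (g (b t₀) t₀ * b'))
      =o[nhds t₀] fun t => t - t₀ := by
    have hb' := hasDerivAt_iff_isLittleO.1 hb
    have := hb'.const_mul_left (g (b t₀) t₀)
    refine this.congr_left fun t => ?_
    simp [smul_eq_mul]; ring
  have e1 : (fun t => ∫ x in (b t₀)..(b t), (g x t - g (b t₀) t₀))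
      =o[nhds t₀] fun t => t - t₀ := by
    rw [isLittleO_iff]
    intro c hc
    obtain ⟨C, hC0, hCb⟩ := hb.isBigO_sub.exists_pos
    have hCb' : ∀ᶠ t in nhds t₀, |b t - b t₀| ≤ C * |t - t₀| := by
      have := hCb.bound
      filter_upwards [this] with t ht
      simpa [Real.norm_eq_abs] using ht
    have hcC : 0 < c / C := div_pos hc hC0
    obtain ⟨η, hη0, hη⟩ := Metric.continuousAt_iff.1 hcg.continuousAt (c / C) hcC
    have hbc : ∀ᶠ t in nhds t₀, |b t - b t₀| < η / 2 := by
      have : Tendsto b (nhds t₀) (nhds (b t₀)) := hb.continuousAt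
      have := Metric.tendsto_nhds.1 this (η / 2) (by linarith)
      filter_upwards [this] with t ht
      simpa [Real.dist_eq] using ht
    have htc : ∀ᶠ t in nhds t₀, |t - t₀| < η / 2 := by
      have := Metric.tendsto_nhds.1 (tendsto_id (x := nhds t₀)) (η / 2) (by linarith)
      filter_upwards [this] with t ht
      simpa [Real.dist_eq] using ht
    filter_upwards [hCb', hbc, htc] with t h1 h2 h3
    have hbound : ∀ x ∈ Set.uIoc (b t₀) (b t), ‖g x t - g (b t₀) t₀‖ ≤ c / C := by
      intro x hx
      have hx' : |x - b t₀| ≤ |b t - b t₀| := aux_abs_sub_uIcc (uIoc_subset_uIcc hx)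
      have hd : dist ((x, t) : ℝ × ℝ) (b t₀, t₀) < η := by
        rw [Prod.dist_eq]
        simp only [Real.dist_eq]
        exact max_lt (by linarith [hx'.trans_lt h2]) (by linarith)
      have := hη hd
      simp only [Real.dist_eq] at this
      simpa [Real.norm_eq_abs] using (le_of_lt this)
    calc ‖∫ x in (b t₀)..(b t), (g x t - g (b t₀) t₀)‖
        ≤ (c / C) * |b t - b t₀| :=
          intervalIntegral.norm_integral_le_of_norm_le_const hbound
      _ ≤ (c / C) * (C * |t - t₀|) := by
          exact mul_le_mul_of_nonneg_left h1 (le_of_lt hcC)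
      _ = c * |t - t₀| := by field_simp
      _ = c * ‖t - t₀‖ := by rw [Real.norm_eq_abs]
  have := e1.add e2
  refine this.congr_left fun t => (key t).symm

/-- Full Leibniz rule: moving endpoints and parameter inside. -/
lemma aux_leibniz {g : ℝ → ℝ → ℝ} (hg : ContDiff ℝ 1 fun p : ℝ × ℝ => g p.1 p.2)
    {a b : ℝ → ℝ} {a' b' t₀ : ℝ} (ha : HasDerivAt a a' t₀) (hb : HasDerivAt b b' t₀) :
    HasDerivAt (fun t => ∫ x in (a t)..(b t), g x t)
      (g (b t₀) t₀ * b' - g (a t₀) t₀ * a'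
        + ∫ x in (a t₀)..(b t₀), deriv (fun τ => g x τ) t₀) t₀ := by
  have hgx : ∀ t : ℝ, Continuous fun x => g x t := fun t =>
    hg.continuous.comp (continuous_id.prodMk continuous_const)
  have h1 := aux_moving_endpoint hg.continuous hb
  have h2 := aux_moving_endpoint hg.continuous ha
  have h3 := aux_param_deriv hg (a t₀) (b t₀) t₀
  have hsplit : ∀ t : ℝ, (∫ x in (a t)..(b t), g x t)
      = (∫ x in (b t₀)..(b t), g x t) - (∫ x in (a t₀)..(a t), g x t)
        + (∫ x in (a t₀)..(b t₀), g x t) := by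
    intro t
    have i1 : IntervalIntegrable (fun x => g x t) volume (a t) (a t₀) :=
      (hgx t).intervalIntegrable _ _
    have i2 : IntervalIntegrable (fun x => g x t) volume (a t₀) (b t₀) :=
      (hgx t).intervalIntegrable _ _
    have i3 : IntervalIntegrable (fun x => g x t) volume (b t₀) (b t) :=
      (hgx t).intervalIntegrable _ _
    have e1 := intervalIntegral.integral_add_adjacent_intervals i1 i2
    have e2 := intervalIntegral.integral_add_adjacent_intervals (i1.trans i2) i3
    have e3 : (∫ x in (a t₀)..(a t), g x t) = -∫ x in (a t)..(a t₀), g x t :=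
      intervalIntegral.integral_symm (a t) (a t₀)
    linarith [e1, e2, e3]
  have := (h1.sub h2).add h3
  refine HasDerivAt.congr_of_eventuallyEq ?_ (Filter.Eventually.of_forall hsplit)
  convert this using 1
  rfl

lemma aux_key_alg {Wv Fv E A K₀ D L : ℝ}
    (hW1 : |Wv| ≤ D * Fv + 2 * K₀ * (Fv / (2*(E/A)) + (E/A) * L / 2))
    (hE : 0 < E) (hA : 0 < A) (hK₀ : 0 ≤ K₀) (hD : 0 < D)
    (hF : 0 ≤ Fv) (hFE : Fv ≤ E^2) (hL : L ≤ A^2) :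
    |Wv| ≤ (D * E + A * K₀) * (2 * E) := by
  have e1 : Fv / (2*(E/A)) = A * Fv / (2*E) := by
    field_simp
  have e2 : (E/A) * L / 2 = E * L / (2*A) := by
    rw [div_mul_eq_mul_div, div_div, mul_comm A 2]
  have d1 : A * Fv / (2*E) ≤ A * E / 2 := by
    rw [div_le_div_iff₀ (by positivity) (by norm_num)]
    nlinarith
  have d2 : E * L / (2*A) ≤ E * A / 2 := by
    rw [div_le_div_iff₀ (by positivity) (by norm_num)]
    nlinarith
  have h5 : 2 * K₀ * (Fv / (2*(E/A)) + (E/A) * L / 2) ≤ 2 * K₀ * (A * E / 2 + E * A / 2) := by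
    refine mul_le_mul_of_nonneg_left ?_ (by positivity)
    rw [e1, e2]; exact add_le_add d1 d2
  have h6 : D * Fv ≤ D * E^2 := mul_le_mul_of_nonneg_left hFE hD.le
  nlinarith [hW1, h5, h6, mul_nonneg hD.le (sq_nonneg E), mul_nonneg hA.le (mul_nonneg hK₀ hE.le)]
/-- the Grönwall-type L² estimate on intervals whose endpoints move along
the deformed characteristics `dxᵢ/dt = -h''(u(xᵢ(t),t,ε))`, for solutions of the linear
equation `∂_tσ = h''(u)∂_xσ + ε²G + ε^{2N+2}R` with zero initial data. -/
theorem gronwall_estimate_on_deformed_characteristics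
    (h : ℝ → ℝ) (hh : ContDiff ℝ (⊤ : ℕ∞) h)
    (N : ℕ) (hN : 1 ≤ N) (T δ : ℝ) (hT : 0 < T) (hδ : 0 < δ)
    (u σ G R : ℝ → ℝ → ℝ → ℝ)
    (x₁ x₂ : ℝ → ℝ → ℝ)
    (hu : ∀ ε : ℝ, ContDiff ℝ 1 fun z : ℝ × ℝ => u z.1 z.2 ε)
    (hσ : ∀ ε : ℝ, ContDiff ℝ 1 fun z : ℝ × ℝ => σ z.1 z.2 ε)
    (hG : ∀ ε : ℝ, Continuous fun z : ℝ × ℝ => G z.1 z.2 ε)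
    (hR : ∀ ε : ℝ, Continuous fun z : ℝ × ℝ => R z.1 z.2 ε)
    (Pset : Set (ℝ × ℝ × ℝ))
    (hPset : Pset = {z : ℝ × ℝ × ℝ | z.2.1 ∈ Set.Icc 0 T ∧ z.2.2^2 ≤ δ^2
      ∧ z.1 ∈ Set.Icc (x₁ z.2.1 z.2.2) (x₂ z.2.1 z.2.2)})
    (hode₁ : ∀ ε : ℝ, ε^2 ≤ δ^2 → ∀ t ∈ Set.Icc (0:ℝ) T,
      HasDerivAt (fun τ => x₁ τ ε) (-(iteratedDeriv 2 h (u (x₁ t ε) t ε))) t)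
    (hode₂ : ∀ ε : ℝ, ε^2 ≤ δ^2 → ∀ t ∈ Set.Icc (0:ℝ) T,
      HasDerivAt (fun τ => x₂ τ ε) (-(iteratedDeriv 2 h (u (x₂ t ε) t ε))) t)
    (hlt0 : ∀ ε : ℝ, ε^2 ≤ δ^2 → x₁ 0 ε < x₂ 0 ε)
    (hlt : ∀ ε : ℝ, ε^2 ≤ δ^2 → ∀ t ∈ Set.Icc (0:ℝ) T, x₁ t ε < x₂ t ε)
    (heq : ∀ z ∈ Pset, deriv (fun τ => σ z.1 τ z.2.2) z.2.1
      = iteratedDeriv 2 h (u z.1 z.2.1 z.2.2) * deriv (fun y => σ y z.2.1 z.2.2) z.1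
        + z.2.2^2 * G z.1 z.2.1 z.2.2 + z.2.2^(2*N+2) * R z.1 z.2.1 z.2.2)
    (hinit : ∀ x ε : ℝ, σ x 0 ε = 0)
    (A B C D : ℝ) (hD0 : 0 < D)
    (hA : ∀ z ∈ Pset, ∀ w ∈ Pset, Real.sqrt |z.1 - w.1| ≤ A)
    (hB : ∀ z ∈ Pset, |G z.1 z.2.1 z.2.2| ≤ B)
    (hC : ∀ z ∈ Pset, |R z.1 z.2.1 z.2.2| ≤ C)
    (hD : ∀ z ∈ Pset, |iteratedDeriv 3 h (u z.1 z.2.1 z.2.2)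
      * deriv (fun y => u y z.2.1 z.2.2) z.1| ≤ D) :
    ∀ t ∈ Set.Icc (0:ℝ) T, ∀ ε : ℝ, ε^2 ≤ δ^2 →
      Real.sqrt (∫ x in (x₁ t ε)..(x₂ t ε), (σ x t ε)^2)
        ≤ ε^2 * A * (B + ε^(2*N) * C) * (Real.exp (D * T) - 1) / D := by

  intro t ht ε hε
  -- derivative/continuity packages
  have hσ2 : ContDiff ℝ 1 fun p : ℝ × ℝ => σ p.1 p.2 ε := hσ ε
  have hσflip : ContDiff ℝ 1 fun p : ℝ × ℝ => σ p.2 p.1 ε :=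
    hσ2.comp (contDiff_snd.prodMk contDiff_fst)
  have hu2 : ContDiff ℝ 1 fun p : ℝ × ℝ => u p.1 p.2 ε := hu ε
  have huflip : ContDiff ℝ 1 fun p : ℝ × ℝ => u p.2 p.1 ε :=
    hu2.comp (contDiff_snd.prodMk contDiff_fst)
  have hg2 : ContDiff ℝ 1 fun p : ℝ × ℝ => (σ p.1 p.2 ε)^2 := hσ2.pow 2
  have hσx : ∀ τ x : ℝ, HasDerivAt (fun y => σ y τ ε) (deriv (fun y => σ y τ ε) x) x :=
    fun τ x => (aux_deriv_snd_eq (g := fun a b => σ b a ε) hσflip τ x) ▸ aux_hasDerivAt_snd (g := fun a b => σ b a ε) hσflip τ x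
  have hux : ∀ τ x : ℝ, HasDerivAt (fun y => u y τ ε) (deriv (fun y => u y τ ε) x) x :=
    fun τ x => (aux_deriv_snd_eq (g := fun a b => u b a ε) huflip τ x) ▸ aux_hasDerivAt_snd (g := fun a b => u b a ε) huflip τ x
  have hσxc : Continuous fun p : ℝ × ℝ => deriv (fun y => σ y p.1 ε) p.2 :=
    aux_cont_deriv_snd (g := fun a b => σ b a ε) hσflip
  have huxc : Continuous fun p : ℝ × ℝ => deriv (fun y => u y p.1 ε) p.2 :=
    aux_cont_deriv_snd (g := fun a b => u b a ε) huflip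
  have h2C : ContDiff ℝ (⊤ : ℕ∞) (iteratedDeriv 2 h) := by
    rw [iteratedDeriv_eq_iterate]; exact ContDiff.iterate_deriv 2 hh
  have h3cont : Continuous (iteratedDeriv 3 h) := by
    rw [iteratedDeriv_eq_iterate]; exact (ContDiff.iterate_deriv 3 hh).continuous
  have hd2 : ∀ z : ℝ, HasDerivAt (iteratedDeriv 2 h) (iteratedDeriv 3 h z) z := by
    intro z
    have h1 := (h2C.differentiable (by simp) z).hasDerivAt
    have h2 : iteratedDeriv 3 h z = deriv (iteratedDeriv 2 h) z := by
      rw [show (3 : ℕ) = 2 + 1 from rfl, iteratedDeriv_succ]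
    rwa [← h2] at h1
  -- membership and basic positivity facts
  have hmem : ∀ τ ∈ Icc (0:ℝ) T, ∀ x ∈ Icc (x₁ τ ε) (x₂ τ ε),
      ((x, τ, ε) : ℝ × ℝ × ℝ) ∈ Pset := by
    intro τ hτ x hx; rw [hPset]; exact ⟨hτ, hε, hx⟩
  have hab : ∀ τ ∈ Icc (0:ℝ) T, x₁ τ ε ≤ x₂ τ ε := fun τ hτ => (hlt ε hε τ hτ).le
  have h0T : (0:ℝ) ∈ Icc (0:ℝ) T := ⟨le_rfl, hT.le⟩
  have hδ0 : (0:ℝ)^2 ≤ δ^2 := by nlinarith [sq_nonneg δ]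
  have hApos : 0 < A := by
    have m1 : ((x₁ 0 0, 0, 0) : ℝ × ℝ × ℝ) ∈ Pset := by
      rw [hPset]; exact ⟨h0T, hδ0, le_rfl, (hlt0 0 hδ0).le⟩
    have m2 : ((x₂ 0 0, 0, 0) : ℝ × ℝ × ℝ) ∈ Pset := by
      rw [hPset]; exact ⟨h0T, hδ0, (hlt0 0 hδ0).le, le_rfl⟩
    have h1 := hA _ m2 _ m1
    dsimp only at h1
    have hpos : 0 < |x₂ 0 0 - x₁ 0 0| := abs_pos.2 (sub_ne_zero.2 (hlt0 0 hδ0).ne')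
    exact lt_of_lt_of_le (Real.sqrt_pos.2 hpos) h1
  have hzmem : ((x₁ 0 ε, 0, ε) : ℝ × ℝ × ℝ) ∈ Pset :=
    hmem 0 h0T _ ⟨le_rfl, hab 0 h0T⟩
  have hB0 : 0 ≤ B := le_trans (abs_nonneg _) (hB _ hzmem)
  have hC0 : 0 ≤ C := le_trans (abs_nonneg _) (hC _ hzmem)
  have heN : (0:ℝ) ≤ ε^(2*N) := by rw [pow_mul]; exact pow_nonneg (sq_nonneg ε) N
  have hK₀ : (0:ℝ) ≤ ε^2 * (B + ε^(2*N) * C) := by positivity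
  have hK : (0:ℝ) ≤ A * (ε^2 * (B + ε^(2*N) * C)) := mul_nonneg hApos.le hK₀
  -- length bound
  have hlen : ∀ τ ∈ Icc (0:ℝ) T, x₂ τ ε - x₁ τ ε ≤ A^2 := by
    intro τ hτ
    have habτ := hab τ hτ
    have m2 := hmem τ hτ _ ⟨habτ, le_rfl⟩
    have m1 := hmem τ hτ _ ⟨le_rfl, habτ⟩
    have h1 := hA _ m2 _ m1
    dsimp only at h1
    have h2 : |x₂ τ ε - x₁ τ ε| ≤ A^2 := by
      nlinarith [Real.sq_sqrt (abs_nonneg (x₂ τ ε - x₁ τ ε)),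
        Real.sqrt_nonneg (|x₂ τ ε - x₁ τ ε|)]
    linarith [le_abs_self (x₂ τ ε - x₁ τ ε)]
  -- continuity in x at fixed time
  have contσ : ∀ τ : ℝ, Continuous fun x => σ x τ ε :=
    fun τ => hσ2.continuous.comp (continuous_id.prodMk continuous_const)
  have contu : ∀ τ : ℝ, Continuous fun x => u x τ ε :=
    fun τ => hu2.continuous.comp (continuous_id.prodMk continuous_const)
  have contG : ∀ τ : ℝ, Continuous fun x => G x τ ε :=
    fun τ => (hG ε).comp (continuous_id.prodMk continuous_const)
  have contR : ∀ τ : ℝ, Continuous fun x => R x τ ε :=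
    fun τ => (hR ε).comp (continuous_id.prodMk continuous_const)
  have contσx : ∀ τ : ℝ, Continuous fun x => deriv (fun y => σ y τ ε) x :=
    fun τ => hσxc.comp (continuous_const.prodMk continuous_id)
  have contux : ∀ τ : ℝ, Continuous fun x => deriv (fun y => u y τ ε) x :=
    fun τ => huxc.comp (continuous_const.prodMk continuous_id)
  set F : ℝ → ℝ := fun τ => ∫ x in (x₁ τ ε)..(x₂ τ ε), (σ x τ ε)^2 with hF_def
  set W : ℝ → ℝ := fun τ =>
    -(∫ x in (x₁ τ ε)..(x₂ τ ε),
        (iteratedDeriv 3 h (u x τ ε) * deriv (fun y => u y τ ε) x) * (σ x τ ε)^2)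
      + ∫ x in (x₁ τ ε)..(x₂ τ ε),
          2 * σ x τ ε * (ε^2 * G x τ ε + ε^(2*N+2) * R x τ ε) with hW_def
  -- the key derivative computation
  have hFd : ∀ τ ∈ Icc (0:ℝ) T, HasDerivAt F (W τ) τ := by
    intro τ hτ
    have habτ := hab τ hτ
    have hlb := aux_leibniz (g := fun x s => (σ x s ε)^2) hg2
      (a := fun τ' => x₁ τ' ε) (b := fun τ' => x₂ τ' ε)
      (hode₁ ε hε τ hτ) (hode₂ ε hε τ hτ)
    -- rewrite the integrand of the time-derivative integral
    have hEq : EqOn (fun x => deriv (fun s => (σ x s ε)^2) τ)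
        (fun x => iteratedDeriv 2 h (u x τ ε) * (2 * σ x τ ε * deriv (fun y => σ y τ ε) x)
          + 2 * σ x τ ε * (ε^2 * G x τ ε + ε^(2*N+2) * R x τ ε))
        (uIcc (x₁ τ ε) (x₂ τ ε)) := by
      intro x hx
      have hx' : x ∈ Icc (x₁ τ ε) (x₂ τ ε) := by rwa [uIcc_of_le habτ] at hx
      have hmemx := hmem τ hτ x hx'
      have hσt : HasDerivAt (fun s => σ x s ε) (deriv (fun s => σ x s ε) τ) τ :=
        (aux_deriv_snd_eq (g := fun a b => σ a b ε) hσ2 x τ) ▸ aux_hasDerivAt_snd (g := fun a b => σ a b ε) hσ2 x τ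
      have hsq : deriv (fun s => (σ x s ε)^2) τ = 2 * σ x τ ε * deriv (fun s => σ x s ε) τ := by
        have h1 := (hσt.pow 2).deriv
        rw [show (fun s => (σ x s ε)^2) = (fun s => σ x s ε)^2 from rfl]
        simpa using h1
      have h5 := heq _ hmemx
      dsimp only at h5
      simp only
      rw [hsq, h5]; ring
    have int1 : IntervalIntegrable
        (fun x => iteratedDeriv 2 h (u x τ ε) * (2 * σ x τ ε * deriv (fun y => σ y τ ε) x))
        volume (x₁ τ ε) (x₂ τ ε) :=
      ((h2C.continuous.comp (contu τ)).mul
        ((continuous_const.mul (contσ τ)).mul (contσx τ))).intervalIntegrable _ _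
    have int2 : IntervalIntegrable
        (fun x => 2 * σ x τ ε * (ε^2 * G x τ ε + ε^(2*N+2) * R x τ ε))
        volume (x₁ τ ε) (x₂ τ ε) :=
      ((continuous_const.mul (contσ τ)).mul
        ((continuous_const.mul (contG τ)).add (continuous_const.mul (contR τ)))).intervalIntegrable _ _
    have hiEq : (∫ x in (x₁ τ ε)..(x₂ τ ε), deriv (fun s => (σ x s ε)^2) τ)
        = (∫ x in (x₁ τ ε)..(x₂ τ ε),
            iteratedDeriv 2 h (u x τ ε) * (2 * σ x τ ε * deriv (fun y => σ y τ ε) x))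
          + ∫ x in (x₁ τ ε)..(x₂ τ ε),
              2 * σ x τ ε * (ε^2 * G x τ ε + ε^(2*N+2) * R x τ ε) := by
      rw [intervalIntegral.integral_congr hEq, intervalIntegral.integral_add int1 int2]
    have ibp := intervalIntegral.integral_mul_deriv_eq_deriv_mul
      (u := fun x => iteratedDeriv 2 h (u x τ ε))
      (u' := fun x => iteratedDeriv 3 h (u x τ ε) * deriv (fun y => u y τ ε) x)
      (v := fun x => (σ x τ ε)^2)
      (v' := fun x => 2 * σ x τ ε * deriv (fun y => σ y τ ε) x)
      (a := x₁ τ ε) (b := x₂ τ ε)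
      (fun x _ => by exact (hd2 (u x τ ε)).comp x (hux τ x))
      (fun x _ => by
        have h1 := (hσx τ x).pow 2
        exact h1.congr_deriv (by norm_num))
      (((h3cont.comp (contu τ)).mul (contux τ)).intervalIntegrable _ _)
      (((continuous_const.mul (contσ τ)).mul (contσx τ)).intervalIntegrable _ _)
    have hval : W τ
        = (σ (x₂ τ ε) τ ε)^2 * (-(iteratedDeriv 2 h (u (x₂ τ ε) τ ε)))
          - (σ (x₁ τ ε) τ ε)^2 * (-(iteratedDeriv 2 h (u (x₁ τ ε) τ ε)))
          + ∫ x in (x₁ τ ε)..(x₂ τ ε), deriv (fun s => (σ x s ε)^2) τ := by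
      rw [hW_def, hiEq, ibp]; ring
    rw [hF_def, hval]
    exact hlb
  -- nonnegativity and initial value of F
  have hF0 : ∀ τ ∈ Icc (0:ℝ) T, 0 ≤ F τ := fun τ hτ =>
    intervalIntegral.integral_nonneg (hab τ hτ) (fun x _ => sq_nonneg _)
  have hFz : F 0 = 0 := by
    rw [hF_def]; simp [hinit]
  -- bound on the derivative W
  have hWb : ∀ τ ∈ Icc (0:ℝ) T, ∀ μ : ℝ, 0 < μ →
      |W τ| ≤ D * F τ + 2 * (ε^2 * (B + ε^(2*N) * C))
        * (F τ / (2*μ) + μ * (x₂ τ ε - x₁ τ ε) / 2) := by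
    intro τ hτ μ hμ
    have habτ := hab τ hτ
    have p1 : |∫ x in (x₁ τ ε)..(x₂ τ ε),
        (iteratedDeriv 3 h (u x τ ε) * deriv (fun y => u y τ ε) x) * (σ x τ ε)^2|
        ≤ D * F τ := by
      have int_abs : IntervalIntegrable (fun x =>
          |(iteratedDeriv 3 h (u x τ ε) * deriv (fun y => u y τ ε) x) * (σ x τ ε)^2|)
          volume (x₁ τ ε) (x₂ τ ε) :=
        ((((h3cont.comp (contu τ)).mul (contux τ)).mul
          ((contσ τ).pow 2)).abs).intervalIntegrable _ _
      have intD : IntervalIntegrable (fun x => D * (σ x τ ε)^2) volume (x₁ τ ε) (x₂ τ ε) :=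
        (continuous_const.mul ((contσ τ).pow 2)).intervalIntegrable _ _
      refine le_trans (intervalIntegral.abs_integral_le_integral_abs habτ)
        (le_trans (intervalIntegral.integral_mono_on habτ int_abs intD ?_) ?_)
      · intro x hx
        have hDx := hD _ (hmem τ hτ x hx)
        dsimp only at hDx
        rw [abs_mul, abs_of_nonneg (sq_nonneg (σ x τ ε))]
        exact mul_le_mul_of_nonneg_right hDx (sq_nonneg _)
      · rw [intervalIntegral.integral_const_mul, hF_def]
    have p2 : |∫ x in (x₁ τ ε)..(x₂ τ ε), 2 * σ x τ ε * (ε^2 * G x τ ε + ε^(2*N+2) * R x τ ε)|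
        ≤ 2 * (ε^2 * (B + ε^(2*N) * C)) * ∫ x in (x₁ τ ε)..(x₂ τ ε), |σ x τ ε| := by
      have intq : IntervalIntegrable (fun x =>
          |2 * σ x τ ε * (ε^2 * G x τ ε + ε^(2*N+2) * R x τ ε)|) volume (x₁ τ ε) (x₂ τ ε) :=
        (((continuous_const.mul (contσ τ)).mul
          ((continuous_const.mul (contG τ)).add
            (continuous_const.mul (contR τ)))).abs).intervalIntegrable _ _
      have intc : IntervalIntegrable (fun x => 2 * (ε^2 * (B + ε^(2*N) * C)) * |σ x τ ε|)
          volume (x₁ τ ε) (x₂ τ ε) :=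
        (continuous_const.mul ((contσ τ).abs)).intervalIntegrable _ _
      refine le_trans (intervalIntegral.abs_integral_le_integral_abs habτ)
        (le_trans (intervalIntegral.integral_mono_on habτ intq intc ?_) ?_)
      · intro x hx
        have hGx := hB _ (hmem τ hτ x hx)
        have hRx := hC _ (hmem τ hτ x hx)
        dsimp only at hGx hRx
        have e2 : |ε^2 * G x τ ε + ε^(2*N+2) * R x τ ε| ≤ ε^2 * (B + ε^(2*N) * C) := by
          have h3 : ε^(2*N+2) = ε^2 * ε^(2*N) := by ring
          calc |ε^2 * G x τ ε + ε^(2*N+2) * R x τ ε|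
              ≤ |ε^2 * G x τ ε| + |ε^(2*N+2) * R x τ ε| := abs_add_le _ _
            _ = ε^2 * |G x τ ε| + ε^2 * ε^(2*N) * |R x τ ε| := by
                rw [abs_mul, abs_mul, abs_of_nonneg (sq_nonneg ε), h3,
                  abs_of_nonneg (mul_nonneg (sq_nonneg ε) heN)]
            _ ≤ ε^2 * B + ε^2 * ε^(2*N) * C := by
                exact add_le_add (mul_le_mul_of_nonneg_left hGx (sq_nonneg ε))
                  (mul_le_mul_of_nonneg_left hRx (mul_nonneg (sq_nonneg ε) heN))
            _ = ε^2 * (B + ε^(2*N) * C) := by ring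
        calc |2 * σ x τ ε * (ε^2 * G x τ ε + ε^(2*N+2) * R x τ ε)|
            = 2 * |σ x τ ε| * |ε^2 * G x τ ε + ε^(2*N+2) * R x τ ε| := by
              rw [abs_mul, abs_mul]; norm_num
          _ ≤ 2 * |σ x τ ε| * (ε^2 * (B + ε^(2*N) * C)) :=
              mul_le_mul_of_nonneg_left e2 (by positivity)
          _ = 2 * (ε^2 * (B + ε^(2*N) * C)) * |σ x τ ε| := by ring
      · rw [intervalIntegral.integral_const_mul]
    have hIb : (∫ x in (x₁ τ ε)..(x₂ τ ε), |σ x τ ε|)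
        ≤ F τ / (2*μ) + μ * (x₂ τ ε - x₁ τ ε) / 2 := by
      have intabs : IntervalIntegrable (fun x => |σ x τ ε|) volume (x₁ τ ε) (x₂ τ ε) :=
        ((contσ τ).abs).intervalIntegrable _ _
      have intd : IntervalIntegrable (fun x => (σ x τ ε)^2/(2*μ)) volume (x₁ τ ε) (x₂ τ ε) :=
        (((contσ τ).pow 2).div_const _).intervalIntegrable _ _
      have intrhs : IntervalIntegrable (fun x => (σ x τ ε)^2/(2*μ) + μ/2)
          volume (x₁ τ ε) (x₂ τ ε) :=
        (((((contσ τ).pow 2).div_const _)).add continuous_const).intervalIntegrable _ _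
      have h1 : ∀ x ∈ Icc (x₁ τ ε) (x₂ τ ε), |σ x τ ε| ≤ (σ x τ ε)^2/(2*μ) + μ/2 := by
        intro x _
        rw [show (σ x τ ε)^2/(2*μ) + μ/2 = ((σ x τ ε)^2 + μ^2)/(2*μ) by field_simp,
          le_div_iff₀ (by positivity)]
        nlinarith [sq_nonneg (|σ x τ ε| - μ), sq_abs (σ x τ ε)]
      refine le_trans (intervalIntegral.integral_mono_on habτ intabs intrhs h1) ?_
      rw [intervalIntegral.integral_add intd intervalIntegrable_const,
        intervalIntegral.integral_div, intervalIntegral.integral_const]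
      exact le_of_eq (by simp only [hF_def, smul_eq_mul]; ring)
    have hWτ : W τ = -(∫ x in (x₁ τ ε)..(x₂ τ ε),
          (iteratedDeriv 3 h (u x τ ε) * deriv (fun y => u y τ ε) x) * (σ x τ ε)^2)
        + ∫ x in (x₁ τ ε)..(x₂ τ ε),
            2 * σ x τ ε * (ε^2 * G x τ ε + ε^(2*N+2) * R x τ ε) := by
      rw [hW_def]
    rw [hWτ]
    refine le_trans (le_trans (abs_add_le _ _) (le_of_eq (by rw [abs_neg]))) ?_
    have h4 := mul_le_mul_of_nonneg_left hIb
      (show (0:ℝ) ≤ 2 * (ε^2 * (B + ε^(2*N) * C)) by positivity)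
    linarith [p1, p2, h4]
  -- Gronwall with regularized square root
  have main : ∀ c : ℝ, 0 < c → Real.sqrt (F t) ≤
      c * Real.exp (D*T) + (A * (ε^2 * (B + ε^(2*N) * C))) / D * (Real.exp (D*T) - 1) := by
    intro c hc
    have hpos : ∀ τ ∈ Icc (0:ℝ) T, 0 < F τ + c^2 := fun τ hτ => by nlinarith [hF0 τ hτ]
    have hfd : ∀ τ ∈ Icc (0:ℝ) T,
        HasDerivAt (fun s => Real.sqrt (F s + c^2)) (W τ / (2 * Real.sqrt (F τ + c^2))) τ := by
      intro τ hτ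
      have h1 := (Real.hasDerivAt_sqrt (ne_of_gt (hpos τ hτ))).comp τ ((hFd τ hτ).add_const (c^2))
      exact h1.congr_deriv (by ring)
    have hcont : ContinuousOn (fun s => Real.sqrt (F s + c^2)) (Icc 0 T) :=
      fun τ hτ => ((hfd τ hτ).continuousAt).continuousWithinAt
    have hf0 : ‖Real.sqrt (F 0 + c^2)‖ ≤ c := by
      rw [Real.norm_eq_abs, abs_of_nonneg (Real.sqrt_nonneg _), hFz, zero_add,
        Real.sqrt_sq hc.le]
    have hbd : ∀ τ ∈ Ico (0:ℝ) T, ‖W τ / (2 * Real.sqrt (F τ + c^2))‖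
        ≤ D * ‖Real.sqrt (F τ + c^2)‖ + A * (ε^2 * (B + ε^(2*N) * C)) := by
      intro τ hτ'
      have hτ : τ ∈ Icc (0:ℝ) T := ⟨hτ'.1, hτ'.2.le⟩
      have hE : 0 < Real.sqrt (F τ + c^2) := Real.sqrt_pos.2 (hpos τ hτ)
      have hEsq : Real.sqrt (F τ + c^2)^2 = F τ + c^2 := Real.sq_sqrt (hpos τ hτ).le
      have hμ : 0 < Real.sqrt (F τ + c^2) / A := div_pos hE hApos
      have hW1 := hWb τ hτ _ hμ
      have hlenτ := hlen τ hτ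
      have hFτ := hF0 τ hτ
      have hFE : F τ ≤ (Real.sqrt (F τ + c^2))^2 := by
        rw [hEsq]; nlinarith [sq_nonneg c]
      have key : |W τ| ≤ (D * Real.sqrt (F τ + c^2) + A * (ε^2 * (B + ε^(2*N) * C)))
          * (2 * Real.sqrt (F τ + c^2)) :=
        aux_key_alg hW1 hE hApos hK₀ hD0 hFτ hFE hlenτ
      rw [Real.norm_eq_abs, Real.norm_eq_abs, abs_of_nonneg (Real.sqrt_nonneg (F τ + c^2)),
        abs_div, abs_of_nonneg (by positivity : (0:ℝ) ≤ 2 * Real.sqrt (F τ + c^2)),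
        div_le_iff₀ (by positivity)]
      exact key
    have hgb := norm_le_gronwallBound_of_norm_deriv_right_le
      (f' := fun τ => W τ / (2 * Real.sqrt (F τ + c^2))) hcont
      (fun τ hτ => (hfd τ ⟨hτ.1, hτ.2.le⟩).hasDerivWithinAt) hf0 hbd t ht
    simp only [gronwallBound_of_K_ne_0 (ne_of_gt hD0), sub_zero, Real.norm_eq_abs,
      abs_of_nonneg (Real.sqrt_nonneg _)] at hgb
    have h6 : Real.sqrt (F t) ≤ Real.sqrt (F t + c^2) :=
      Real.sqrt_le_sqrt (le_add_of_nonneg_right (sq_nonneg c))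
    have h7 : Real.exp (D * t) ≤ Real.exp (D * T) :=
      Real.exp_le_exp.2 (mul_le_mul_of_nonneg_left ht.2 hD0.le)
    have h8 : (0:ℝ) ≤ A * (ε^2 * (B + ε^(2*N) * C)) / D := by positivity
    have h9 : c * Real.exp (D * t) ≤ c * Real.exp (D * T) :=
      mul_le_mul_of_nonneg_left h7 hc.le
    have h10 : A * (ε^2 * (B + ε^(2*N) * C)) / D * (Real.exp (D * t) - 1)
        ≤ A * (ε^2 * (B + ε^(2*N) * C)) / D * (Real.exp (D * T) - 1) :=
      mul_le_mul_of_nonneg_left (by linarith) h8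
    linarith [hgb, h6, h9, h10]
  -- let c → 0
  have hgoal : Real.sqrt (F t)
      ≤ A * (ε^2 * (B + ε^(2*N) * C)) / D * (Real.exp (D*T) - 1) := by
    refine le_of_forall_pos_le_add fun e he => ?_
    have h1 := main (e / Real.exp (D*T)) (div_pos he (Real.exp_pos _))
    have h2 : e / Real.exp (D*T) * Real.exp (D*T) = e :=
      div_mul_cancel₀ e (ne_of_gt (Real.exp_pos _))
    linarith [h1, h2]
  rw [hF_def] at hgoal
  simp only at hgoal
  calc Real.sqrt (∫ x in (x₁ t ε)..(x₂ t ε), (σ x t ε)^2)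
      ≤ A * (ε^2 * (B + ε^(2*N) * C)) / D * (Real.exp (D*T) - 1) := hgoal
    _ = ε^2 * A * (B + ε^(2*N) * C) * (Real.exp (D * T) - 1) / D := by ring
end
end
end

section
/- Let h, c be smooth functions of one variable, set c_h = c·h''', and let v⁰(x,t) be a smooth solution of v⁰_t = h''(v⁰)·v⁰_x on ℝ×[0,T) satisfying 1 + t·h'''(v⁰(x,t))·v⁰_x(x,t) > 0 everywhere. Define v¹(x,t) = (t/2)·∂_x[ ((c·h''')'(v⁰)·(v⁰_x)² + 2·c(v⁰)·h'''(v⁰)·v⁰_xx + t·c(v⁰)·(h'''(v⁰))²·v⁰_x·v⁰_xx + t·c'(v⁰)·(h'''(v⁰))²·(v⁰_x)³) / (1 + t·h'''(v⁰)·v⁰_x)² ]. Then v¹ satisfies the first transport equation v¹_t = ∂_x( h''(v⁰)·v¹ + c_h(v⁰)·v⁰_xx + (1/2)·c_h'(v⁰)·(v⁰_x)² ) on ℝ×[0,T), together with the initial condition v¹(x,0) = 0. -/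
open Set

noncomputable section
namespace SC12

lemma idx1 : ((⊤:ℕ∞) : WithTop ℕ∞) ≠ 0 := by exact_mod_cast (by simp : (⊤:ℕ∞) ≠ 0)
lemma idx2 : minSmoothness ℝ 2 ≤ ((⊤:ℕ∞) : WithTop ℕ∞) := by
  rw [minSmoothness_of_isRCLikeNormedField]
  rw [show ((2:WithTop ℕ∞)) = ((2:ℕ∞) : WithTop ℕ∞) by rfl]
  exact_mod_cast (le_top : (2:ℕ∞) ≤ ⊤)
lemma idxsucc : ((⊤:ℕ∞) : WithTop ℕ∞) + 1 ≤ ((⊤:ℕ∞) : WithTop ℕ∞) := by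
  exact le_of_eq (by rfl)

def SS (T : ℝ) : Set (ℝ × ℝ) := (univ : Set ℝ) ×ˢ Ico (0:ℝ) T

variable {T : ℝ}

lemma hSuniq : UniqueDiffOn ℝ (SS T) :=
  uniqueDiffOn_univ.prod (uniqueDiffOn_Ico 0 T)

lemma memS {z : ℝ × ℝ} (hz : z ∈ SS T) : z.2 ∈ Ico (0:ℝ) T := hz.2

lemma sliceX {f : ℝ × ℝ → ℝ} {z : ℝ × ℝ}
    (hf : DifferentiableWithinAt ℝ f (SS T) z)
    (hz : z ∈ SS T) :
    HasDerivAt (fun y => f (y, z.2))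
      (fderivWithin ℝ f (SS T) z ((1:ℝ), (0:ℝ))) z.1 := by
  have hγ : HasDerivAt (fun y : ℝ => (y, z.2)) ((1:ℝ), (0:ℝ)) z.1 :=
    (hasDerivAt_id z.1).prodMk (hasDerivAt_const z.1 z.2)
  have h1 := hf.hasFDerivWithinAt.comp_hasDerivWithinAt z.1
    (hγ.hasDerivWithinAt (s := (univ : Set ℝ)))
    (fun y _ => (⟨mem_univ _, hz.2⟩ : (y, z.2) ∈ SS T))
  rw [hasDerivWithinAt_univ] at h1
  exact h1

lemma sliceT {f : ℝ × ℝ → ℝ} {z : ℝ × ℝ}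
    (hf : DifferentiableWithinAt ℝ f (SS T) z)
    (hz : z ∈ SS T) :
    HasDerivWithinAt (fun τ => f (z.1, τ))
      (fderivWithin ℝ f (SS T) z ((0:ℝ), (1:ℝ))) (Ico 0 T) z.2 := by
  have hγ : HasDerivAt (fun τ : ℝ => (z.1, τ)) ((0:ℝ), (1:ℝ)) z.2 :=
    (hasDerivAt_const z.2 z.1).prodMk (hasDerivAt_id z.2)
  exact hf.hasFDerivWithinAt.comp_hasDerivWithinAt z.2
    (hγ.hasDerivWithinAt (s := Ico 0 T)) (fun τ hτ => (⟨mem_univ _, hτ⟩ : (z.1, τ) ∈ SS T))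

lemma swapDeriv (hT : 0 < T) {f : ℝ × ℝ → ℝ}
    (hf : ContDiffOn ℝ (⊤:ℕ∞) f (SS T))
    {z : ℝ × ℝ} (hz : z ∈ SS T) (v w : ℝ × ℝ) :
    fderivWithin ℝ (fun y => fderivWithin ℝ f (SS T) y v)
        (SS T) z w
    = fderivWithin ℝ (fun y => fderivWithin ℝ f (SS T) y w)
        (SS T) z v := by
  set S := SS T with hS
  have hU : UniqueDiffOn ℝ S := hSuniq
  have hL : ContDiffOn ℝ (⊤:ℕ∞) (fderivWithin ℝ f S) S := hf.fderivWithin hU idxsucc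
  have hdiff : DifferentiableWithinAt ℝ (fderivWithin ℝ f S) S z :=
    (hL.differentiableOn idx1) z hz
  have hclos : z ∈ closure (interior S) := by
    rw [hS, SS, interior_prod_eq, interior_univ, interior_Ico, closure_prod_eq, closure_univ,
      closure_Ioo hT.ne]
    exact ⟨mem_univ _, Ico_subset_Icc_self hz.2⟩
  have hsym : IsSymmSndFDerivWithinAt ℝ f S z :=
    (hf.contDiffWithinAt hz).isSymmSndFDerivWithinAt idx2 hU hclos hz
  have e1 : ∀ v : ℝ × ℝ, fderivWithin ℝ (fun y => fderivWithin ℝ f S y v) S z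
      = (ContinuousLinearMap.apply ℝ ℝ v).comp (fderivWithin ℝ (fderivWithin ℝ f S) S z) :=
    fun v => ((ContinuousLinearMap.apply ℝ ℝ v).hasFDerivAt.comp_hasFDerivWithinAt z
      hdiff.hasFDerivWithinAt).fderivWithin (hU z hz)
  rw [e1, e1]
  exact hsym.eq w v


lemma DxSmooth {f : ℝ × ℝ → ℝ}
    (hf : ContDiffOn ℝ (⊤:ℕ∞) f (SS T)) :
    ContDiffOn ℝ (⊤:ℕ∞) (fun w => fderivWithin ℝ f (SS T) w ((1:ℝ),(0:ℝ)))
      (SS T) :=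
  (ContinuousLinearMap.apply ℝ ℝ ((1:ℝ),(0:ℝ))).contDiff.comp_contDiffOn
    (hf.fderivWithin hSuniq idxsucc)

/-- If `∂ₜ f = g` on `S`, then `τ ↦ ∂ₓ f (x, τ)` has `∂ₓ g` as derivative within `Ico 0 T`. -/
lemma keyT (hT : 0 < T) {f g : ℝ × ℝ → ℝ}
    (hf : ContDiffOn ℝ (⊤:ℕ∞) f (SS T))
    (hg : ContDiffOn ℝ (⊤:ℕ∞) g (SS T))
    (heq : ∀ w ∈ SS T,
      fderivWithin ℝ f (SS T) w ((0:ℝ),(1:ℝ)) = g w)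
    {z : ℝ × ℝ} (hz : z ∈ SS T) :
    HasDerivWithinAt
      (fun τ => fderivWithin ℝ f (SS T) (z.1, τ) ((1:ℝ),(0:ℝ)))
      (fderivWithin ℝ g (SS T) z ((1:ℝ),(0:ℝ))) (Ico 0 T) z.2 := by
  have h1 := sliceT ((DxSmooth hf).differentiableOn idx1 z hz) hz
  have e : fderivWithin ℝ
      (fun w => fderivWithin ℝ f (SS T) w ((1:ℝ),(0:ℝ)))
      (SS T) z ((0:ℝ),(1:ℝ))
      = fderivWithin ℝ g (SS T) z ((1:ℝ),(0:ℝ)) := by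
    rw [swapDeriv hT hf hz ((1:ℝ),(0:ℝ)) ((0:ℝ),(1:ℝ))]
    rw [fderivWithin_congr heq (heq z hz)]
  rwa [e] at h1


/-! ### jets and explicit expressions -/

def FF (v0 : ℝ → ℝ → ℝ) : ℝ × ℝ → ℝ := fun z => v0 z.1 z.2

def PP (T : ℝ) (v0 : ℝ → ℝ → ℝ) : ℝ × ℝ → ℝ :=
  fun z => fderivWithin ℝ (FF v0) (SS T) z ((1:ℝ), (0:ℝ))

def QQ (T : ℝ) (v0 : ℝ → ℝ → ℝ) : ℝ × ℝ → ℝ :=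
  fun z => fderivWithin ℝ (PP T v0) (SS T) z ((1:ℝ), (0:ℝ))

def RR (T : ℝ) (v0 : ℝ → ℝ → ℝ) : ℝ × ℝ → ℝ :=
  fun z => fderivWithin ℝ (QQ T v0) (SS T) z ((1:ℝ), (0:ℝ))

def Nf (T : ℝ) (v0 : ℝ → ℝ → ℝ) (h c : ℝ → ℝ) : ℝ × ℝ → ℝ := fun w =>
  (deriv c (FF v0 w) * iteratedDeriv 3 h (FF v0 w)
      + c (FF v0 w) * iteratedDeriv 4 h (FF v0 w)) * PP T v0 w ^ 2
    + 2 * c (FF v0 w) * iteratedDeriv 3 h (FF v0 w) * QQ T v0 w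
    + w.2 * c (FF v0 w) * iteratedDeriv 3 h (FF v0 w) ^ 2 * PP T v0 w * QQ T v0 w
    + w.2 * deriv c (FF v0 w) * iteratedDeriv 3 h (FF v0 w) ^ 2 * PP T v0 w ^ 3

def Df (T : ℝ) (v0 : ℝ → ℝ → ℝ) (h : ℝ → ℝ) : ℝ × ℝ → ℝ := fun w =>
  1 + w.2 * iteratedDeriv 3 h (FF v0 w) * PP T v0 w

def Wf (T : ℝ) (v0 : ℝ → ℝ → ℝ) (h c : ℝ → ℝ) : ℝ × ℝ → ℝ := fun w =>
  w.2 / 2 * (Nf T v0 h c w / Df T v0 h w ^ 2)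

def EE (T : ℝ) (v0 : ℝ → ℝ → ℝ) (h c : ℝ → ℝ) : ℝ × ℝ → ℝ := fun w =>
  iteratedDeriv 2 h (FF v0 w) * fderivWithin ℝ (Wf T v0 h c) (SS T) w ((1:ℝ), (0:ℝ))
    + c (FF v0 w) * iteratedDeriv 3 h (FF v0 w) * QQ T v0 w
    + 1 / 2 * (deriv c (FF v0 w) * iteratedDeriv 3 h (FF v0 w)
        + c (FF v0 w) * iteratedDeriv 4 h (FF v0 w)) * PP T v0 w ^ 2

end SC12


/-- the explicit universal formula for the first semiclassical
correction `v¹` satisfies the first transport equation with zero initial data. -/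
theorem first_correction_satisfies_transport_equation
    (h c : ℝ → ℝ) (T : ℝ) (hT : 0 < T)
    (hh : ContDiff ℝ (⊤ : ℕ∞) h) (hc : ContDiff ℝ (⊤ : ℕ∞) c)
    (v0 : ℝ → ℝ → ℝ)
    (hv0smooth : ContDiffOn ℝ (⊤ : ℕ∞) (fun z : ℝ × ℝ => v0 z.1 z.2)
      (Set.univ ×ˢ Set.Ico 0 T))
    (hv0pde : ∀ x : ℝ, ∀ t ∈ Set.Ico (0:ℝ) T, HasDerivWithinAt (fun τ => v0 x τ)
      (iteratedDeriv 2 h (v0 x t) * deriv (fun y => v0 y t) x) (Set.Ico 0 T) t)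
    (hpos : ∀ x : ℝ, ∀ t ∈ Set.Ico (0:ℝ) T,
      0 < 1 + t * iteratedDeriv 3 h (v0 x t) * deriv (fun y => v0 y t) x)
    (v1 : ℝ → ℝ → ℝ)
    (hv1 : ∀ x t, v1 x t = t / 2 * deriv (fun y =>
      (deriv (fun w => c w * iteratedDeriv 3 h w) (v0 y t) * (deriv (fun z => v0 z t) y)^2
        + 2 * c (v0 y t) * iteratedDeriv 3 h (v0 y t) * iteratedDeriv 2 (fun z => v0 z t) y
        + t * c (v0 y t) * (iteratedDeriv 3 h (v0 y t))^2
            * deriv (fun z => v0 z t) y * iteratedDeriv 2 (fun z => v0 z t) y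
        + t * deriv c (v0 y t) * (iteratedDeriv 3 h (v0 y t))^2
            * (deriv (fun z => v0 z t) y)^3)
      / (1 + t * iteratedDeriv 3 h (v0 y t) * deriv (fun z => v0 z t) y)^2) x) :
    (∀ x : ℝ, ∀ t ∈ Set.Ico (0:ℝ) T,
      HasDerivWithinAt (fun τ => v1 x τ)
        (deriv (fun y =>
            iteratedDeriv 2 h (v0 y t) * v1 y t
            + c (v0 y t) * iteratedDeriv 3 h (v0 y t) * iteratedDeriv 2 (fun z => v0 z t) y
            + (1/2) * deriv (fun w => c w * iteratedDeriv 3 h w) (v0 y t)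
                * (deriv (fun z => v0 z t) y)^2) x)
        (Set.Ico 0 T) t)
    ∧ (∀ x : ℝ, v1 x 0 = 0) := by
  have hS : UniqueDiffOn ℝ (SC12.SS T) := SC12.hSuniq
  have hFs : ContDiffOn ℝ (⊤:ℕ∞) (SC12.FF v0) (SC12.SS T) := hv0smooth
  have hPs : ContDiffOn ℝ (⊤:ℕ∞) (SC12.PP T v0) (SC12.SS T) := SC12.DxSmooth hFs
  have hQs : ContDiffOn ℝ (⊤:ℕ∞) (SC12.QQ T v0) (SC12.SS T) := SC12.DxSmooth hPs
  have hhn : ∀ n : ℕ, ContDiff ℝ (⊤:ℕ∞) (iteratedDeriv n h) := by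
    intro n; induction n with
    | zero => simpa [iteratedDeriv_zero] using hh
    | succ n ih => rw [iteratedDeriv_succ]; exact (contDiff_infty_iff_deriv.mp ih).2
  have hc1 : ContDiff ℝ (⊤:ℕ∞) (deriv c) := (contDiff_infty_iff_deriv.mp hc).2
  have hdh : ∀ (n : ℕ) (u : ℝ), HasDerivAt (iteratedDeriv n h) (iteratedDeriv (n+1) h u) u := by
    intro n u
    rw [iteratedDeriv_succ]
    exact ((hhn n).differentiable SC12.idx1 u).hasDerivAt
  have hdc : ∀ u : ℝ, HasDerivAt c (deriv c u) u :=
    fun u => ((hc.differentiable SC12.idx1) u).hasDerivAt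
  have hdc1 : ∀ u : ℝ, HasDerivAt (deriv c) (deriv (deriv c) u) u :=
    fun u => ((hc1.differentiable SC12.idx1) u).hasDerivAt
  have hpsi : ∀ u : ℝ, deriv (fun w => c w * iteratedDeriv 3 h w) u
      = deriv c u * iteratedDeriv 3 h u + c u * iteratedDeriv 4 h u := by
    intro u
    rw [show (fun w => c w * iteratedDeriv 3 h w) = c * iteratedDeriv 3 h from rfl,
      deriv_mul (hc.differentiable SC12.idx1 u) ((hhn 3).differentiable SC12.idx1 u),
      ← iteratedDeriv_succ]
  have hmem : ∀ (y τ : ℝ), τ ∈ Ico (0:ℝ) T → ((y, τ) : ℝ × ℝ) ∈ SC12.SS T :=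
    fun y τ hτ => ⟨mem_univ _, hτ⟩
  have hux : ∀ z ∈ SC12.SS T, HasDerivAt (fun y => v0 y z.2) (SC12.PP T v0 z) z.1 :=
    fun z hz => SC12.sliceX (hFs.differentiableOn SC12.idx1 z hz) hz
  have hpx : ∀ z ∈ SC12.SS T, HasDerivAt (fun y => SC12.PP T v0 (y, z.2)) (SC12.QQ T v0 z) z.1 :=
    fun z hz => SC12.sliceX (hPs.differentiableOn SC12.idx1 z hz) hz
  have hqx : ∀ z ∈ SC12.SS T, HasDerivAt (fun y => SC12.QQ T v0 (y, z.2)) (SC12.RR T v0 z) z.1 :=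
    fun z hz => SC12.sliceX (hQs.differentiableOn SC12.idx1 z hz) hz
  have hPd : ∀ (x τ : ℝ), τ ∈ Ico (0:ℝ) T →
      deriv (fun y => v0 y τ) x = SC12.PP T v0 (x, τ) :=
    fun x τ hτ => (hux (x, τ) (hmem x τ hτ)).deriv
  have hQd : ∀ (x τ : ℝ), τ ∈ Ico (0:ℝ) T →
      iteratedDeriv 2 (fun y => v0 y τ) x = SC12.QQ T v0 (x, τ) := by
    intro x τ hτ
    rw [iteratedDeriv_succ, iteratedDeriv_one]
    have e : deriv (fun y => v0 y τ) = fun y => SC12.PP T v0 (y, τ) :=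
      funext fun y => (hux (y, τ) (hmem y τ hτ)).deriv
    rw [e]
    exact (hpx (x, τ) (hmem x τ hτ)).deriv
  have hDpos : ∀ z ∈ SC12.SS T, 0 < SC12.Df T v0 h z := by
    intro z hz
    have h1 := hpos z.1 z.2 hz.2
    rw [hPd z.1 z.2 hz.2] at h1
    exact h1
  have hDne : ∀ z ∈ SC12.SS T, SC12.Df T v0 h z ≠ 0 := fun z hz => (hDpos z hz).ne'
  have hut : ∀ z ∈ SC12.SS T, HasDerivWithinAt (fun τ => v0 z.1 τ)
      (iteratedDeriv 2 h (SC12.FF v0 z) * SC12.PP T v0 z) (Ico 0 T) z.2 := by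
    intro z hz
    have h1 := hv0pde z.1 z.2 hz.2
    rw [hPd z.1 z.2 hz.2] at h1
    exact h1
  have hFt : ∀ z ∈ SC12.SS T, fderivWithin ℝ (SC12.FF v0) (SC12.SS T) z ((0:ℝ),(1:ℝ))
      = iteratedDeriv 2 h (SC12.FF v0 z) * SC12.PP T v0 z := by
    intro z hz
    exact UniqueDiffWithinAt.eq_deriv _ (uniqueDiffOn_Ico 0 T z.2 hz.2)
      (SC12.sliceT (hFs.differentiableOn SC12.idx1 z hz) hz) (hut z hz)
  have hgFs : ContDiffOn ℝ (⊤:ℕ∞)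
      (fun w => iteratedDeriv 2 h (SC12.FF v0 w) * SC12.PP T v0 w) (SC12.SS T) :=
    ((hhn 2).comp_contDiffOn hFs).mul hPs
  have hPt : ∀ z ∈ SC12.SS T, fderivWithin ℝ (SC12.PP T v0) (SC12.SS T) z ((0:ℝ),(1:ℝ))
      = iteratedDeriv 3 h (SC12.FF v0 z) * SC12.PP T v0 z * SC12.PP T v0 z
        + iteratedDeriv 2 h (SC12.FF v0 z) * SC12.QQ T v0 z := by
    intro z hz
    have e1 : fderivWithin ℝ (SC12.PP T v0) (SC12.SS T) z ((0:ℝ),(1:ℝ))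
        = fderivWithin ℝ (fun y => fderivWithin ℝ (SC12.FF v0) (SC12.SS T) y ((0:ℝ),(1:ℝ)))
            (SC12.SS T) z ((1:ℝ),(0:ℝ)) :=
      SC12.swapDeriv hT hFs hz _ _
    rw [e1, fderivWithin_congr (fun w hw => hFt w hw) (hFt z hz)]
    have hY := (((hdh 2 (SC12.FF v0 z)).comp z.1 (hux z hz)).mul (hpx z hz))
    exact (SC12.sliceX (hgFs.differentiableOn SC12.idx1 z hz) hz).unique hY
  have hpt : ∀ z ∈ SC12.SS T, HasDerivWithinAt (fun τ => SC12.PP T v0 (z.1, τ))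
      (iteratedDeriv 3 h (SC12.FF v0 z) * SC12.PP T v0 z * SC12.PP T v0 z
        + iteratedDeriv 2 h (SC12.FF v0 z) * SC12.QQ T v0 z) (Ico 0 T) z.2 := by
    intro z hz
    have h1 := SC12.sliceT (hPs.differentiableOn SC12.idx1 z hz) hz
    rwa [hPt z hz] at h1
  have hg2s : ContDiffOn ℝ (⊤:ℕ∞)
      (fun w => iteratedDeriv 3 h (SC12.FF v0 w) * SC12.PP T v0 w * SC12.PP T v0 w
        + iteratedDeriv 2 h (SC12.FF v0 w) * SC12.QQ T v0 w) (SC12.SS T) :=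
    ((((hhn 3).comp_contDiffOn hFs).mul hPs).mul hPs).add
      (((hhn 2).comp_contDiffOn hFs).mul hQs)
  have hQt : ∀ z ∈ SC12.SS T, fderivWithin ℝ (SC12.QQ T v0) (SC12.SS T) z ((0:ℝ),(1:ℝ))
      = (iteratedDeriv 4 h (SC12.FF v0 z) * SC12.PP T v0 z * SC12.PP T v0 z
          + iteratedDeriv 3 h (SC12.FF v0 z) * SC12.QQ T v0 z) * SC12.PP T v0 z
        + iteratedDeriv 3 h (SC12.FF v0 z) * SC12.PP T v0 z * SC12.QQ T v0 z
        + (iteratedDeriv 3 h (SC12.FF v0 z) * SC12.PP T v0 z * SC12.QQ T v0 z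
          + iteratedDeriv 2 h (SC12.FF v0 z) * SC12.RR T v0 z) := by
    intro z hz
    have e1 : fderivWithin ℝ (SC12.QQ T v0) (SC12.SS T) z ((0:ℝ),(1:ℝ))
        = fderivWithin ℝ (fun y => fderivWithin ℝ (SC12.PP T v0) (SC12.SS T) y ((0:ℝ),(1:ℝ)))
            (SC12.SS T) z ((1:ℝ),(0:ℝ)) :=
      SC12.swapDeriv hT hPs hz _ _
    rw [e1, fderivWithin_congr (fun w hw => hPt w hw) (hPt z hz)]
    have hY := (((((hdh 3 (SC12.FF v0 z)).comp z.1 (hux z hz)).mul (hpx z hz)).mul (hpx z hz)).add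
        (((hdh 2 (SC12.FF v0 z)).comp z.1 (hux z hz)).mul (hqx z hz)))
    exact (SC12.sliceX (hg2s.differentiableOn SC12.idx1 z hz) hz).unique hY
  have hqt : ∀ z ∈ SC12.SS T, HasDerivWithinAt (fun τ => SC12.QQ T v0 (z.1, τ))
      ((iteratedDeriv 4 h (SC12.FF v0 z) * SC12.PP T v0 z * SC12.PP T v0 z
          + iteratedDeriv 3 h (SC12.FF v0 z) * SC12.QQ T v0 z) * SC12.PP T v0 z
        + iteratedDeriv 3 h (SC12.FF v0 z) * SC12.PP T v0 z * SC12.QQ T v0 z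
        + (iteratedDeriv 3 h (SC12.FF v0 z) * SC12.PP T v0 z * SC12.QQ T v0 z
          + iteratedDeriv 2 h (SC12.FF v0 z) * SC12.RR T v0 z)) (Ico 0 T) z.2 := by
    intro z hz
    have h1 := SC12.sliceT (hQs.differentiableOn SC12.idx1 z hz) hz
    rwa [hQt z hz] at h1
  -- smoothness of the explicit expressions
  have hcF : ContDiffOn ℝ (⊤:ℕ∞) (fun w => c (SC12.FF v0 w)) (SC12.SS T) :=
    hc.comp_contDiffOn hFs
  have hc1F : ContDiffOn ℝ (⊤:ℕ∞) (fun w => deriv c (SC12.FF v0 w)) (SC12.SS T) :=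
    hc1.comp_contDiffOn hFs
  have h3F : ContDiffOn ℝ (⊤:ℕ∞) (fun w => iteratedDeriv 3 h (SC12.FF v0 w)) (SC12.SS T) :=
    (hhn 3).comp_contDiffOn hFs
  have h4F : ContDiffOn ℝ (⊤:ℕ∞) (fun w => iteratedDeriv 4 h (SC12.FF v0 w)) (SC12.SS T) :=
    (hhn 4).comp_contDiffOn hFs
  have hsnd : ContDiffOn ℝ (⊤:ℕ∞) (fun w : ℝ × ℝ => w.2) (SC12.SS T) :=
    contDiff_snd.contDiffOn
  have hNs : ContDiffOn ℝ (⊤:ℕ∞) (SC12.Nf T v0 h c) (SC12.SS T) := by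
    exact ((((hc1F.mul h3F).add (hcF.mul h4F)).mul (hPs.pow 2)).add
        (((contDiffOn_const.mul hcF).mul h3F).mul hQs)).add
        ((((hsnd.mul hcF).mul (h3F.pow 2)).mul hPs).mul hQs) |>.add
        (((hsnd.mul hc1F).mul (h3F.pow 2)).mul (hPs.pow 3))
  have hDs : ContDiffOn ℝ (⊤:ℕ∞) (SC12.Df T v0 h) (SC12.SS T) := by
    exact contDiffOn_const.add ((hsnd.mul h3F).mul hPs)
  have hWs : ContDiffOn ℝ (⊤:ℕ∞) (SC12.Wf T v0 h c) (SC12.SS T) := by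
    exact (hsnd.div_const 2).mul
      (hNs.div (hDs.pow 2) (fun w hw => pow_ne_zero 2 (hDne w hw)))
  have hEEs : ContDiffOn ℝ (⊤:ℕ∞) (SC12.EE T v0 h c) (SC12.SS T) := by
    exact ((((hhn 2).comp_contDiffOn hFs).mul (SC12.DxSmooth hWs)).add
        ((hcF.mul h3F).mul hQs)).add
      ((contDiffOn_const.mul ((hc1F.mul h3F).add (hcF.mul h4F))).mul (hPs.pow 2))
  -- x-differentiability of the slice of N/D^2, with derivative built by combinators
  have hGx : ∀ z ∈ SC12.SS T, DifferentiableAt ℝ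
      (fun y => SC12.Nf T v0 h c (y, z.2) / SC12.Df T v0 h (y, z.2) ^ 2) z.1 := by
    intro z hz
    have lxc := (hdc (SC12.FF v0 z)).comp z.1 (hux z hz)
    have lxc1 := (hdc1 (SC12.FF v0 z)).comp z.1 (hux z hz)
    have lx3 := (hdh 3 (SC12.FF v0 z)).comp z.1 (hux z hz)
    have lx4 := (hdh 4 (SC12.FF v0 z)).comp z.1 (hux z hz)
    have lx0 : HasDerivAt (fun _ : ℝ => z.2) 0 z.1 := hasDerivAt_const z.1 z.2
    have lN := ((((lxc1.mul lx3).add (lxc.mul lx4)).mul ((hpx z hz).pow 2)).add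
        (((lxc.const_mul 2).mul lx3).mul (hqx z hz))).add
        ((((lx0.mul lxc).mul (lx3.pow 2)).mul (hpx z hz)).mul (hqx z hz)) |>.add
        (((lx0.mul lxc1).mul (lx3.pow 2)).mul ((hpx z hz).pow 3))
    have lD := ((lx0.mul lx3).mul (hpx z hz)).const_add 1
    exact (lN.div (lD.pow 2) (pow_ne_zero 2 (hDne z hz))).differentiableAt
  -- identification of v1 with the x-derivative of W
  have hv1eq : ∀ (x τ : ℝ), τ ∈ Ico (0:ℝ) T → v1 x τ
      = fderivWithin ℝ (SC12.Wf T v0 h c) (SC12.SS T) (x, τ) ((1:ℝ),(0:ℝ)) := by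
    intro x τ hτ
    have efun : (fun y =>
        (deriv (fun w => c w * iteratedDeriv 3 h w) (v0 y τ) * deriv (fun z => v0 z τ) y ^ 2
          + 2 * c (v0 y τ) * iteratedDeriv 3 h (v0 y τ) * iteratedDeriv 2 (fun z => v0 z τ) y
          + τ * c (v0 y τ) * iteratedDeriv 3 h (v0 y τ) ^ 2
              * deriv (fun z => v0 z τ) y * iteratedDeriv 2 (fun z => v0 z τ) y
          + τ * deriv c (v0 y τ) * iteratedDeriv 3 h (v0 y τ) ^ 2 * deriv (fun z => v0 z τ) y ^ 3)
        / (1 + τ * iteratedDeriv 3 h (v0 y τ) * deriv (fun z => v0 z τ) y) ^ 2)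
        = fun y => SC12.Nf T v0 h c (y, τ) / SC12.Df T v0 h (y, τ) ^ 2 := by
      funext y
      rw [hpsi (v0 y τ), hPd y τ hτ, hQd y τ hτ]
      rfl
    rw [hv1, efun]
    have e2 := (SC12.sliceX (hWs.differentiableOn SC12.idx1 (x,τ) (hmem x τ hτ))
      (hmem x τ hτ)).deriv
    rw [← e2]
    have e3 : (fun y => SC12.Wf T v0 h c (y, τ))
        = fun y => τ / 2 * (SC12.Nf T v0 h c (y, τ) / SC12.Df T v0 h (y, τ) ^ 2) := rfl
    rw [e3, deriv_const_mul _ (hGx (x, τ) (hmem x τ hτ))]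
  -- the core pointwise identity: ∂ₜW = EE on S
  have heqW : ∀ z ∈ SC12.SS T, fderivWithin ℝ (SC12.Wf T v0 h c) (SC12.SS T) z ((0:ℝ),(1:ℝ))
      = SC12.EE T v0 h c z := by
    intro z hz
    have lt0 : HasDerivWithinAt (fun τ : ℝ => τ) 1 (Ico (0:ℝ) T) z.2 := hasDerivWithinAt_id z.2 _
    have ltu := hut z hz
    have ltp := hpt z hz
    have ltq := hqt z hz
    have ltc := (hdc (SC12.FF v0 z)).comp_hasDerivWithinAt z.2 ltu
    have ltc1 := (hdc1 (SC12.FF v0 z)).comp_hasDerivWithinAt z.2 ltu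
    have lt3 := (hdh 3 (SC12.FF v0 z)).comp_hasDerivWithinAt z.2 ltu
    have lt4 := (hdh 4 (SC12.FF v0 z)).comp_hasDerivWithinAt z.2 ltu
    have lNt := ((((ltc1.mul lt3).add (ltc.mul lt4)).mul (ltp.pow 2)).add
        (((ltc.const_mul 2).mul lt3).mul ltq)).add
        ((((lt0.mul ltc).mul (lt3.pow 2)).mul ltp).mul ltq) |>.add
        (((lt0.mul ltc1).mul (lt3.pow 2)).mul (ltp.pow 3))
    have lDt := ((lt0.mul lt3).mul ltp).const_add 1
    have lWt := (lt0.div_const 2).mul (lNt.div (lDt.pow 2) (pow_ne_zero 2 (hDne z hz)))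
    have eT := UniqueDiffWithinAt.eq_deriv _ (uniqueDiffOn_Ico 0 T z.2 hz.2)
      (SC12.sliceT (hWs.differentiableOn SC12.idx1 z hz) hz) lWt
    -- x-direction
    have lxc := (hdc (SC12.FF v0 z)).comp z.1 (hux z hz)
    have lxc1 := (hdc1 (SC12.FF v0 z)).comp z.1 (hux z hz)
    have lx3 := (hdh 3 (SC12.FF v0 z)).comp z.1 (hux z hz)
    have lx4 := (hdh 4 (SC12.FF v0 z)).comp z.1 (hux z hz)
    have lx0 : HasDerivAt (fun _ : ℝ => z.2) 0 z.1 := hasDerivAt_const z.1 z.2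
    have lNx := ((((lxc1.mul lx3).add (lxc.mul lx4)).mul ((hpx z hz).pow 2)).add
        (((lxc.const_mul 2).mul lx3).mul (hqx z hz))).add
        ((((lx0.mul lxc).mul (lx3.pow 2)).mul (hpx z hz)).mul (hqx z hz)) |>.add
        (((lx0.mul lxc1).mul (lx3.pow 2)).mul ((hpx z hz).pow 3))
    have lDx := ((lx0.mul lx3).mul (hpx z hz)).const_add 1
    have lWx := (lx0.div_const 2).mul (lNx.div (lDx.pow 2) (pow_ne_zero 2 (hDne z hz)))
    have eX := (SC12.sliceX (hWs.differentiableOn SC12.idx1 z hz) hz).unique lWx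
    have hD0 : (1 : ℝ) + z.2 * iteratedDeriv 3 h (v0 z.1 z.2) * SC12.PP T v0 z ≠ 0 := by
      have h1 := hDne z hz
      simpa [SC12.Df, SC12.FF] using h1
    rw [eT]
    simp only [SC12.EE]
    rw [eX]
    simp only [Function.comp, SC12.FF, id_eq, Prod.mk.eta, Pi.mul_apply, Pi.add_apply,
      Pi.pow_apply, Pi.div_apply, Nat.reduceAdd, Nat.reduceSub, Nat.cast_ofNat]
    have hD0' : (1 : ℝ) + iteratedDeriv 3 h (v0 z.1 z.2) * SC12.PP T v0 z * z.2 ≠ 0 := by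
      convert hD0 using 1; ring
    field_simp
    ring
  refine ⟨?_, fun x => by rw [hv1]; norm_num⟩
  intro x t ht
  have hz : ((x, t) : ℝ × ℝ) ∈ SC12.SS T := hmem x t ht
  have hkey := SC12.keyT hT hWs hEEs heqW hz
  have efun2 : (fun y => iteratedDeriv 2 h (v0 y t) * v1 y t
      + c (v0 y t) * iteratedDeriv 3 h (v0 y t) * iteratedDeriv 2 (fun z => v0 z t) y
      + 1/2 * deriv (fun w => c w * iteratedDeriv 3 h w) (v0 y t)
          * deriv (fun z => v0 z t) y ^ 2)
      = fun y => SC12.EE T v0 h c (y, t) := by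
    funext y
    rw [hv1eq y t ht, hQd y t ht, hPd y t ht, hpsi (v0 y t)]
    rfl
  have egoal : deriv (fun y => iteratedDeriv 2 h (v0 y t) * v1 y t
      + c (v0 y t) * iteratedDeriv 3 h (v0 y t) * iteratedDeriv 2 (fun z => v0 z t) y
      + 1/2 * deriv (fun w => c w * iteratedDeriv 3 h w) (v0 y t)
          * deriv (fun z => v0 z t) y ^ 2) x
      = fderivWithin ℝ (SC12.EE T v0 h c) (SC12.SS T) (x, t) ((1:ℝ),(0:ℝ)) := by
    rw [efun2]
    exact (SC12.sliceX (hEEs.differentiableOn SC12.idx1 (x,t) hz) hz).deriv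
  rw [egoal]
  exact hkey.congr (fun τ hτ => hv1eq x τ hτ) (hv1eq x t ht)
end
end

section
/- Let h, c be smooth functions of one variable and let t ≥ 0 be a parameter. Consider the density k₁ = −(1/2)·c(u)·u_x·log(1 + t·h'''(u)·u_x), so that K₁ = ∫k₁ dx and δK₁/δu = E(k₁) = ∂k₁/∂u − (d/dx)(∂k₁/∂u_x). Then, identically in the jet variables u, u_x, u_xx, u_xxx (wherever 1 + t·h'''(u)·u_x > 0), one has (d/dx)E(k₁) = (t/2)·(d/dx)[ ((c·h''')'·u_x² + 2·c·h'''·u_xx + t·c·(h''')²·u_x·u_xx + t·c'·(h''')²·u_x³) / (1 + t·h'''·u_x)² ]. Consequently, if v⁰ solves v⁰_t = h''(v⁰)v⁰_x, the first semiclassical correction v¹ admits the Hamiltonian representation v¹(x,t) = ∂_x( (δK₁/δu)|_{u=v⁰(x,t)} ). -/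
open Set

noncomputable section

/-- The density `k₁ = -(1/2)·c(u)·u_x·log(1 + t·h'''(u)·u_x)` of the generating
functional `K₁`. -/
def K1den (h c : ℝ → ℝ) (t : ℝ) (v : ℕ → ℝ) : ℝ :=
  -(1/2) * c (v 0) * v 1 * Real.log (1 + t * iteratedDeriv 3 h (v 0) * v 1)

/-- The right-hand side of the universal formula for `v¹`, as a jet density. -/
def v1den (h c : ℝ → ℝ) (t : ℝ) (v : ℕ → ℝ) : ℝ :=
  (deriv (fun w => c w * iteratedDeriv 3 h w) (v 0) * (v 1)^2
    + 2 * c (v 0) * iteratedDeriv 3 h (v 0) * v 2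
    + t * c (v 0) * (iteratedDeriv 3 h (v 0))^2 * v 1 * v 2
    + t * deriv c (v 0) * (iteratedDeriv 3 h (v 0))^2 * (v 1)^3)
  / (1 + t * iteratedDeriv 3 h (v 0) * v 1)^2

namespace Ham13

lemma cont_iter (h : ℝ → ℝ) (hh : ContDiff ℝ (⊤:ℕ∞) h) (n : ℕ) :
    Continuous (iteratedDeriv n h) := by
  rw [iteratedDeriv_eq_iterate]; exact (hh.iterate_deriv n).continuous

lemma pderivJet_two0 (F : ℝ → ℝ → ℝ) (v : ℕ → ℝ) :
    pderivJet (fun w => F (w 0) (w 1)) 0 v = deriv (fun y => F y (v 1)) (v 0) := by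
  unfold pderivJet
  congr 1

lemma pderivJet_two1 (F : ℝ → ℝ → ℝ) (v : ℕ → ℝ) :
    pderivJet (fun w => F (w 0) (w 1)) 1 v = deriv (fun y => F (v 0) y) (v 1) := by
  unfold pderivJet
  congr 1

lemma pderivJet_twohi (F : ℝ → ℝ → ℝ) (v : ℕ → ℝ) (k : ℕ) (hk : 2 ≤ k) :
    pderivJet (fun w => F (w 0) (w 1)) k v = 0 := by
  unfold pderivJet
  have : (fun y => F (Function.update v k y 0) (Function.update v k y 1))
      = fun _ => F (v 0) (v 1) := by
    funext y
    rw [Function.update_of_ne (by omega), Function.update_of_ne (by omega)]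
  rw [this, deriv_const]

lemma totalDer_zero : totalDer (fun _ : ℕ → ℝ => (0:ℝ)) = fun _ => 0 := by
  funext v
  simp [totalDer, pderivJet]

lemma totalDer_two_var (F : ℝ → ℝ → ℝ) (v : ℕ → ℝ) :
    totalDer (fun w => F (w 0) (w 1)) v
      = v 1 * deriv (fun y => F y (v 1)) (v 0) + v 2 * deriv (fun y => F (v 0) y) (v 1) := by
  unfold totalDer
  rw [tsum_eq_sum (s := ({0,1} : Finset ℕ)) ?_]
  · rw [Finset.sum_pair (by norm_num : (0:ℕ) ≠ 1), pderivJet_two0, pderivJet_two1]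
  · intro k hk
    have hk2 : 2 ≤ k := by simp at hk; omega
    rw [pderivJet_twohi F v k hk2, mul_zero]

lemma EulerOp_two_var (F : ℝ → ℝ → ℝ) (v : ℕ → ℝ) :
    EulerOp (fun w => F (w 0) (w 1)) v
      = pderivJet (fun w => F (w 0) (w 1)) 0 v
        - totalDer (pderivJet (fun w => F (w 0) (w 1)) 1) v := by
  unfold EulerOp
  rw [tsum_eq_sum (s := ({0,1} : Finset ℕ)) ?_]
  · rw [Finset.sum_pair (by norm_num : (0:ℕ) ≠ 1)]
    simp [sub_eq_add_neg]
  · intro k hk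
    have hk2 : 2 ≤ k := by simp at hk; omega
    have hz : pderivJet (fun w => F (w 0) (w 1)) k = fun _ => 0 :=
      funext fun w => pderivJet_twohi F w k hk2
    rw [hz, Function.iterate_fixed totalDer_zero k]
    simp


lemma hasDerivAt_iter (h : ℝ → ℝ) (hh : ContDiff ℝ (⊤:ℕ∞) h) (n : ℕ) (x : ℝ) :
    HasDerivAt (iteratedDeriv n h) (iteratedDeriv (n+1) h x) x := by
  rw [iteratedDeriv_succ]
  have : Differentiable ℝ (iteratedDeriv n h) := by
    rw [iteratedDeriv_eq_iterate]
    exact (hh.iterate_deriv n).differentiable (by simp)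
  exact (this x).hasDerivAt

def Ffun (h c : ℝ → ℝ) (t a b : ℝ) : ℝ :=
  -(1/2) * c a * b * Real.log (1 + t * iteratedDeriv 3 h a * b)

def Gfun (h c : ℝ → ℝ) (t a b : ℝ) : ℝ :=
  -(1/2) * c a * (Real.log (1 + t * iteratedDeriv 3 h a * b)
    + t * iteratedDeriv 3 h a * b / (1 + t * iteratedDeriv 3 h a * b))

variable {h c : ℝ → ℝ} {t a b : ℝ}

lemma hasDerivAt_F_b (hA : (1 + t * iteratedDeriv 3 h a * b) ≠ 0) :
    HasDerivAt (fun y => Ffun h c t a y) (Gfun h c t a b) b := by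
  have h1 : HasDerivAt (fun y : ℝ => 1 + t * iteratedDeriv 3 h a * y)
      (t * iteratedDeriv 3 h a) b := by
    simpa using ((hasDerivAt_id b).const_mul (t * iteratedDeriv 3 h a)).const_add 1
  have h2 : HasDerivAt (fun y => Real.log (1 + t * iteratedDeriv 3 h a * y))
      ((1 + t * iteratedDeriv 3 h a * b)⁻¹ * (t * iteratedDeriv 3 h a)) b :=
    by have := (Real.hasDerivAt_log hA).comp b h1; exact this
  have h3 : HasDerivAt (fun y : ℝ => -(1/2) * c a * y) (-(1/2) * c a) b := by
    simpa using (hasDerivAt_id b).const_mul (-(1/2) * c a)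
  have h4 := h3.mul h2
  unfold Ffun Gfun
  refine h4.congr_deriv ?_
  field_simp
  ring

lemma hasDerivAt_F_a (hh : ContDiff ℝ (⊤:ℕ∞) h) (hc : ContDiff ℝ (⊤:ℕ∞) c)
    (hA : (1 + t * iteratedDeriv 3 h a * b) ≠ 0) :
    HasDerivAt (fun y => Ffun h c t y b)
      (-(1/2) * deriv c a * b * Real.log (1 + t * iteratedDeriv 3 h a * b)
        + -(1/2) * c a * b
          * (t * iteratedDeriv 4 h a * b / (1 + t * iteratedDeriv 3 h a * b))) a := by
  have hci : HasDerivAt c (deriv c a) a :=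
    ((hc.differentiable (by simp)) a).hasDerivAt
  have hHi := hasDerivAt_iter h hh 3 a
  have h1 : HasDerivAt (fun y => 1 + t * iteratedDeriv 3 h y * b)
      (t * iteratedDeriv 4 h a * b) a := by
    simpa [mul_assoc] using ((hHi.const_mul t).mul_const b).const_add 1
  have h2 : HasDerivAt (fun y => Real.log (1 + t * iteratedDeriv 3 h y * b))
      ((1 + t * iteratedDeriv 3 h a * b)⁻¹ * (t * iteratedDeriv 4 h a * b)) a :=
    by have := (Real.hasDerivAt_log hA).comp a h1; exact this
  have h3 : HasDerivAt (fun y => -(1/2) * c y * b) (-(1/2) * deriv c a * b) a :=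
    (hci.const_mul (-(1/2))).mul_const b
  have h4 := h3.mul h2
  unfold Ffun
  refine h4.congr_deriv ?_
  field_simp

lemma hasDerivAt_G_b (hA : (1 + t * iteratedDeriv 3 h a * b) ≠ 0) :
    HasDerivAt (fun y => Gfun h c t a y)
      (-(1/2) * c a * (t * iteratedDeriv 3 h a / (1 + t * iteratedDeriv 3 h a * b)
        + t * iteratedDeriv 3 h a / (1 + t * iteratedDeriv 3 h a * b)^2)) b := by
  have h1 : HasDerivAt (fun y : ℝ => 1 + t * iteratedDeriv 3 h a * y)
      (t * iteratedDeriv 3 h a) b := by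
    simpa using ((hasDerivAt_id b).const_mul (t * iteratedDeriv 3 h a)).const_add 1
  have h2 : HasDerivAt (fun y => Real.log (1 + t * iteratedDeriv 3 h a * y))
      ((1 + t * iteratedDeriv 3 h a * b)⁻¹ * (t * iteratedDeriv 3 h a)) b :=
    by have := (Real.hasDerivAt_log hA).comp b h1; exact this
  have hnum : HasDerivAt (fun y : ℝ => t * iteratedDeriv 3 h a * y)
      (t * iteratedDeriv 3 h a) b := by
    simpa using (hasDerivAt_id b).const_mul (t * iteratedDeriv 3 h a)
  have hq := hnum.div h1 hA
  rw [show t * iteratedDeriv 3 h a * (1 + t * iteratedDeriv 3 h a * b)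
      - t * iteratedDeriv 3 h a * b * (t * iteratedDeriv 3 h a)
      = t * iteratedDeriv 3 h a by ring] at hq
  have h4 := (h2.add hq).const_mul (-(1/2) * c a)
  unfold Gfun
  refine h4.congr_deriv ?_
  field_simp

lemma hasDerivAt_G_a (hh : ContDiff ℝ (⊤:ℕ∞) h) (hc : ContDiff ℝ (⊤:ℕ∞) c)
    (hA : (1 + t * iteratedDeriv 3 h a * b) ≠ 0) :
    HasDerivAt (fun y => Gfun h c t y b)
      (-(1/2) * deriv c a * (Real.log (1 + t * iteratedDeriv 3 h a * b)
          + t * iteratedDeriv 3 h a * b / (1 + t * iteratedDeriv 3 h a * b))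
        + -(1/2) * c a * (t * iteratedDeriv 4 h a * b / (1 + t * iteratedDeriv 3 h a * b)
          + t * iteratedDeriv 4 h a * b / (1 + t * iteratedDeriv 3 h a * b)^2)) a := by
  have hci : HasDerivAt c (deriv c a) a :=
    ((hc.differentiable (by simp)) a).hasDerivAt
  have hHi := hasDerivAt_iter h hh 3 a
  have h1 : HasDerivAt (fun y => 1 + t * iteratedDeriv 3 h y * b)
      (t * iteratedDeriv 4 h a * b) a := by
    simpa [mul_assoc] using ((hHi.const_mul t).mul_const b).const_add 1
  have h2 : HasDerivAt (fun y => Real.log (1 + t * iteratedDeriv 3 h y * b))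
      ((1 + t * iteratedDeriv 3 h a * b)⁻¹ * (t * iteratedDeriv 4 h a * b)) a :=
    by have := (Real.hasDerivAt_log hA).comp a h1; exact this
  have hnum : HasDerivAt (fun y => t * iteratedDeriv 3 h y * b)
      (t * iteratedDeriv 4 h a * b) a := by
    simpa [mul_assoc] using (hHi.const_mul t).mul_const b
  have hq := hnum.div h1 hA
  rw [show t * iteratedDeriv 4 h a * b * (1 + t * iteratedDeriv 3 h a * b)
      - t * iteratedDeriv 3 h a * b * (t * iteratedDeriv 4 h a * b)
      = t * iteratedDeriv 4 h a * b by ring] at hq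
  have hf1 : HasDerivAt (fun y => -(1/2) * c y) (-(1/2) * deriv c a) a :=
    hci.const_mul (-(1/2))
  have h4 := hf1.mul (h2.add hq)
  unfold Gfun
  refine h4.congr_deriv ?_
  simp only [Pi.add_apply, Pi.div_apply]
  field_simp

lemma key (h c : ℝ → ℝ) (hh : ContDiff ℝ (⊤:ℕ∞) h) (hc : ContDiff ℝ (⊤:ℕ∞) c)
    (t : ℝ) (v : ℕ → ℝ) (hpos : 0 < 1 + t * iteratedDeriv 3 h (v 0) * v 1) :
    EulerOp (K1den h c t) v = t / 2 * v1den h c t v := by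
  have hA : (1 + t * iteratedDeriv 3 h (v 0) * v 1) ≠ 0 := ne_of_gt hpos
  have hK : K1den h c t = fun w => Ffun h c t (w 0) (w 1) := rfl
  rw [hK, EulerOp_two_var]
  have e0 : pderivJet (fun w => Ffun h c t (w 0) (w 1)) 0 v
      = -(1/2) * deriv c (v 0) * v 1 * Real.log (1 + t * iteratedDeriv 3 h (v 0) * v 1)
        + -(1/2) * c (v 0) * v 1
          * (t * iteratedDeriv 4 h (v 0) * v 1 / (1 + t * iteratedDeriv 3 h (v 0) * v 1)) := by
    rw [pderivJet_two0]
    exact (hasDerivAt_F_a hh hc hA).deriv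
  have e1fun : pderivJet (fun w => Ffun h c t (w 0) (w 1)) 1
      = fun w => deriv (fun y => Ffun h c t (w 0) y) (w 1) :=
    funext fun w => pderivJet_two1 _ w
  have hcont0 : Continuous fun y : ℝ => 1 + t * iteratedDeriv 3 h y * v 1 :=
    continuous_const.add ((continuous_const.mul (cont_iter h hh 3)).mul continuous_const)
  have hda : deriv (fun y : ℝ => deriv (fun y' => Ffun h c t y y') (v 1)) (v 0)
      = -(1/2) * deriv c (v 0) * (Real.log (1 + t * iteratedDeriv 3 h (v 0) * v 1)
          + t * iteratedDeriv 3 h (v 0) * v 1 / (1 + t * iteratedDeriv 3 h (v 0) * v 1))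
        + -(1/2) * c (v 0)
          * (t * iteratedDeriv 4 h (v 0) * v 1 / (1 + t * iteratedDeriv 3 h (v 0) * v 1)
            + t * iteratedDeriv 4 h (v 0) * v 1 / (1 + t * iteratedDeriv 3 h (v 0) * v 1)^2) := by
    have hev : (fun y : ℝ => deriv (fun y' => Ffun h c t y y') (v 1))
        =ᶠ[nhds (v 0)] fun y => Gfun h c t y (v 1) := by
      filter_upwards [(isOpen_lt continuous_const hcont0).mem_nhds hpos] with y hy
      exact (hasDerivAt_F_b (ne_of_gt hy)).deriv
    rw [hev.deriv_eq]
    exact (hasDerivAt_G_a hh hc hA).deriv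
  have hcont1 : Continuous fun y : ℝ => 1 + t * iteratedDeriv 3 h (v 0) * y :=
    continuous_const.add (continuous_const.mul continuous_id)
  have hdb : deriv (fun y => deriv (fun y' => Ffun h c t (v 0) y') y) (v 1)
      = -(1/2) * c (v 0)
          * (t * iteratedDeriv 3 h (v 0) / (1 + t * iteratedDeriv 3 h (v 0) * v 1)
            + t * iteratedDeriv 3 h (v 0) / (1 + t * iteratedDeriv 3 h (v 0) * v 1)^2) := by
    have hev : (fun y : ℝ => deriv (fun y' => Ffun h c t (v 0) y') y)
        =ᶠ[nhds (v 1)] fun y => Gfun h c t (v 0) y := by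
      filter_upwards [(isOpen_lt continuous_const hcont1).mem_nhds hpos] with y hy
      exact (hasDerivAt_F_b (ne_of_gt hy)).deriv
    rw [hev.deriv_eq]
    exact (hasDerivAt_G_b hA).deriv
  rw [e1fun, totalDer_two_var (fun a b => deriv (fun y => Ffun h c t a y) b) v, e0, hda, hdb]
  have hci : HasDerivAt c (deriv c (v 0)) (v 0) :=
    ((hc.differentiable (by simp)) (v 0)).hasDerivAt
  have hch : deriv (fun w => c w * iteratedDeriv 3 h w) (v 0)
      = deriv c (v 0) * iteratedDeriv 3 h (v 0) + c (v 0) * iteratedDeriv 4 h (v 0) :=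
    (hci.mul (hasDerivAt_iter h hh 3 (v 0))).deriv
  unfold v1den
  rw [hch]
  have hA' : 1 + v 1 * t * iteratedDeriv 3 h (v 0) ≠ 0 := ne_of_gt (by linarith)
  field_simp
  ring

lemma cont_update (v : ℕ → ℝ) (k i : ℕ) : Continuous fun y : ℝ => Function.update v k y i := by
  by_cases hik : i = k
  · subst hik
    simp only [Function.update_self]
    exact continuous_id
  · simp only [Function.update_of_ne hik]
    exact continuous_const

end Ham13

/-- the identity `(d/dx)E(k₁) = (t/2)(d/dx)[...]` in the jet variables,
and the Hamiltonian representation `v¹ = ∂_x(δK₁/δu |_{u=v⁰})` of the first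
semiclassical correction. -/
theorem hamiltonian_representation_of_first_correction
    (h c : ℝ → ℝ)
    (hh : ContDiff ℝ (⊤ : ℕ∞) h) (hc : ContDiff ℝ (⊤ : ℕ∞) c) :
    (∀ t : ℝ, 0 ≤ t → ∀ v : ℕ → ℝ,
      0 < 1 + t * iteratedDeriv 3 h (v 0) * v 1 →
      totalDer (EulerOp (K1den h c t)) v = t / 2 * totalDer (v1den h c t) v)
    ∧ (∀ v0 : ℝ → ℝ → ℝ,
        ContDiff ℝ (⊤ : ℕ∞) (fun z : ℝ × ℝ => v0 z.1 z.2) →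
        (∀ x t, HasDerivAt (fun τ => v0 x τ)
          (iteratedDeriv 2 h (v0 x t) * deriv (fun y => v0 y t) x) t) →
        ∀ x t : ℝ, 0 ≤ t →
        (∀ y : ℝ, 0 < 1 + t * iteratedDeriv 3 h (v0 y t) * deriv (fun z => v0 z t) y) →
        t / 2 * deriv (fun y => v1den h c t (jetsAt (fun z => v0 z t) y)) x
          = deriv (fun y => EulerOp (K1den h c t) (jetsAt (fun z => v0 z t) y)) x)  := by
  constructor
  · intro t ht v hpos
    have hterm : ∀ k, pderivJet (EulerOp (K1den h c t)) k v
        = t / 2 * pderivJet (v1den h c t) k v := by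
      intro k
      have hcont : Continuous fun y : ℝ =>
          1 + t * iteratedDeriv 3 h (Function.update v k y 0) * (Function.update v k y 1) :=
        continuous_const.add ((continuous_const.mul
          ((Ham13.cont_iter h hh 3).comp (Ham13.cont_update v k 0))).mul (Ham13.cont_update v k 1))
      have hmem : v k ∈ {y : ℝ |
          0 < 1 + t * iteratedDeriv 3 h (Function.update v k y 0) * (Function.update v k y 1)} := by
        simp only [Set.mem_setOf_eq, Function.update_eq_self]
        exact hpos
      have hev : (fun y => EulerOp (K1den h c t) (Function.update v k y))
          =ᶠ[nhds (v k)] (fun y => t / 2 * v1den h c t (Function.update v k y)) := by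
        filter_upwards [(isOpen_lt continuous_const hcont).mem_nhds hmem] with y hy
        exact Ham13.key h c hh hc t _ hy
      have h1 : pderivJet (EulerOp (K1den h c t)) k v
          = pderivJet (fun w => t / 2 * v1den h c t w) k v := hev.deriv_eq
      rw [h1]
      unfold pderivJet
      rw [deriv_const_mul_field]
    unfold totalDer
    calc ∑' k : ℕ, v (k + 1) * pderivJet (EulerOp (K1den h c t)) k v
        = ∑' k : ℕ, t / 2 * (v (k + 1) * pderivJet (v1den h c t) k v) := by
          refine tsum_congr fun k => ?_
          rw [hterm k]; ring
      _ = t / 2 * ∑' k : ℕ, v (k + 1) * pderivJet (v1den h c t) k v := tsum_mul_left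
  · intro v0 _ _ x t _ hposAll
    have hfun : (fun y => EulerOp (K1den h c t) (jetsAt (fun z => v0 z t) y))
        = (fun y => t / 2 * v1den h c t (jetsAt (fun z => v0 z t) y)) := by
      funext y
      apply Ham13.key h c hh hc
      have h0 : jetsAt (fun z => v0 z t) y 0 = v0 y t := by
        simp [jetsAt]
      have h1 : jetsAt (fun z => v0 z t) y 1 = deriv (fun z => v0 z t) y := by
        simp [jetsAt, iteratedDeriv_one]
      rw [h0, h1]
      exact hposAll y
    rw [hfun, deriv_const_mul_field]
end
end
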